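/- arXiv:1806.03297 — 7 statements merged into one kernel-verified Lean document; each statement's English description precedes it below -/
import Mathlib

section
/- Let A and B be Archimedean semiprime f-algebras with point separating order duals, and let T : A → B be an order bounded linear operator. If T vanishes on A ∩ Z(A) — that is, T(a) = 0 for every a ∈ A for which there exists a real number λ ≥ 0 with |ab| ≤ λ|b| for all b ∈ A — then T is identically zero on A. -/
section Aux

variable {A : Type*} [Ring A] [Lattice A] [Algebra ℝ A]
  [CovariantClass A A (· + ·) (· ≤ ·)]

/-- Disjoint nonnegative elements of an `f`-algebra multiply to zero. -/
theorem aux_disj_mul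
    (hf : ∀ x y z : A, 0 ≤ z → x ⊓ y = 0 → (x * z) ⊓ y = 0 ∧ (z * x) ⊓ y = 0)
    (x y : A) (hx : 0 ≤ x) (hy : 0 ≤ y) (h : x ⊓ y = 0) : x * y = 0 := by
  have h1 : (x * y) ⊓ y = 0 := (hf x y y hy h).1
  have h2 : (x * y) ⊓ (x * y) = 0 :=
    (hf y (x * y) x hx (by rw [inf_comm]; exact h1)).2
  simpa using h2

/-- Squares are nonnegative in an `f`-algebra. -/
theorem aux_sq_nonneg
    (hmul : ∀ x y : A, 0 ≤ x → 0 ≤ y → 0 ≤ x * y)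
    (hf : ∀ x y z : A, 0 ≤ z → x ⊓ y = 0 → (x * z) ⊓ y = 0 ∧ (z * x) ⊓ y = 0)
    (x : A) : 0 ≤ x * x := by
  have hpn : x⁺ * x⁻ = 0 :=
    aux_disj_mul hf _ _ (posPart_nonneg x) (negPart_nonneg x)
      (posPart_inf_negPart_eq_zero x)
  have hnp : x⁻ * x⁺ = 0 :=
    aux_disj_mul hf _ _ (negPart_nonneg x) (posPart_nonneg x)
      (by rw [inf_comm]; exact posPart_inf_negPart_eq_zero x)
  have hxx : x * x = (x⁺ - x⁻) * (x⁺ - x⁻) := by rw [posPart_sub_negPart]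
  calc (0 : A) ≤ x⁺ * x⁺ + x⁻ * x⁻ :=
        add_nonneg (hmul _ _ (posPart_nonneg x) (posPart_nonneg x))
          (hmul _ _ (negPart_nonneg x) (negPart_nonneg x))
    _ = x * x := by
        rw [hxx, sub_mul, mul_sub, mul_sub, hpn, hnp]; abel

theorem aux_abs_sub_le (u v : A) (hu : 0 ≤ u) (hv : 0 ≤ v) : |u - v| ≤ u + v := by
  have h1 : u - v ≤ u + v := by
    rw [sub_eq_add_neg]; exact add_le_add_right ((neg_nonpos.2 hv).trans hv) u
  have h2 : -(u - v) ≤ u + v := by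
    rw [neg_sub, sub_eq_add_neg, add_comm u v]
    exact add_le_add_right ((neg_nonpos.2 hu).trans hu) v
  exact abs_le'.2 ⟨h1, h2⟩

/-- `|c * b| ≤ c * |b|` for `0 ≤ c` in a lattice-ordered algebra. -/
theorem aux_abs_mul_le
    (hmul : ∀ x y : A, 0 ≤ x → 0 ≤ y → 0 ≤ x * y)
    (c b : A) (hc : 0 ≤ c) : |c * b| ≤ c * |b| := by
  have hb : c * b = c * b⁺ - c * b⁻ := by
    rw [← mul_sub, posPart_sub_negPart]
  have habs : c * |b| = c * b⁺ + c * b⁻ := by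
    rw [← posPart_add_negPart b, mul_add]
  rw [hb, habs]
  exact aux_abs_sub_le _ _ (hmul _ _ hc (posPart_nonneg b))
    (hmul _ _ hc (negPart_nonneg b))

end Aux

/-- If an order bounded linear operator `T` between Archimedean semiprime
`f`-algebras with point separating order duals vanishes on `A ∩ Z(A)`,
then `T` is identically zero. -/
theorem stmt_0
    {A B : Type*}
    [Ring A] [Lattice A] [Algebra ℝ A] [CovariantClass A A (· + ·) (· ≤ ·)]
    -- A is a Riesz space (vector lattice) over ℝ
    (hsmulA : ∀ (r : ℝ) (x : A), 0 ≤ r → 0 ≤ x → 0 ≤ r • x)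
    -- A is a lattice-ordered algebra
    (hmulA : ∀ x y : A, 0 ≤ x → 0 ≤ y → 0 ≤ x * y)
    -- the f-algebra condition
    (hfA : ∀ x y z : A, 0 ≤ z → x ⊓ y = 0 → (x * z) ⊓ y = 0 ∧ (z * x) ⊓ y = 0)
    -- A is Archimedean
    (harchA : ∀ x y : A, (∀ n : ℕ, n • x ≤ y) → x ≤ 0)
    -- the order dual of A separates the points of A
    (hsepA : ∀ x : A, x ≠ 0 → ∃ f : A →ₗ[ℝ] ℝ, Monotone f ∧ f x ≠ 0)
    -- A is semiprime
    (hsemiA : ∀ x : A, x * x = 0 → x = 0)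
    [Ring B] [Lattice B] [Algebra ℝ B] [CovariantClass B B (· + ·) (· ≤ ·)]
    -- B is a Riesz space (vector lattice) over ℝ
    (hsmulB : ∀ (r : ℝ) (x : B), 0 ≤ r → 0 ≤ x → 0 ≤ r • x)
    -- B is a lattice-ordered algebra
    (hmulB : ∀ x y : B, 0 ≤ x → 0 ≤ y → 0 ≤ x * y)
    -- the f-algebra condition
    (hfB : ∀ x y z : B, 0 ≤ z → x ⊓ y = 0 → (x * z) ⊓ y = 0 ∧ (z * x) ⊓ y = 0)
    -- B is Archimedean
    (harchB : ∀ x y : B, (∀ n : ℕ, n • x ≤ y) → x ≤ 0)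
    -- the order dual of B separates the points of B
    (hsepB : ∀ x : B, x ≠ 0 → ∃ f : B →ₗ[ℝ] ℝ, Monotone f ∧ f x ≠ 0)
    -- B is semiprime
    (hsemiB : ∀ x : B, x * x = 0 → x = 0)
    (T : A →ₗ[ℝ] B)
    -- T is order bounded
    (hTob : ∀ a : A, 0 ≤ a → ∃ b : B, ∀ x : A, |x| ≤ a → |T x| ≤ b)
    -- T vanishes on A ∩ Z(A)
    (hvan : ∀ a : A, (∃ l : ℝ, 0 ≤ l ∧ ∀ b : A, |a * b| ≤ l • |b|) → T a = 0) :
    ∀ a : A, T a = 0 := by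
  have hsmonoB : ∀ (r : ℝ) (x y : B), 0 ≤ r → x ≤ y → r • x ≤ r • y := by
    intro r x y hr hxy
    have h := hsmulB r (y - x) hr (sub_nonneg.2 hxy)
    rw [smul_sub] at h
    exact sub_nonneg.1 h
  have h1A : 0 ≤ (1 : A) := by simpa using aux_sq_nonneg hmulA hfA 1
  suffices hpos : ∀ a : A, 0 ≤ a → T a = 0 by
    intro a
    have hTd : T a = T a⁺ - T a⁻ := by rw [← map_sub, posPart_sub_negPart]
    rw [hTd, hpos _ (posPart_nonneg a), hpos _ (negPart_nonneg a), sub_zero]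
  intro a ha
  obtain ⟨bb, hbb⟩ := hTob (a * a) (hmulA a a ha ha)
  have key : ∀ n : ℕ, n • |T a| ≤ bb := by
    intro n
    rcases Nat.eq_zero_or_pos n with hn | hn
    · subst hn
      have h0 : |T (0 : A)| ≤ bb := hbb 0 (by simpa using hmulA a a ha ha)
      simpa using h0
    · set r : ℝ := (n : ℝ) with hr
      have hr0 : (0 : ℝ) ≤ r := Nat.cast_nonneg n
      have hrpos : (0 : ℝ) < r := by rw [hr]; exact_mod_cast hn
      set c : A := a ⊓ r • (1 : A) with hc
      have hc0 : 0 ≤ c := le_inf ha (hsmulA r 1 hr0 h1A)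
      have hcle : c ≤ r • (1 : A) := inf_le_right
      have hTc : T c = 0 := by
        refine hvan c ⟨r, hr0, fun b => ?_⟩
        have h1 : |c * b| ≤ c * |b| := aux_abs_mul_le hmulA c b hc0
        have h2 : c * |b| ≤ r • |b| := by
          have h3 : 0 ≤ (r • (1 : A) - c) * |b| :=
            hmulA _ _ (sub_nonneg.2 hcle) (abs_nonneg b)
          rw [sub_mul, smul_mul_assoc, one_mul] at h3
          exact sub_nonneg.1 h3
        exact h1.trans h2
      set u : A := a - r • (1 : A) with hu
      set d : A := u⁺ with hd
      have hacd : a - c = d := by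
        rw [hc, sub_inf, sub_self, hd, posPart_def, sup_comm]
      have hd0 : 0 ≤ d := posPart_nonneg u
      have hTaTd : T a = T d := by
        have hacd2 : a = c + d := by rw [← hacd]; abel
        rw [hacd2, map_add, hTc, zero_add]
      have hdu : d * u⁻ = 0 :=
        aux_disj_mul hfA _ _ hd0 (negPart_nonneg u) (posPart_inf_negPart_eq_zero u)
      have hdge : r • d ≤ d * a := by
        have h4 : 0 ≤ d * u := by
          have h5 : d * u = d * u⁺ - d * u⁻ := by rw [← mul_sub, posPart_sub_negPart]
          rw [h5, hdu, sub_zero, ← hd]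
          exact hmulA d d hd0 hd0
        have h6 : d * u = d * a - r • d := by
          rw [hu, mul_sub, mul_smul_comm, mul_one]
        rw [h6] at h4
        exact sub_nonneg.1 h4
      have hda : d * a ≤ a * a := by
        have hadc : a - d = c := by rw [← hacd, sub_sub_cancel]
        have h7 : 0 ≤ (a - d) * a := hadc ▸ hmulA c a hc0 ha
        rw [sub_mul] at h7
        exact sub_nonneg.1 h7
      have hx0 : 0 ≤ r • d := hsmulA r d hr0 hd0
      have hTx : |r • T a| ≤ bb := by
        have h8 : |T (r • d)| ≤ bb := hbb _ (by rw [abs_of_nonneg hx0]; exact hdge.trans hda)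
        rwa [map_smul, ← hTaTd] at h8
      have habs1 : ∀ (s : ℝ) (z : B), 0 ≤ s → |s • z| ≤ s • |z| := by
        intro s z hs
        refine abs_le'.2 ⟨hsmonoB s z |z| hs (le_abs_self z), ?_⟩
        rw [← smul_neg]
        exact hsmonoB s (-z) |z| hs (neg_le_abs z)
      have h9 : |T a| ≤ r⁻¹ • |r • T a| := by
        have h10 := habs1 r⁻¹ (r • T a) (by positivity)
        rwa [smul_smul, inv_mul_cancel₀ (ne_of_gt hrpos), one_smul] at h10
      have h11 : r • |T a| ≤ |r • T a| := by
        have h12 := hsmonoB r _ _ hr0 h9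
        rwa [smul_smul, mul_inv_cancel₀ (ne_of_gt hrpos), one_smul] at h12
      calc n • |T a| = r • |T a| := (Nat.cast_smul_eq_nsmul ℝ n _).symm
        _ ≤ |r • T a| := h11
        _ ≤ bb := hTx
  have hfin := harchB |T a| bb key
  exact le_antisymm ((le_abs_self (T a)).trans hfin)
    (neg_nonpos.1 ((neg_le_abs (T a)).trans hfin))
end

section
/- Let A and B be Archimedean f-algebras with multiplicative unit elements e_A and e_B respectively (and point separating order duals), and let T : A → B be an order bounded linear operator satisfying T(e_A) = e_B. If |Ta| ≤ e_B whenever a ∈ A satisfies |a| ≤ e_A, then T is a positive operator (i.e. Ta ≥ 0 for every a ≥ 0). -/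
/-- An order bounded linear operator `T` between unital Archimedean `f`-algebras
with point separating order duals such that `T 1 = 1` and `|T a| ≤ 1` whenever
`|a| ≤ 1` is positive. -/
theorem stmt_1
    {A B : Type*}
    [Ring A] [Lattice A] [Algebra ℝ A] [CovariantClass A A (· + ·) (· ≤ ·)]
    -- A is a Riesz space (vector lattice) over ℝ
    (hsmulA : ∀ (r : ℝ) (x : A), 0 ≤ r → 0 ≤ x → 0 ≤ r • x)
    -- A is a lattice-ordered algebra
    (hmulA : ∀ x y : A, 0 ≤ x → 0 ≤ y → 0 ≤ x * y)
    -- the f-algebra condition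
    (hfA : ∀ x y z : A, 0 ≤ z → x ⊓ y = 0 → (x * z) ⊓ y = 0 ∧ (z * x) ⊓ y = 0)
    -- A is Archimedean
    (harchA : ∀ x y : A, (∀ n : ℕ, n • x ≤ y) → x ≤ 0)
    -- the order dual of A separates the points of A
    (hsepA : ∀ x : A, x ≠ 0 → ∃ f : A →ₗ[ℝ] ℝ, Monotone f ∧ f x ≠ 0)
    [Ring B] [Lattice B] [Algebra ℝ B] [CovariantClass B B (· + ·) (· ≤ ·)]
    -- B is a Riesz space (vector lattice) over ℝ
    (hsmulB : ∀ (r : ℝ) (x : B), 0 ≤ r → 0 ≤ x → 0 ≤ r • x)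
    -- B is a lattice-ordered algebra
    (hmulB : ∀ x y : B, 0 ≤ x → 0 ≤ y → 0 ≤ x * y)
    -- the f-algebra condition
    (hfB : ∀ x y z : B, 0 ≤ z → x ⊓ y = 0 → (x * z) ⊓ y = 0 ∧ (z * x) ⊓ y = 0)
    -- B is Archimedean
    (harchB : ∀ x y : B, (∀ n : ℕ, n • x ≤ y) → x ≤ 0)
    -- the order dual of B separates the points of B
    (hsepB : ∀ x : B, x ≠ 0 → ∃ f : B →ₗ[ℝ] ℝ, Monotone f ∧ f x ≠ 0)
    (T : A →ₗ[ℝ] B)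
    -- T is order bounded
    (hTob : ∀ a : A, 0 ≤ a → ∃ b : B, ∀ x : A, |x| ≤ a → |T x| ≤ b)
    -- T maps the unit element of A to the unit element of B
    (hT1 : T 1 = 1)
    -- |T a| ≤ e_B whenever |a| ≤ e_A
    (hTcontr : ∀ a : A, |a| ≤ 1 → |T a| ≤ 1) :
    ∀ a : A, 0 ≤ a → 0 ≤ T a := by
  -- monotonicity of nonneg scalar action
  have hsA : ∀ (r : ℝ) (x y : A), 0 ≤ r → x ≤ y → r • x ≤ r • y := by
    intro r x y hr hxy
    have h := hsmulA r (y - x) hr (by simpa [sub_nonneg] using hxy)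
    rwa [smul_sub, sub_nonneg] at h
  have hsB : ∀ (r : ℝ) (x y : B), 0 ≤ r → x ≤ y → r • x ≤ r • y := by
    intro r x y hr hxy
    have h := hsmulB r (y - x) hr (by simpa [sub_nonneg] using hxy)
    rwa [smul_sub, sub_nonneg] at h
  -- in an f-algebra, x⁻ * x⁺ = 0 and x⁺ * x⁻ = 0
  have hcross : ∀ x : A, x⁻ * x⁺ = 0 ∧ x⁺ * x⁻ = 0 := by
    intro x
    have hdisj : x⁺ ⊓ x⁻ = 0 := posPart_inf_negPart_eq_zero x
    constructor
    · have hp2 := (hfA x⁺ x⁻ x⁻ (negPart_nonneg x) hdisj).2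
      have hp3 : x⁻ ⊓ (x⁻ * x⁺) = 0 := by rw [inf_comm]; exact hp2
      have hp4 := (hfA x⁻ (x⁻ * x⁺) x⁺ (posPart_nonneg x) hp3).1
      rw [← inf_idem (x⁻ * x⁺)]; exact hp4
    · have hp2 := (hfA x⁺ x⁻ x⁻ (negPart_nonneg x) hdisj).1
      have hp3 : x⁻ ⊓ (x⁺ * x⁻) = 0 := by rw [inf_comm]; exact hp2
      have hp4 := (hfA x⁻ (x⁺ * x⁻) x⁺ (posPart_nonneg x) hp3).2
      rw [← inf_idem (x⁺ * x⁻)]; exact hp4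
  -- squares are nonneg
  have hsq : ∀ x : A, 0 ≤ x * x := by
    intro x
    have h1 : x * x = x⁺ * x⁺ + x⁻ * x⁻ := by
      conv_lhs => rw [← posPart_sub_negPart x]
      rw [sub_mul, mul_sub, mul_sub, (hcross x).1, (hcross x).2]
      abel
    rw [h1]
    have := hmulA x⁺ x⁺ (posPart_nonneg x) (posPart_nonneg x)
    have h2 := hmulA x⁻ x⁻ (negPart_nonneg x) (negPart_nonneg x)
    calc (0:A) = 0 + 0 := by abel
      _ ≤ x⁺ * x⁺ + x⁻ * x⁻ := add_le_add this h2
  have honeA : (0:A) ≤ 1 := by simpa using hsq 1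
  -- T is nonneg on [0,1]
  have key : ∀ c : A, 0 ≤ c → c ≤ 1 → 0 ≤ T c := by
    intro c hc0 hc1
    have h2s : (2:ℝ) • (1:A) = 1 + 1 := by
      rw [show (2:ℝ) = (1:ℝ) + 1 by norm_num, add_smul, one_smul]
    have habs : |(2:ℝ) • c - 1| ≤ (1:A) := by
      rw [abs_le']
      constructor
      · have h := hsA 2 c 1 (by norm_num) hc1
        rw [h2s] at h
        calc (2:ℝ) • c - 1 ≤ (1 + 1) - 1 := sub_le_sub_right h 1
          _ = 1 := by abel
      · have h : (0:A) ≤ (2:ℝ) • c := hsmulA 2 c (by norm_num) hc0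
        calc -((2:ℝ) • c - 1) = 1 - (2:ℝ) • c := by abel
          _ ≤ 1 - 0 := sub_le_sub_left h 1
          _ = 1 := by abel
    have hbnd := hTcontr _ habs
    have hTeq : T ((2:ℝ) • c - 1) = (2:ℝ) • T c - 1 := by
      rw [map_sub, map_smul, hT1]
    rw [hTeq] at hbnd
    have h3 : -((2:ℝ) • T c - 1) ≤ 1 := (abs_le'.1 hbnd).2
    have h4 : (0:B) ≤ (2:ℝ) • T c := by
      have h5 : 1 - (2:ℝ) • T c ≤ 1 := by
        calc 1 - (2:ℝ) • T c = -((2:ℝ) • T c - 1) := by abel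
          _ ≤ 1 := h3
      have := sub_le_sub_left h5 (1:B)
      simpa using this
    have h5 := hsmulB (2⁻¹:ℝ) _ (by norm_num) h4
    rwa [smul_smul, inv_mul_cancel₀ (by norm_num : (2:ℝ) ≠ 0), one_smul] at h5
  intro a ha
  obtain ⟨b, hb⟩ := hTob (a * a) (hmulA a a ha ha)
  have hb0 : (0:B) ≤ b := by
    have h := hb 0 (by simpa using hmulA a a ha ha)
    simpa using le_trans (abs_nonneg _) h
  have harch : ∀ n : ℕ, n • (-T a) ≤ b := by
    intro n
    rcases Nat.eq_zero_or_pos n with hn | hn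
    · simpa [hn] using hb0
    have hnR : (0:ℝ) < (n:ℝ) := by exact_mod_cast hn
    set u : A := a - (n:ℝ) • 1 with hu
    set d : A := u⁺ with hd
    set m : A := a ⊓ ((n:ℝ) • 1) with hm
    have hn1 : (0:A) ≤ (n:ℝ) • 1 := hsmulA _ _ (le_of_lt hnR) honeA
    have hd0 : (0:A) ≤ d := posPart_nonneg u
    have hm0 : (0:A) ≤ m := le_inf ha hn1
    -- a = m + d
    have hsplit : a = m + d := by
      have h1 : m + (a ⊔ ((n:ℝ) • 1)) = a + (n:ℝ) • 1 := inf_add_sup a _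
      have h2 : d = (a ⊔ ((n:ℝ) • 1)) - (n:ℝ) • 1 := by
        rw [hd, hu, posPart_def, sup_sub, sub_self]
      have h3 : m + d = a := by rw [h2, ← add_sub_assoc, h1]; abel
      exact h3.symm
    -- n • d ≤ a * a
    have hud : u * d = d * d := by
      conv_lhs => rw [← posPart_sub_negPart u]
      rw [sub_mul, hd, (hcross u).1, sub_zero]
    have had : a * d = d * d + (n:ℝ) • d := by
      have h : a = u + (n:ℝ) • 1 := by rw [hu]; abel
      rw [h, add_mul, hud, smul_mul_assoc, one_mul]
    have hnd : (n:ℝ) • d ≤ a * a := by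
      have h1 : (n:ℝ) • d ≤ a * d := by
        rw [had]
        have h := hmulA d d hd0 hd0
        calc (n:ℝ) • d = 0 + (n:ℝ) • d := by abel
          _ ≤ d * d + (n:ℝ) • d := add_le_add_left h _
      have h2 : a * d ≤ a * a := by
        have h3 := hmulA a m ha hm0
        have h4 : a * a - a * d = a * m := by
          rw [← mul_sub]
          congr 1
          rw [hsplit]; abel
        have h5 : (0:A) ≤ a * a - a * d := by rw [h4]; exact h3
        exact sub_nonneg.mp h5
      exact le_trans h1 h2
    -- bound on T d
    have hnd0 : (0:A) ≤ (n:ℝ) • d := hsmulA _ _ (le_of_lt hnR) hd0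
    have habs : |(n:ℝ) • d| ≤ a * a := by rwa [abs_of_nonneg hnd0]
    have hTd := hb _ habs
    have hTd2 : -((n:ℝ) • T d) ≤ b := by
      have h := (abs_le'.1 hTd).2
      rwa [map_smul] at h
    -- T m ≥ 0
    have hTm : (0:B) ≤ T m := by
      have hc0 : (0:A) ≤ (n:ℝ)⁻¹ • m := hsmulA _ _ (by positivity) hm0
      have hc1 : (n:ℝ)⁻¹ • m ≤ 1 := by
        have h := hsA ((n:ℝ)⁻¹) m ((n:ℝ) • 1) (by positivity) inf_le_right
        rwa [smul_smul, inv_mul_cancel₀ (ne_of_gt hnR), one_smul] at h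
      have hk := key _ hc0 hc1
      have h := hsmulB (n:ℝ) _ (le_of_lt hnR) hk
      rw [← map_smul, smul_smul, mul_inv_cancel₀ (ne_of_gt hnR), one_smul] at h
      exact h
    -- combine
    have hTa : T d ≤ T a := by
      have h : T a = T m + T d := by rw [hsplit, map_add]
      rw [h]
      calc T d = 0 + T d := by abel
        _ ≤ T m + T d := add_le_add_left hTm _
    have h6 : (n:ℝ) • (-T a) ≤ -((n:ℝ) • T d) := by
      have hneg : -T a ≤ -T d := by simpa using sub_le_sub_left hTa (0:B)
      have h := hsB (n:ℝ) (-T a) (-T d) (le_of_lt hnR) hneg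
      simpa [smul_neg] using h
    have h7 : (n:ℝ) • (-T a) ≤ b := le_trans h6 hTd2
    rwa [Nat.cast_smul_eq_nsmul] at h7
  have hfin := harchB (-T a) b harch
  simpa using hfin
end

section
/- Let A be an Archimedean semiprime f-algebra with point separating order dual. A positive element a₀ ∈ A is a weak order unit if and only if inf{ |a − λa₀| : λ ∈ ℝ } = 0 holds in A for every a ∈ A. -/
section RieszAux

variable {A : Type*} [AddCommGroup A] [Lattice A] [CovariantClass A A (· + ·) (· ≤ ·)]

private lemma riesz_inf_neg_self_nonpos (y : A) : y ⊓ -y ≤ 0 := by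
  have h : -(y ⊔ -y) ≤ 0 := neg_nonpos.mpr (abs_nonneg y)
  rw [neg_sup, neg_neg] at h
  rwa [inf_comm] at h

private lemma riesz_pair_bound (X Y : A) (h : Y ≤ X) : |X| ⊓ |Y| ≤ X⁺ + Y⁻ := by
  letI : DistribLattice A := AddCommGroup.toDistribLattice A
  have hXp : X ≤ X⁺ + Y⁻ := le_add_of_le_of_nonneg (le_posPart X) (negPart_nonneg Y)
  have hYn : -Y ≤ X⁺ + Y⁻ := by
    refine le_add_of_nonneg_of_le (posPart_nonneg X) ?_
    rw [negPart_def]; exact le_sup_left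
  have h1 : X ⊓ Y ≤ X⁺ + Y⁻ := le_trans inf_le_left hXp
  have h2 : X ⊓ -Y ≤ X⁺ + Y⁻ := le_trans inf_le_left hXp
  have h3 : -X ⊓ Y ≤ X⁺ + Y⁻ := by
    have hneg : -X ≤ -Y := neg_le_neg_iff.mpr h
    have h31 : -X ⊓ Y ≤ -Y ⊓ Y := inf_le_inf_right Y hneg
    have h32 : -Y ⊓ Y ≤ 0 := by rw [inf_comm]; exact riesz_inf_neg_self_nonpos Y
    exact le_trans (le_trans h31 h32) (add_nonneg (posPart_nonneg X) (negPart_nonneg Y))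
  have h4 : -X ⊓ -Y ≤ X⁺ + Y⁻ := le_trans inf_le_right hYn
  have e : |X| = X ⊔ -X := rfl
  have e' : |Y| = Y ⊔ -Y := rfl
  rw [e, e', inf_sup_left, inf_sup_right, inf_sup_right]
  exact sup_le (sup_le h1 h3) (sup_le h2 h4)

private lemma riesz_key_L3 (x u : A) (hu : 0 ≤ u) : (x⁺ ⊓ u) + (x - u)⁻ ≤ u + x⁻ := by
  have key : (x - u)⁺ ≤ x⁺ - (x⁺ ⊓ u) := by
    rw [posPart_def]
    refine sup_le (sub_le_sub (le_posPart x) inf_le_right) ?_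
    rw [sub_nonneg]
    exact inf_le_left
  have h2 : (x - u)⁺ = x - u + (x - u)⁻ := sub_eq_iff_eq_add.mp (posPart_sub_negPart (x - u))
  have h3 : x⁺ = x + x⁻ := sub_eq_iff_eq_add.mp (posPart_sub_negPart x)
  rw [← add_le_add_iff_right (x - u)]
  calc (x⁺ ⊓ u) + (x - u)⁻ + (x - u) = (x⁺ ⊓ u) + (x - u)⁺ := by rw [h2]; abel
    _ ≤ (x⁺ ⊓ u) + (x⁺ - (x⁺ ⊓ u)) := add_le_add_right key _
    _ = x⁺ := by abel
    _ = u + x⁻ + (x - u) := by rw [h3]; abel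

private lemma riesz_step (b u P x : A) (hu : 0 ≤ u)
    (h1 : b ≤ x⁺ + (x - u)⁻) (h2 : b ≤ u + (P ⊔ (x - u)⁻)) : b ≤ u + (P ⊔ x⁻) := by
  letI : DistribLattice A := AddCommGroup.toDistribLattice A
  have hb : b ≤ (x⁺ + (x - u)⁻) ⊓ (u + (P ⊔ (x - u)⁻)) := le_inf h1 h2
  have e : u + (P ⊔ (x - u)⁻) = (u + P) ⊔ (u + (x - u)⁻) := add_sup _ _ _
  rw [e, inf_sup_left] at hb
  refine le_trans hb (sup_le ?_ ?_)
  · exact le_trans inf_le_right (add_le_add_right le_sup_left u)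
  · have e2 : (x⁺ + (x - u)⁻) ⊓ (u + (x - u)⁻) = (x⁺ ⊓ u) + (x - u)⁻ := by
      rw [add_comm x⁺ _, add_comm u _, ← add_inf, add_comm]
    rw [e2]
    exact le_trans (riesz_key_L3 x u hu) (add_le_add_right le_sup_right u)

private lemma riesz_grid_bound {A : Type*} [AddCommGroup A] [Lattice A]
    [CovariantClass A A (· + ·) (· ≤ ·)] [Module ℝ A]
    (hsmul : ∀ (r : ℝ) (x : A), 0 ≤ r → 0 ≤ x → 0 ≤ r • x)
    (a a₀ b : A) (ha₀ : 0 ≤ a₀)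
    (hb : ∀ l : ℝ, b ≤ |a - l • a₀|) (δ : ℝ) (hδ : 0 ≤ δ) (c : ℝ) :
    ∀ j : ℕ, b ≤ δ • a₀ + ((a - c • a₀)⁺ ⊔ (a - (c - j * δ) • a₀)⁻) := by
  have hu : 0 ≤ δ • a₀ := hsmul δ a₀ hδ ha₀
  intro j
  induction j with
  | zero =>
    have h0 : b ≤ |a - c • a₀| := hb c
    have e : (a - c • a₀)⁺ ⊔ (a - c • a₀)⁻ = |a - c • a₀| := by
      rw [← posPart_add_negPart (a - c • a₀)]
      have h := inf_add_sup ((a - c • a₀)⁺) ((a - c • a₀)⁻)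
      rw [posPart_inf_negPart_eq_zero, zero_add] at h
      exact h
    simp only [Nat.cast_zero, zero_mul, sub_zero]
    calc b ≤ |a - c • a₀| := h0
      _ = (a - c • a₀)⁺ ⊔ (a - c • a₀)⁻ := e.symm
      _ ≤ δ • a₀ + ((a - c • a₀)⁺ ⊔ (a - c • a₀)⁻) := le_add_of_nonneg_left hu
  | succ j ih =>
    set x := a - (c - (j + 1 : ℕ) * δ) • a₀ with hxdef
    have hxu : x - δ • a₀ = a - (c - j * δ) • a₀ := by
      rw [hxdef, sub_sub, ← add_smul]
      congr 2
      push_cast; ring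
    have h1 : b ≤ x⁺ + (x - δ • a₀)⁻ := by
      have hbx : b ≤ |x| := hb _
      have hbxu : b ≤ |x - δ • a₀| := by rw [hxu]; exact hb _
      exact le_trans (le_inf hbx hbxu)
        (riesz_pair_bound x (x - δ • a₀) (sub_le_self x hu))
    have h2 : b ≤ δ • a₀ + ((a - c • a₀)⁺ ⊔ (x - δ • a₀)⁻) := by rw [hxu]; exact ih
    exact riesz_step b (δ • a₀) ((a - c • a₀)⁺) x hu h1 h2

private lemma riesz_inf_add_subadd (u x y : A) (hu : 0 ≤ u) (hx : 0 ≤ x) (hy : 0 ≤ y) :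
    u ⊓ (x + y) ≤ (u ⊓ x) + (u ⊓ y) := by
  have e1 : (u ⊓ x) + (u ⊓ y) = ((u ⊓ x) + u) ⊓ ((u ⊓ x) + y) := add_inf _ _ _
  have e2 : (u ⊓ x) + u = (u + u) ⊓ (u + x) := by rw [add_comm, add_inf]
  have e3 : (u ⊓ x) + y = (y + u) ⊓ (y + x) := by rw [add_comm, add_inf]
  rw [e1, e2, e3]
  refine le_inf (le_inf ?_ ?_) (le_inf ?_ ?_)
  · exact le_trans inf_le_left (le_add_of_nonneg_left hu)
  · exact le_trans inf_le_left (le_add_of_nonneg_right hx)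
  · exact le_trans inf_le_left (le_add_of_nonneg_left hy)
  · exact inf_le_right.trans_eq (add_comm x y)

end RieszAux

/-- In an Archimedean semiprime `f`-algebra with point separating order dual,
a positive element `a₀` is a weak order unit if and only if
`inf {|a - λ • a₀| : λ ∈ ℝ} = 0` for every `a`. -/
theorem stmt_2
    {A : Type*}
    [Ring A] [Lattice A] [Algebra ℝ A] [CovariantClass A A (· + ·) (· ≤ ·)]
    -- A is a Riesz space (vector lattice) over ℝ
    (hsmulA : ∀ (r : ℝ) (x : A), 0 ≤ r → 0 ≤ x → 0 ≤ r • x)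
    -- A is a lattice-ordered algebra
    (hmulA : ∀ x y : A, 0 ≤ x → 0 ≤ y → 0 ≤ x * y)
    -- the f-algebra condition
    (hfA : ∀ x y z : A, 0 ≤ z → x ⊓ y = 0 → (x * z) ⊓ y = 0 ∧ (z * x) ⊓ y = 0)
    -- A is Archimedean
    (harchA : ∀ x y : A, (∀ n : ℕ, n • x ≤ y) → x ≤ 0)
    -- the order dual of A separates the points of A
    (hsepA : ∀ x : A, x ≠ 0 → ∃ f : A →ₗ[ℝ] ℝ, Monotone f ∧ f x ≠ 0)
    -- A is semiprime
    (hsemiA : ∀ x : A, x * x = 0 → x = 0)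
    (a₀ : A) (ha₀ : 0 < a₀) :
    (∀ a : A, |a| ⊓ a₀ = 0 → a = 0) ↔
      (∀ a : A, IsGLB {x : A | ∃ l : ℝ, x = |a - l • a₀|} 0) := by
  letI : DistribLattice A := AddCommGroup.toDistribLattice A
  have hsmono : ∀ (r : ℝ), 0 ≤ r → ∀ x y : A, x ≤ y → r • x ≤ r • y := by
    intro r hr x y hxy
    have h := hsmulA r (y - x) hr (sub_nonneg.mpr hxy)
    rw [smul_sub] at h
    exact sub_nonneg.mp h
  have hssup : ∀ (r : ℝ), 0 < r → ∀ x y : A, r • (x ⊔ y) = (r • x) ⊔ (r • y) := by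
    intro r hr x y
    refine le_antisymm ?_ (sup_le (hsmono r hr.le _ _ le_sup_left)
      (hsmono r hr.le _ _ le_sup_right))
    have hx : x ≤ r⁻¹ • ((r • x) ⊔ (r • y)) := by
      have h := hsmono r⁻¹ (by positivity) _ _ (le_sup_left : r • x ≤ (r • x) ⊔ (r • y))
      rwa [smul_smul, inv_mul_cancel₀ hr.ne', one_smul] at h
    have hy : y ≤ r⁻¹ • ((r • x) ⊔ (r • y)) := by
      have h := hsmono r⁻¹ (by positivity) _ _ (le_sup_right : r • y ≤ (r • x) ⊔ (r • y))
      rwa [smul_smul, inv_mul_cancel₀ hr.ne', one_smul] at h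
    have h := hsmono r hr.le _ _ (sup_le hx hy)
    rwa [smul_smul, mul_inv_cancel₀ hr.ne', one_smul] at h
  have hsinf : ∀ (r : ℝ), 0 < r → ∀ x y : A, r • (x ⊓ y) = (r • x) ⊓ (r • y) := by
    intro r hr x y
    refine le_antisymm (le_inf (hsmono r hr.le _ _ inf_le_left)
      (hsmono r hr.le _ _ inf_le_right)) ?_
    have hx : r⁻¹ • ((r • x) ⊓ (r • y)) ≤ x := by
      have h := hsmono r⁻¹ (by positivity) _ _ (inf_le_left : (r • x) ⊓ (r • y) ≤ r • x)
      rwa [smul_smul, inv_mul_cancel₀ hr.ne', one_smul] at h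
    have hy : r⁻¹ • ((r • x) ⊓ (r • y)) ≤ y := by
      have h := hsmono r⁻¹ (by positivity) _ _ (inf_le_right : (r • x) ⊓ (r • y) ≤ r • y)
      rwa [smul_smul, inv_mul_cancel₀ hr.ne', one_smul] at h
    have h := hsmono r hr.le _ _ (le_inf hx hy)
    rwa [smul_smul, mul_inv_cancel₀ hr.ne', one_smul] at h
  constructor
  · -- weak order unit → GLB property
    intro hwou a
    constructor
    · rintro x ⟨l, rfl⟩
      exact abs_nonneg _
    · intro b hb
      have hb' : ∀ l : ℝ, b ≤ |a - l • a₀| := fun l => hb ⟨l, rfl⟩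
      -- Step B : b ≤ (|a| - j•a₀)⁺ for all j
      have hstep1 : ∀ (j n : ℕ), 0 < n →
          b ≤ ((n : ℝ)⁻¹) • a₀ + (|a| - (j : ℝ) • a₀)⁺ := by
        intro j n hn
        have hn' : (0:ℝ) < (n:ℝ) := by exact_mod_cast hn
        have h := riesz_grid_bound hsmulA a a₀ b ha₀.le hb' ((n:ℝ)⁻¹) (by positivity)
          (j : ℝ) (2 * j * n)
        have hc : (j : ℝ) - ((2 * j * n : ℕ) : ℝ) * ((n:ℝ)⁻¹) = -(j : ℝ) := by
          push_cast
          field_simp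
          ring
        rw [hc] at h
        have e : (a - (j:ℝ) • a₀)⁺ ⊔ (a - (-(j:ℝ)) • a₀)⁻ = (|a| - (j:ℝ) • a₀)⁺ := by
          rw [neg_smul, sub_neg_eq_add, negPart_def, posPart_def, posPart_def]
          have hne : -(a + (j:ℝ) • a₀) = -a - (j:ℝ) • a₀ := by abel
          rw [hne]
          have e2 : |a| - (j:ℝ) • a₀ = (a - (j:ℝ) • a₀) ⊔ (-a - (j:ℝ) • a₀) := by
            have : |a| = a ⊔ -a := rfl
            rw [this, sub_eq_add_neg, sup_add, ← sub_eq_add_neg, ← sub_eq_add_neg]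
          rw [e2, sup_sup_sup_comm, sup_idem]
        rw [e] at h
        exact h
      have hC : ∀ j : ℕ, b ≤ (|a| - (j : ℝ) • a₀)⁺ := by
        intro j
        set C := (|a| - (j : ℝ) • a₀)⁺ with hCdef
        have harch_in : ∀ n : ℕ, n • (b - C) ≤ a₀ := by
          intro n
          rcases Nat.eq_zero_or_pos n with h0 | hpos
          · simp only [h0, zero_smul]
            exact ha₀.le
          · have hn' : (0:ℝ) < (n:ℝ) := by exact_mod_cast hpos
            have h := hstep1 j n hpos
            have h2 : b - C ≤ ((n:ℝ)⁻¹) • a₀ := by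
              rw [sub_le_iff_le_add, add_comm]
              rw [add_comm]
              exact h
            have h3 := hsmono (n:ℝ) hn'.le _ _ h2
            rw [smul_smul, mul_inv_cancel₀ hn'.ne', one_smul] at h3
            rwa [Nat.cast_smul_eq_nsmul] at h3
        have hle := harchA _ _ harch_in
        exact sub_nonpos.mp hle
      -- Step C : Archimedean argument gives b⁺ ⊓ a₀ = 0
      have hwk : ∀ n : ℕ, n • (b⁺ ⊓ a₀) ≤ |a| := by
        intro n
        set t := (n : ℝ) with ht
        have htn : (0:ℝ) ≤ t := Nat.cast_nonneg n
        set y := (|a| - t • a₀) ⊓ a₀ with hy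
        have hw_le_z : b⁺ ⊓ a₀ ≤ y ⊔ 0 := by
          have hbp : b⁺ ≤ (|a| - t • a₀)⁺ := by
            rw [posPart_def]
            exact sup_le (hC n) (posPart_nonneg _)
          have h1 : b⁺ ⊓ a₀ ≤ (|a| - t • a₀)⁺ ⊓ a₀ := inf_le_inf_right a₀ hbp
          have e : (|a| - t • a₀)⁺ ⊓ a₀ = y ⊔ 0 := by
            rw [posPart_def, inf_sup_right, hy]
            congr 1
            exact inf_eq_left.mpr ha₀.le
          rwa [e] at h1
        have hyz1 : (t + 1) • y ≤ |a| := by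
          have l1 : t • y ≤ t • a₀ := hsmono t htn _ _ inf_le_right
          have l2 : y ≤ |a| - t • a₀ := inf_le_left
          calc (t + 1) • y = t • y + y := by rw [add_smul, one_smul]
            _ ≤ t • a₀ + (|a| - t • a₀) := add_le_add l1 l2
            _ = |a| := by abel
        have hz : (t + 1) • (y ⊔ 0) ≤ |a| := by
          rw [hssup (t + 1) (by positivity) y 0, smul_zero]
          exact sup_le hyz1 (abs_nonneg a)
        have hmono2 : t • (y ⊔ 0) ≤ (t + 1) • (y ⊔ 0) := by
          have h0 : (0:A) ≤ y ⊔ 0 := le_sup_right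
          calc t • (y ⊔ 0) ≤ t • (y ⊔ 0) + (y ⊔ 0) := le_add_of_nonneg_right h0
            _ = (t + 1) • (y ⊔ 0) := by rw [add_smul, one_smul]
        have hfin : t • (b⁺ ⊓ a₀) ≤ |a| :=
          le_trans (hsmono t htn _ _ hw_le_z) (le_trans hmono2 hz)
        rwa [Nat.cast_smul_eq_nsmul] at hfin
      have hw0 : b⁺ ⊓ a₀ ≤ 0 := harchA _ _ hwk
      have hw : b⁺ ⊓ a₀ = 0 := le_antisymm hw0 (le_inf (posPart_nonneg b) ha₀.le)
      have hbp0 : b⁺ = 0 := hwou (b⁺) (by rwa [abs_of_nonneg (posPart_nonneg b)])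
      exact posPart_eq_zero.mp hbp0
  · -- GLB property → weak order unit
    intro hglb a h0
    have key : ∀ l : ℝ, |a| ≤ |a - l • a₀| := by
      intro l
      have hv : (0:A) ≤ |l| • a₀ := hsmulA _ _ (abs_nonneg l) ha₀.le
      have habs_smul : |l • a₀| = |l| • a₀ := by
        rcases le_or_gt 0 l with hl | hl
        · rw [abs_of_nonneg (hsmulA l a₀ hl ha₀.le), abs_of_nonneg hl]
        · have h1 : l • a₀ ≤ 0 := by
            have := hsmulA (-l) a₀ (by linarith) ha₀.le
            rw [neg_smul] at this
            exact neg_nonneg.mp this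
          rw [abs_of_nonpos h1, abs_of_neg hl, neg_smul]
      have hdisj : |a| ⊓ (|l| • a₀) = 0 := by
        obtain ⟨n, hn⟩ := exists_nat_ge |l|
        have hle1 : |l| • a₀ ≤ (n:ℝ) • a₀ := by
          have := hsmulA ((n:ℝ) - |l|) a₀ (by linarith) ha₀.le
          rw [sub_smul] at this
          exact sub_nonneg.mp this
        rcases Nat.eq_zero_or_pos n with hz | hpos
        · have : |l| = 0 := le_antisymm (by simpa [hz] using hn) (abs_nonneg l)
          rw [this, zero_smul]
          exact inf_eq_right.mpr (abs_nonneg a)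
        · have hn' : (0:ℝ) < (n:ℝ) := by exact_mod_cast hpos
          have h1n : (1:ℝ) ≤ (n:ℝ) := by exact_mod_cast hpos
          have h2 : |a| ⊓ ((n:ℝ) • a₀) ≤ (n:ℝ) • (|a| ⊓ a₀) := by
            rw [hsinf (n:ℝ) hn' |a| a₀]
            refine inf_le_inf_right _ ?_
            have h4 := hsmulA ((n:ℝ) - 1) |a| (by linarith) (abs_nonneg a)
            rw [sub_smul, one_smul] at h4
            exact sub_nonneg.mp h4
          have h3 : |a| ⊓ (|l| • a₀) ≤ 0 := by
            calc |a| ⊓ (|l| • a₀) ≤ |a| ⊓ ((n:ℝ) • a₀) := inf_le_inf_left _ hle1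
              _ ≤ (n:ℝ) • (|a| ⊓ a₀) := h2
              _ = 0 := by rw [h0, smul_zero]
          exact le_antisymm h3 (le_inf (abs_nonneg a) hv)
      have hsub : |a| ≤ |a - l • a₀| + |l| • a₀ := by
        have : a = (a - l • a₀) + l • a₀ := by abel
        calc |a| = |(a - l • a₀) + l • a₀| := by rw [← this]
          _ ≤ |a - l • a₀| + |l • a₀| := abs_add_le _ _
          _ = |a - l • a₀| + |l| • a₀ := by rw [habs_smul]
      calc |a| = |a| ⊓ (|a - l • a₀| + |l| • a₀) := (inf_eq_left.mpr hsub).symm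
        _ ≤ (|a| ⊓ |a - l • a₀|) + (|a| ⊓ (|l| • a₀)) :=
            riesz_inf_add_subadd _ _ _ (abs_nonneg a) (abs_nonneg _) hv
        _ = |a| ⊓ |a - l • a₀| := by rw [hdisj, add_zero]
        _ ≤ |a - l • a₀| := inf_le_right
    have hlow : |a| ∈ lowerBounds {x : A | ∃ l : ℝ, x = |a - l • a₀|} := by
      rintro x ⟨l, rfl⟩
      exact key l
    have hle : |a| ≤ 0 := (hglb a).2 hlow
    have habs : |a| = 0 := le_antisymm hle (abs_nonneg a)
    have h1 : a ≤ 0 := le_trans (le_abs_self a) (le_of_eq habs)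
    have h2 : -a ≤ 0 := le_trans (neg_le_abs a) (le_of_eq habs)
    exact le_antisymm h1 (neg_nonpos.mp h2)
end

section
/- Let A and B be Archimedean f-algebras with unit elements e_A and e_B respectively (and point separating order duals), and let T : A → B be an order bounded linear operator satisfying T(e_A) = e_B and |Ta| ≤ e_B whenever |a| ≤ e_A. Then the following three conditions are equivalent: (i) T is an extreme point of the convex set of Markov operators from A to B; (ii) inf{ T|a − λe_A| : λ ∈ ℝ } = 0 in B for every a ∈ A; (iii) T is a lattice homomorphism. -/
set_option linter.unusedSectionVars false
set_option maxHeartbeats 1000000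


section Stmt4Aux
variable {C : Type*} [Ring C] [Lattice C] [Algebra ℝ C]
  [CovariantClass C C (· + ·) (· ≤ ·)]

/-- scalar multiplication by a nonneg real is monotone -/
theorem stmt4_smul_mono (hsm : ∀ (r : ℝ) (x : C), 0 ≤ r → 0 ≤ x → 0 ≤ r • x)
    {r : ℝ} (hr : 0 ≤ r) {x y : C} (h : x ≤ y) : r • x ≤ r • y := by
  have := hsm r (y - x) hr (sub_nonneg.2 h)
  rw [smul_sub, sub_nonneg] at this
  exact this

theorem stmt4_le_of_smul_le (hsm : ∀ (r : ℝ) (x : C), 0 ≤ r → 0 ≤ x → 0 ≤ r • x)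
    {r : ℝ} (hr : 0 < r) {x y : C} (h : r • x ≤ r • y) : x ≤ y := by
  have := stmt4_smul_mono hsm (le_of_lt (by positivity : (0:ℝ) < r⁻¹)) h
  rwa [smul_smul, smul_smul, inv_mul_cancel₀ hr.ne', one_smul, one_smul] at this

theorem stmt4_smul_sup (hsm : ∀ (r : ℝ) (x : C), 0 ≤ r → 0 ≤ x → 0 ≤ r • x)
    {r : ℝ} (hr : 0 < r) (x y : C) : r • (x ⊔ y) = r • x ⊔ r • y := by
  apply le_antisymm
  · apply stmt4_le_of_smul_le hsm (by positivity : (0:ℝ) < r⁻¹)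
    rw [smul_smul, inv_mul_cancel₀ hr.ne', one_smul]
    refine sup_le ?_ ?_
    · calc x = r⁻¹ • (r • x) := by rw [smul_smul, inv_mul_cancel₀ hr.ne', one_smul]
        _ ≤ r⁻¹ • (r • x ⊔ r • y) := stmt4_smul_mono hsm (by positivity) le_sup_left
    · calc y = r⁻¹ • (r • y) := by rw [smul_smul, inv_mul_cancel₀ hr.ne', one_smul]
        _ ≤ r⁻¹ • (r • x ⊔ r • y) := stmt4_smul_mono hsm (by positivity) le_sup_right
  · refine sup_le (stmt4_smul_mono hsm hr.le le_sup_left)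
      (stmt4_smul_mono hsm hr.le le_sup_right)

theorem stmt4_smul_posPart (hsm : ∀ (r : ℝ) (x : C), 0 ≤ r → 0 ≤ x → 0 ≤ r • x)
    {r : ℝ} (hr : 0 < r) (x : C) : (r • x)⁺ = r • x⁺ := by
  rw [posPart_def, posPart_def, stmt4_smul_sup hsm hr, smul_zero]

theorem stmt4_smul_inf (hsm : ∀ (r : ℝ) (x : C), 0 ≤ r → 0 ≤ x → 0 ≤ r • x)
    {r : ℝ} (hr : 0 < r) (x y : C) : r • (x ⊓ y) = r • x ⊓ r • y := by
  have h := stmt4_smul_sup hsm hr (-x) (-y)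
  rw [← neg_inf, smul_neg, smul_neg, smul_neg, ← neg_inf] at h
  exact neg_injective h

/-- `a - a ⊓ b = (a - b)⁺` -/
theorem stmt4_sub_inf (a b : C) : a - a ⊓ b = (a - b)⁺ := by
  rw [posPart_def, sub_inf, sub_self, sup_comm]

theorem stmt4_posPart_sup (x y : C) : (x ⊔ y)⁺ = x⁺ ⊔ y⁺ := by
  rw [posPart_def, posPart_def, posPart_def, sup_sup_sup_comm, sup_idem]

theorem stmt4_posPart_shift {e : C} (he : 0 ≤ e) (x : C) : (x⁺ - e)⁺ = (x - e)⁺ := by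
  rw [posPart_def x, sup_sub, stmt4_posPart_sup, zero_sub, posPart_of_nonpos (neg_nonpos.2 he),
    sup_eq_left.2 (posPart_nonneg _)]

/-- `x⁺ = (x - e)⁺ + x⁺ ⊓ e` for `0 ≤ e` -/
theorem stmt4_posPart_decomp {e : C} (he : 0 ≤ e) (x : C) : x⁺ = (x - e)⁺ + x⁺ ⊓ e := by
  have h := stmt4_sub_inf (x⁺) e
  rw [stmt4_posPart_shift he] at h
  rw [← h]; abel

/-- subadditivity of inf against nonneg elements -/
theorem stmt4_inf_add_le {r p q : C} (hr : 0 ≤ r) (hp : 0 ≤ p) (hq : 0 ≤ q) :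
    r ⊓ (p + q) ≤ r ⊓ p + r ⊓ q := by
  have key : r ⊓ (p + q) - r ⊓ p ≤ r ⊓ q := by
    rw [sub_inf]
    refine sup_le ?_ ?_
    · calc r ⊓ (p + q) - r ≤ r - r := by
            exact sub_le_sub_right inf_le_left r
        _ = 0 := sub_self r
        _ ≤ r ⊓ q := le_inf hr hq
    · refine le_inf ?_ ?_
      · calc r ⊓ (p + q) - p ≤ r - 0 := sub_le_sub inf_le_left hp
          _ = r := sub_zero r
      · calc r ⊓ (p + q) - p ≤ (p + q) - p := sub_le_sub_right inf_le_right p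
          _ = q := by abel
  have := add_le_add_left key (r ⊓ p)
  rw [sub_add_cancel, add_comm (r ⊓ q)] at this; exact this

theorem stmt4_abs_sub' (a b : C) : |a - b| ≤ |a| + |b| := by
  calc |a - b| = |a + -b| := by rw [sub_eq_add_neg]
    _ ≤ |a| + |(-b)| := abs_add_le _ _
    _ = |a| + |b| := by rw [abs_neg]
end Stmt4Aux
section Stmt4Aux2
variable {C : Type*} [Ring C] [Lattice C] [Algebra ℝ C]
  [CovariantClass C C (· + ·) (· ≤ ·)]

theorem stmt4_posPart_le_abs (a : C) : a⁺ ≤ |a| :=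
  posPart_mono (le_abs_self a) |>.trans_eq (posPart_of_nonneg (abs_nonneg a))

theorem stmt4_negPart_le_abs (a : C) : a⁻ ≤ |a| := by
  rw [(by rfl : a⁻ = (-a)⁺), ← abs_neg a]; exact stmt4_posPart_le_abs (-a)

/-- if `u ⊓ v = 0` then `(u - v)⁺ = u` -/
theorem stmt4_disj_posPart {u v : C} (h : u ⊓ v = 0) : (u - v)⁺ = u := by
  have h2 : u ⊔ v = u + v := by
    have := inf_add_sup u v; rw [h, zero_add] at this; exact this
  rw [posPart_def, (by abel : (0:C) = v - v), ← sup_sub, h2]; abel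

theorem stmt4_disj_abs {u v : C} (h : u ⊓ v = 0) : |u - v| = u + v := by
  have h1 : (u - v)⁺ = u := stmt4_disj_posPart h
  have h2 : (u - v)⁻ = v := by
    rw [(by rfl : (u-v)⁻ = (-(u-v))⁺), neg_sub]
    exact stmt4_disj_posPart (by rw [inf_comm, h])
  rw [← posPart_add_negPart (u - v), h1, h2]

/-- multiplication by nonnegative elements is monotone -/
theorem stmt4_mul_le_mul_left (hm : ∀ x y : C, 0 ≤ x → 0 ≤ y → 0 ≤ x * y)
    {z : C} (hz : 0 ≤ z) {x y : C} (h : x ≤ y) : z * x ≤ z * y := by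
  have := hm z (y - x) hz (sub_nonneg.2 h)
  rw [mul_sub, sub_nonneg] at this; exact this

theorem stmt4_mul_le_mul_right (hm : ∀ x y : C, 0 ≤ x → 0 ≤ y → 0 ≤ x * y)
    {z : C} (hz : 0 ≤ z) {x y : C} (h : x ≤ y) : x * z ≤ y * z := by
  have := hm (y - x) z (sub_nonneg.2 h) hz
  rw [sub_mul, sub_nonneg] at this; exact this

/-- disjoint positive elements multiply to zero -/
theorem stmt4_disj_mul_zero (hf : ∀ x y z : C, 0 ≤ z → x ⊓ y = 0 → (x * z) ⊓ y = 0 ∧ (z * x) ⊓ y = 0)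
    {u w : C} (h : u ⊓ w = 0) : u * w = 0 := by
  have hu : 0 ≤ u := by rw [← h]; exact inf_le_left
  have hw : 0 ≤ w := by rw [← h]; exact inf_le_right
  have h1 : (u * w) ⊓ w = 0 := (hf u w w hw h).1
  have h2 := (hf w (u * w) u hu (by rw [inf_comm]; exact h1)).2
  rwa [inf_idem] at h2

theorem stmt4_posPart_mul_negPart (hf : ∀ x y z : C, 0 ≤ z → x ⊓ y = 0 → (x * z) ⊓ y = 0 ∧ (z * x) ⊓ y = 0)
    (a : C) : a⁺ * a⁻ = 0 := stmt4_disj_mul_zero hf (posPart_inf_negPart_eq_zero a)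

theorem stmt4_negPart_mul_posPart (hf : ∀ x y z : C, 0 ≤ z → x ⊓ y = 0 → (x * z) ⊓ y = 0 ∧ (z * x) ⊓ y = 0)
    (a : C) : a⁻ * a⁺ = 0 := by
  refine stmt4_disj_mul_zero hf ?_
  rw [inf_comm]; exact posPart_inf_negPart_eq_zero a

/-- squares are nonnegative in an f-algebra -/
theorem stmt4_sq_nonneg (hm : ∀ x y : C, 0 ≤ x → 0 ≤ y → 0 ≤ x * y)
    (hf : ∀ x y z : C, 0 ≤ z → x ⊓ y = 0 → (x * z) ⊓ y = 0 ∧ (z * x) ⊓ y = 0)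
    (a : C) : 0 ≤ a * a := by
  have key : a * a = a⁺ * a⁺ + a⁻ * a⁻ := by
    conv_lhs => rw [← posPart_sub_negPart a]
    rw [sub_mul, mul_sub, mul_sub, stmt4_posPart_mul_negPart hf, stmt4_negPart_mul_posPart hf]
    abel
  rw [key]
  exact add_nonneg (hm _ _ (posPart_nonneg a) (posPart_nonneg a))
    (hm _ _ (negPart_nonneg a) (negPart_nonneg a))

theorem stmt4_one_nonneg (hm : ∀ x y : C, 0 ≤ x → 0 ≤ y → 0 ≤ x * y)
    (hf : ∀ x y z : C, 0 ≤ z → x ⊓ y = 0 → (x * z) ⊓ y = 0 ∧ (z * x) ⊓ y = 0) :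
    (0 : C) ≤ 1 := by
  have := stmt4_sq_nonneg hm hf (1 : C); rwa [mul_one] at this

/-- `1` is a weak order unit -/
theorem stmt4_weak_unit (hf : ∀ x y z : C, 0 ≤ z → x ⊓ y = 0 → (x * z) ⊓ y = 0 ∧ (z * x) ⊓ y = 0)
    {x : C} (h : x ⊓ 1 = 0) : x = 0 := by
  have hx : 0 ≤ x := by rw [← h]; exact inf_le_left
  have := (hf 1 x x hx (by rw [inf_comm]; exact h)).2
  rwa [mul_one, inf_idem] at this

/-- archimedean: if `c ≤ t•1` for all `t > 0` then `c ≤ 0` -/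
theorem stmt4_arch_le_zero (harch : ∀ x y : C, (∀ n : ℕ, n • x ≤ y) → x ≤ 0)
    (hsm : ∀ (r : ℝ) (x : C), 0 ≤ r → 0 ≤ x → 0 ≤ r • x)
    (h1 : (0:C) ≤ 1) {c : C} (h : ∀ t : ℝ, 0 < t → c ≤ t • (1:C)) : c ≤ 0 := by
  refine harch c 1 fun n => ?_
  rcases Nat.eq_zero_or_pos n with hn | hn
  · subst hn; rw [zero_smul]; exact h1
  · have hpos : (0:ℝ) < (n:ℝ)⁻¹ := by positivity
    have h2 := stmt4_smul_mono hsm (le_of_lt (by positivity : (0:ℝ) < (n:ℝ))) (h _ hpos)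
    rw [smul_smul, mul_inv_cancel₀ (by positivity : ((n:ℝ)) ≠ 0), one_smul,
      Nat.cast_smul_eq_nsmul] at h2
    exact h2

/-- nonneg elements with zero square are zero -/
theorem stmt4_semiprime (hm : ∀ x y : C, 0 ≤ x → 0 ≤ y → 0 ≤ x * y)
    (hf : ∀ x y z : C, 0 ≤ z → x ⊓ y = 0 → (x * z) ⊓ y = 0 ∧ (z * x) ⊓ y = 0)
    (harch : ∀ x y : C, (∀ n : ℕ, n • x ≤ y) → x ≤ 0)
    (hsm : ∀ (r : ℝ) (x : C), 0 ≤ r → 0 ≤ x → 0 ≤ r • x)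
    {s : C} (hs : 0 ≤ s) (hsq : s * s = 0) : s = 0 := by
  set c := s ⊓ 1 with hc
  have h1 : (0:C) ≤ 1 := stmt4_one_nonneg hm hf
  have hc0 : 0 ≤ c := le_inf hs h1
  have hcc : c * c = 0 := by
    refine le_antisymm ?_ (hm _ _ hc0 hc0)
    calc c * c ≤ c * s := stmt4_mul_le_mul_left hm hc0 inf_le_left
      _ ≤ s * s := stmt4_mul_le_mul_right hm hs inf_le_left
      _ = 0 := hsq
  have hct : ∀ t : ℝ, 0 < t → c ≤ t • (1:C) := by
    intro t ht
    set d := (c - t • (1:C))⁺ with hd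
    have hdc : d ≤ c := by
      rw [hd, posPart_def]
      refine sup_le (by
        have : (0:C) ≤ t • (1:C) := hsm t 1 ht.le h1
        calc c - t • (1:C) ≤ c - 0 := sub_le_sub_left this c
          _ = c := sub_zero c) hc0
    have hmul1 : t • d ≤ c * d := by
      have hy : (c - t • (1:C)) * d = d * d := by
        conv_lhs => rw [← posPart_sub_negPart (c - t • (1:C))]
        rw [sub_mul, ← hd, stmt4_negPart_mul_posPart hf]
        rw [sub_zero]
      have : t • d ≤ (c - t • 1) * d + t • d := by
        rw [hy]
        have := hm d d (posPart_nonneg _) (posPart_nonneg _)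
        exact le_add_of_nonneg_left this
      rwa [sub_mul, smul_mul_assoc, one_mul, sub_add_cancel] at this
    have hmul2 : c * d ≤ 0 := by
      calc c * d ≤ c * c := stmt4_mul_le_mul_left hm hc0 hdc
        _ = 0 := hcc
    have hd0 : d ≤ 0 := by
      have := stmt4_le_of_smul_le hsm ht (x := d) (y := 0) (by rw [smul_zero]; exact hmul1.trans hmul2)
      exact this
    have hfin : c - t • (1:C) ≤ 0 := posPart_eq_zero.mp (le_antisymm hd0 (posPart_nonneg _))
    exact sub_nonpos.mp hfin
  have : c ≤ 0 := stmt4_arch_le_zero harch hsm h1 hct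
  have hc' : c = 0 := le_antisymm this hc0
  exact stmt4_weak_unit hf hc'

theorem stmt4_mul_zero_disj (hm : ∀ x y : C, 0 ≤ x → 0 ≤ y → 0 ≤ x * y)
    (hf : ∀ x y z : C, 0 ≤ z → x ⊓ y = 0 → (x * z) ⊓ y = 0 ∧ (z * x) ⊓ y = 0)
    (harch : ∀ x y : C, (∀ n : ℕ, n • x ≤ y) → x ≤ 0)
    (hsm : ∀ (r : ℝ) (x : C), 0 ≤ r → 0 ≤ x → 0 ≤ r • x)
    {p q : C} (hp : 0 ≤ p) (hq : 0 ≤ q) (hpq : p * q = 0) : p ⊓ q = 0 := by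
  have hs : 0 ≤ p ⊓ q := le_inf hp hq
  refine stmt4_semiprime hm hf harch hsm hs ?_
  refine le_antisymm ?_ (hm _ _ hs hs)
  calc (p ⊓ q) * (p ⊓ q) ≤ p * (p ⊓ q) := stmt4_mul_le_mul_right hm hs inf_le_left
    _ ≤ p * q := stmt4_mul_le_mul_left hm hp inf_le_right
    _ = 0 := hpq
end Stmt4Aux2
section Stmt4Aux3
variable {C : Type*} [Ring C] [Lattice C] [Algebra ℝ C]
  [CovariantClass C C (· + ·) (· ≤ ·)]

theorem stmt4_abs_smul_one (hsm : ∀ (r : ℝ) (x : C), 0 ≤ r → 0 ≤ x → 0 ≤ r • x)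
    (h1 : (0:C) ≤ 1) (l : ℝ) : |l • (1:C)| = |l| • (1:C) := by
  rcases le_total 0 l with h | h
  · rw [abs_of_nonneg (hsm l 1 h h1), abs_of_nonneg h]
  · have h' : l • (1:C) ≤ 0 := by
      have := hsm (-l) 1 (by linarith) h1
      rw [neg_smul, neg_nonneg] at this; exact this
    rw [abs_of_nonpos h', abs_of_nonpos h, neg_smul]

theorem stmt4_step_core (hsm : ∀ (r : ℝ) (x : C), 0 ≤ r → 0 ≤ x → 0 ≤ r • x)
    (h1 : (0:C) ≤ 1) {t : ℝ} (ht : 0 < t) {c x P : C} (hP : 0 ≤ P)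
    (hX : c ≤ t • (1:C) + P + x⁺)
    (hY : c ≤ |x - t • (1:C)|) :
    c ≤ t • (1:C) + P + (x - t • (1:C))⁺ := by
  have he : (0:C) ≤ t • (1:C) := hsm t 1 ht.le h1
  have key1 : x⁺ = (x - t • (1:C))⁺ + x⁺ ⊓ (t • (1:C)) := stmt4_posPart_decomp he x
  have hXb : c ≤ (t • (1:C) + P + (x - t • (1:C))⁺) + x⁺ ⊓ (t • (1:C)) := by
    refine hX.trans (le_of_eq ?_)
    conv_lhs => rw [key1]
    abel
  have hYb : c ≤ (t • (1:C) + P + (x - t • (1:C))⁺) + x⁻ := by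
    refine hY.trans ?_
    rw [← posPart_add_negPart (x - t • (1:C))]
    have h2 : (x - t • (1:C))⁻ ≤ t • (1:C) + x⁻ := by
      rw [(by rfl : (x - t • (1:C))⁻ = (-(x - t • (1:C)))⁺), neg_sub]
      calc (t • (1:C) - x)⁺ ≤ (t • (1:C) + x⁻)⁺ := by
            refine posPart_mono ?_
            calc t • (1:C) - x = t • (1:C) + (-x) := by abel
              _ ≤ t • (1:C) + x⁻ := add_le_add_right (neg_le_negPart x) _
        _ = t • (1:C) + x⁻ := posPart_of_nonneg (add_nonneg he (negPart_nonneg x))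
    calc (x - t • (1:C))⁺ + (x - t • (1:C))⁻
        ≤ (x - t • (1:C))⁺ + (t • (1:C) + x⁻) := add_le_add_right h2 _
      _ = (t • (1:C) + 0 + (x - t • (1:C))⁺) + x⁻ := by abel
      _ ≤ (t • (1:C) + P + (x - t • (1:C))⁺) + x⁻ := by
          refine add_le_add_left (add_le_add_left (add_le_add_right hP _) _) _
  set W := t • (1:C) + P + (x - t • (1:C))⁺ with hW
  calc c ≤ (W + x⁺ ⊓ (t • (1:C))) ⊓ (W + x⁻) := le_inf hXb hYb
    _ = W + (x⁺ ⊓ (t • (1:C))) ⊓ x⁻ := (add_inf _ _ W).symm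
    _ ≤ W + x⁺ ⊓ x⁻ :=
        add_le_add_right (le_inf (inf_le_left.trans inf_le_left) inf_le_right) _
    _ = W := by rw [posPart_inf_negPart_eq_zero, add_zero]

/-- The inductive step for the grid argument. -/
theorem stmt4_step (hsm : ∀ (r : ℝ) (x : C), 0 ≤ r → 0 ≤ x → 0 ≤ r • x)
    (h1 : (0:C) ≤ 1) {t : ℝ} (ht : 0 < t) {c b P : C} (hP : 0 ≤ P) {m : ℝ}
    (hX : c ≤ t • (1:C) + P + (b - m • (1:C))⁺)
    (hY : c ≤ |b - (m + t) • (1:C)|) :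
    c ≤ t • (1:C) + P + (b - (m + t) • (1:C))⁺ := by
  have hxt : b - (m + t) • (1:C) = (b - m • (1:C)) - t • (1:C) := by
    rw [add_smul]; abel
  rw [hxt] at hY ⊢
  exact stmt4_step_core hsm h1 ht hP hX hY
end Stmt4Aux3
section Stmt4Aux4
variable {C : Type*} [Ring C] [Lattice C] [Algebra ℝ C]
  [CovariantClass C C (· + ·) (· ≤ ·)]

/-- `(b - e)⁺ + (-b - e)⁺ = (|b| - e)⁺` for `0 ≤ e`. -/
theorem stmt4_posPart_abs_split {e : C} (he : 0 ≤ e) (b : C) :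
    (b - e)⁺ + (-b - e)⁺ = (|b| - e)⁺ := by
  have hd : (b - e)⁺ ⊓ (-b - e)⁺ = 0 := by
    refine le_antisymm ?_ (le_inf (posPart_nonneg _) (posPart_nonneg _))
    have h1 : (b - e)⁺ ≤ b⁺ := posPart_mono (by simpa using he)
    have h2 : (-b - e)⁺ ≤ b⁻ := posPart_mono (by simpa using he)
    calc (b - e)⁺ ⊓ (-b - e)⁺ ≤ b⁺ ⊓ b⁻ := inf_le_inf h1 h2
      _ = 0 := posPart_inf_negPart_eq_zero b
  have hsum : (b - e)⁺ + (-b - e)⁺ = (b - e)⁺ ⊔ (-b - e)⁺ := by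
    have := inf_add_sup ((b - e)⁺) ((-b - e)⁺)
    rw [hd, zero_add] at this; exact this.symm
  rw [hsum, ← stmt4_posPart_sup, ← sup_sub, ← abs]

/-- The grid lemma: if `c ≤ |b - l•1|` for all `|l| ≤ k*t` then
`c ≤ t•1 + (b - (k*t)•1)⁺ + (-b - (k*t)•1)⁺`. -/
theorem stmt4_grid (hsm : ∀ (r : ℝ) (x : C), 0 ≤ r → 0 ≤ x → 0 ≤ r • x)
    (h1 : (0:C) ≤ 1) {t : ℝ} (ht : 0 < t) {c b : C} (k : ℕ)
    (hc : ∀ l : ℝ, |l| ≤ k * t → c ≤ |b - l • (1:C)|) :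
    c ≤ t • (1:C) + (-b - (k * t) • (1:C))⁺ + (b - (k * t) • (1:C))⁺ := by
  have he : (0:C) ≤ t • (1:C) := hsm t 1 ht.le h1
  have hbase : c ≤ |b - (0:ℝ) • (1:C)| := by
    refine hc 0 ?_
    rw [abs_zero]; positivity
  -- phase 1 : climb up in the second summand
  have phase1 : ∀ j : ℕ, j ≤ k →
      c ≤ t • (1:C) + (-b - (0:ℝ) • (1:C))⁺ + (b - ((j:ℝ) * t) • (1:C))⁺ := by
    intro j
    induction j with
    | zero =>
      intro _
      rw [zero_smul, sub_zero] at hbase ⊢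
      refine hbase.trans ?_
      rw [← posPart_add_negPart b]
      have : b⁺ + b⁻ = (0:C) + b⁻ + b⁺ := by abel
      rw [this, Nat.cast_zero, zero_mul, zero_smul, sub_zero]
      refine add_le_add_left (add_le_add_left he _) _
    | succ j ih =>
      intro hjk
      have hle : ((j:ℝ) + 1) * t = (j:ℝ) * t + t := by ring
      have hcast : ((j+1:ℕ):ℝ) = (j:ℝ) + 1 := by push_cast; ring
      rw [hcast, hle]
      refine stmt4_step hsm h1 ht (posPart_nonneg _) (ih (le_of_lt (Nat.lt_of_succ_le hjk))) ?_
      refine hc ((j:ℝ) * t + t) ?_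
      rw [abs_of_nonneg (by positivity)]
      have : ((j:ℝ) + 1) ≤ (k:ℝ) := by exact_mod_cast hjk
      nlinarith
  -- phase 2 : climb up in the first summand
  have phase2 : ∀ j : ℕ, j ≤ k →
      c ≤ t • (1:C) + (b - ((k:ℝ) * t) • (1:C))⁺ + (-b - ((j:ℝ) * t) • (1:C))⁺ := by
    intro j
    induction j with
    | zero =>
      intro _
      rw [Nat.cast_zero, zero_mul]
      refine (phase1 k le_rfl).trans (le_of_eq ?_); abel
    | succ j ih =>
      intro hjk
      have hcast : ((j+1:ℕ):ℝ) = (j:ℝ) + 1 := by push_cast; ring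
      have hle : ((j:ℝ) + 1) * t = (j:ℝ) * t + t := by ring
      rw [hcast, hle]
      refine stmt4_step hsm h1 ht (posPart_nonneg _) (ih (le_of_lt (Nat.lt_of_succ_le hjk))) ?_
      have : b - (-((j:ℝ) * t + t)) • (1:C) = -(-b - ((j:ℝ)*t + t) • (1:C)) := by
        rw [neg_smul]; abel
      have h' := hc (-((j:ℝ) * t + t)) (by
        rw [abs_neg, abs_of_nonneg (by positivity)]
        have : ((j:ℝ) + 1) ≤ (k:ℝ) := by exact_mod_cast hjk
        nlinarith)
      rw [this, abs_neg] at h'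
      exact h'
  have := phase2 k le_rfl
  refine this.trans (le_of_eq ?_); abel

/-- the tail vanishing lemma in a single f-algebra (used for direction (iii) → (ii)) -/
theorem stmt4_tail_single (hsm : ∀ (r : ℝ) (x : C), 0 ≤ r → 0 ≤ x → 0 ≤ r • x)
    (hm : ∀ x y : C, 0 ≤ x → 0 ≤ y → 0 ≤ x * y)
    (hf : ∀ x y z : C, 0 ≤ z → x ⊓ y = 0 → (x * z) ⊓ y = 0 ∧ (z * x) ⊓ y = 0)
    (harch : ∀ x y : C, (∀ n : ℕ, n • x ≤ y) → x ≤ 0)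
    {t : ℝ} (ht : 0 < t) {u w : C} (hu : 0 ≤ u)
    (hw : ∀ k : ℕ, 1 ≤ k → w ≤ (u - ((k:ℝ) * t) • (1:C))⁺) : w ≤ 0 := by
  have h1 : (0:C) ≤ 1 := stmt4_one_nonneg hm hf
  have he : (0:C) ≤ t • (1:C) := hsm t 1 ht.le h1
  set e := t • (1:C) with hee
  set z := w⁺ ⊓ e with hz
  have hz0 : 0 ≤ z := le_inf (posPart_nonneg w) he
  -- key: ∀ n, n⬝z ≤ u⁺ - (u - (n*t)•1)⁺
  have key : ∀ n : ℕ, (n:ℝ) • z ≤ u⁺ - (u - ((n:ℝ) * t) • (1:C))⁺ := by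
    intro n
    induction n with
    | zero => rw [Nat.cast_zero, zero_smul, zero_mul, zero_smul, sub_zero, sub_self]
    | succ n ih =>
      have hzle : z ≤ (u - ((n:ℝ) * t) • (1:C))⁺ - (u - (((n:ℝ)+1) * t) • (1:C))⁺ := by
        have hsplit : (u - (((n:ℝ)+1) * t) • (1:C)) = (u - ((n:ℝ) * t) • (1:C)) - e := by
          rw [hee]; rw [(by ring : ((n:ℝ)+1) * t = (n:ℝ) * t + t), add_smul]; abel
        have hdec := stmt4_posPart_decomp he (u - ((n:ℝ) * t) • (1:C))
        -- z ≤ (u - ((n+1)t))⁺ ⊓ e ≤ (x)⁺ ⊓ e = x⁺ - (x - e)⁺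
        have hz1 : z ≤ (u - (((n:ℝ)+1) * t) • (1:C))⁺ ⊓ e := by
          refine le_inf ?_ inf_le_right
          have := hw (n+1) (Nat.le_add_left 1 n)
          have hcast : ((n+1:ℕ):ℝ) = (n:ℝ) + 1 := by push_cast; ring
          rw [hcast] at this
          calc z ≤ w⁺ := inf_le_left
            _ ≤ ((u - (((n:ℝ)+1) * t) • (1:C))⁺)⁺ := posPart_mono this
            _ = (u - (((n:ℝ)+1) * t) • (1:C))⁺ := posPart_of_nonneg (posPart_nonneg _)
        have hz2 : (u - (((n:ℝ)+1) * t) • (1:C))⁺ ⊓ e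
            ≤ (u - ((n:ℝ) * t) • (1:C))⁺ ⊓ e := by
          refine inf_le_inf_right e (posPart_mono ?_)
          rw [hsplit]
          calc (u - ((n:ℝ)*t) • (1:C)) - e ≤ (u - ((n:ℝ)*t) • (1:C)) - 0 :=
                sub_le_sub_left he _
            _ = u - ((n:ℝ)*t) • (1:C) := sub_zero _
        have hz3 : (u - ((n:ℝ) * t) • (1:C))⁺ ⊓ e
            = (u - ((n:ℝ) * t) • (1:C))⁺ - (u - (((n:ℝ)+1) * t) • (1:C))⁺ := by
          rw [hsplit]
          exact eq_sub_of_add_eq (by rw [add_comm]; exact hdec.symm)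
        exact (hz1.trans hz2).trans_eq hz3
      have hcast : ((n+1:ℕ):ℝ) = (n:ℝ) + 1 := by push_cast; ring
      rw [hcast, add_smul, one_smul]
      calc (n:ℝ) • z + z
          ≤ (u⁺ - (u - ((n:ℝ) * t) • (1:C))⁺) + ((u - ((n:ℝ) * t) • (1:C))⁺ - (u - (((n:ℝ)+1) * t) • (1:C))⁺) := add_le_add ih hzle
        _ = u⁺ - (u - (((n:ℝ)+1) * t) • (1:C))⁺ := by abel
  have harchz : z ≤ 0 := by
    refine harch z u fun n => ?_
    rw [← Nat.cast_smul_eq_nsmul ℝ]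
    calc (n:ℝ) • z ≤ u⁺ - (u - ((n:ℝ) * t) • (1:C))⁺ := key n
      _ ≤ u⁺ - 0 := sub_le_sub_left (posPart_nonneg _) _
      _ = u := by rw [sub_zero, posPart_of_nonneg hu]
  have hz00 : z = 0 := le_antisymm harchz hz0
  -- rescale and use the weak unit property
  have hscaled : ((t⁻¹) • w⁺) ⊓ (1:C) = 0 := by
    have : t⁻¹ • z = 0 := by rw [hz00, smul_zero]
    rw [hz, hee, stmt4_smul_inf hsm (by positivity), smul_smul,
      inv_mul_cancel₀ ht.ne', one_smul] at this
    exact this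
  have : (t⁻¹) • w⁺ = 0 := stmt4_weak_unit hf hscaled
  have hwp : w⁺ = 0 := by
    have h2 := congrArg (fun y => t • y) this
    simp only [smul_smul, mul_inv_cancel₀ ht.ne', one_smul, smul_zero] at h2
    exact h2
  calc w ≤ w⁺ := le_posPart w
    _ = 0 := hwp
end Stmt4Aux4
section Stmt4Aux5
variable {C : Type*} [Ring C] [Lattice C] [Algebra ℝ C]
  [CovariantClass C C (· + ·) (· ≤ ·)]

/-- if `x⁻ ⊓ y = 0` and `0 ≤ y` then `|x + y| = |x| + y` -/
theorem stmt4_abs_add_disj {x y : C} (hy : 0 ≤ y) (hd : x⁻ ⊓ y = 0) :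
    |x + y| = |x| + y := by
  have hu : 0 ≤ x⁺ + y := add_nonneg (posPart_nonneg x) hy
  have hdisj : (x⁺ + y) ⊓ x⁻ = 0 := by
    refine le_antisymm ?_ (le_inf hu (negPart_nonneg x))
    calc (x⁺ + y) ⊓ x⁻ = x⁻ ⊓ (x⁺ + y) := inf_comm _ _
      _ ≤ x⁻ ⊓ x⁺ + x⁻ ⊓ y :=
          stmt4_inf_add_le (negPart_nonneg x) (posPart_nonneg x) hy
      _ = 0 := by rw [hd, inf_comm, posPart_inf_negPart_eq_zero, zero_add]
  have hxy : x + y = (x⁺ + y) - x⁻ := by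
    conv_lhs => rw [← posPart_sub_negPart x]
    abel
  rw [hxy, stmt4_disj_abs hdisj, ← posPart_add_negPart x]
  abel

/-- upper truncation identity : for `l ≤ M`,
`|a - l•1| = |a ⊓ M•1 - l•1| + (a - M•1)⁺` -/
theorem stmt4_trunc_up (hsm : ∀ (r : ℝ) (x : C), 0 ≤ r → 0 ≤ x → 0 ≤ r • x)
    (h1 : (0:C) ≤ 1) {l M : ℝ} (hlM : l ≤ M) (a : C) :
    |a - l • (1:C)| = |a ⊓ (M • (1:C)) - l • (1:C)| + (a - M • (1:C))⁺ := by
  set x := a ⊓ (M • (1:C)) - l • (1:C) with hx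
  set y := (a - M • (1:C))⁺ with hy
  have hsum : x + y = a - l • (1:C) := by
    have := stmt4_sub_inf a (M • (1:C))
    rw [hx, hy, ← this]; abel
  have hyn : 0 ≤ y := posPart_nonneg _
  have hxneg : x⁻ = (a - l • (1:C))⁻ := by
    rw [(by rfl : x⁻ = (-x)⁺), (by rfl : (a - l • (1:C))⁻ = (-(a - l • (1:C)))⁺), hx]
    rw [neg_sub, sub_inf, stmt4_posPart_sup, neg_sub]
    have hM1 : l • (1:C) - M • (1:C) ≤ 0 := by
      rw [← neg_nonneg, neg_sub, ← sub_smul]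
      exact hsm (M - l) 1 (by linarith) h1
    rw [posPart_of_nonpos hM1, sup_eq_left.2 (posPart_nonneg _)]
  have hd : x⁻ ⊓ y = 0 := by
    refine le_antisymm ?_ (le_inf (negPart_nonneg x) hyn)
    have hyle : y ≤ (a - l • (1:C))⁺ := by
      rw [hy]
      refine posPart_mono (sub_le_sub_left ?_ a)
      rw [← sub_nonneg, ← sub_smul]
      exact hsm (M - l) 1 (by linarith) h1
    calc x⁻ ⊓ y ≤ (a - l • (1:C))⁻ ⊓ (a - l • (1:C))⁺ := by
          rw [hxneg]; exact inf_le_inf_left _ hyle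
      _ = 0 := by rw [inf_comm, posPart_inf_negPart_eq_zero]
  rw [← hsum, stmt4_abs_add_disj hyn hd]

/-- full truncation identity : for `|l| ≤ M`, with `aM = (a ⊓ M•1) ⊔ (-M)•1`,
`|a - l•1| = |aM - l•1| + ((a - M•1)⁺ + (-a - M•1)⁺)` -/
theorem stmt4_trunc (hsm : ∀ (r : ℝ) (x : C), 0 ≤ r → 0 ≤ x → 0 ≤ r • x)
    (h1 : (0:C) ≤ 1) {l M : ℝ} (hlM : |l| ≤ M) (a : C) :
    |a - l • (1:C)| = |(a ⊓ (M • (1:C))) ⊔ ((-M) • (1:C)) - l • (1:C)|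
      + ((a - M • (1:C))⁺ + (-a - M • (1:C))⁺) := by
  have hl1 : l ≤ M := (le_abs_self l).trans hlM
  have hl2 : -M ≤ l := by have := neg_le_abs l; linarith
  have hM0 : 0 ≤ M := (abs_nonneg l).trans hlM
  set a' := a ⊓ (M • (1:C)) with ha'
  have step1 : |a - l • (1:C)| = |a' - l • (1:C)| + (a - M • (1:C))⁺ :=
    stmt4_trunc_up hsm h1 hl1 a
  -- apply trunc_up to -a' with parameter -l
  have step2 : |(-a') - (-l) • (1:C)| =
      |(-a') ⊓ (M • (1:C)) - (-l) • (1:C)| + ((-a') - M • (1:C))⁺ :=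
    stmt4_trunc_up hsm h1 (by linarith) (-a')
  have e1 : |(-a') - (-l) • (1:C)| = |a' - l • (1:C)| := by
    rw [neg_smul, (by abel : (-a') - -(l • (1:C)) = -(a' - l • (1:C))), abs_neg]
  have e2 : (-a') ⊓ (M • (1:C)) - (-l) • (1:C) = -((a' ⊔ ((-M) • (1:C))) - l • (1:C)) := by
    have h' : (-a') ⊓ (M • (1:C)) = -(a' ⊔ ((-M) • (1:C))) := by
      rw [neg_sup, neg_smul, neg_neg]
    rw [h']; simp only [neg_smul]; abel
  have e3 : ((-a') - M • (1:C))⁺ = (-a - M • (1:C))⁺ := by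
    rw [ha', neg_inf, sup_sub, stmt4_posPart_sup]
    have : -(M • (1:C)) - M • (1:C) ≤ 0 := by
      have h2 : (0:C) ≤ (M + M) • (1:C) := hsm (M + M) 1 (by linarith) h1
      rw [← neg_nonneg, neg_sub, sub_neg_eq_add, ← add_smul] at *
      exact h2
    rw [posPart_of_nonpos this, sup_eq_left.2 (posPart_nonneg _)]
  have e4 : |a' - l • (1:C)| = |a' ⊔ (-M) • (1:C) - l • (1:C)| + (-a - M • (1:C))⁺ := by
    rw [← e1, step2, e2, abs_neg, e3]
  rw [step1, e4]; abel

/-- bounds on the truncation -/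
theorem stmt4_trunc_bounds (hsm : ∀ (r : ℝ) (x : C), 0 ≤ r → 0 ≤ x → 0 ≤ r • x)
    (h1 : (0:C) ≤ 1) {M : ℝ} (hM : 0 ≤ M) (a : C) :
    -(M • (1:C)) ≤ (a ⊓ (M • (1:C))) ⊔ ((-M) • (1:C)) ∧
      (a ⊓ (M • (1:C))) ⊔ ((-M) • (1:C)) ≤ M • (1:C) := by
  constructor
  · rw [← neg_smul]; exact le_sup_right
  · refine sup_le inf_le_right ?_
    rw [← sub_nonneg, ← sub_smul]
    exact hsm (M - -M) 1 (by linarith) h1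
end Stmt4Aux5
section Stmt4Ops
variable {A B : Type*}
  [Ring A] [Lattice A] [Algebra ℝ A] [CovariantClass A A (· + ·) (· ≤ ·)]
  [Ring B] [Lattice B] [Algebra ℝ B] [CovariantClass B B (· + ·) (· ≤ ·)]

theorem stmt4_mono (T : A →ₗ[ℝ] B) (hpos : ∀ a : A, 0 ≤ a → 0 ≤ T a)
    {x y : A} (h : x ≤ y) : T x ≤ T y := by
  have := hpos (y - x) (sub_nonneg.2 h)
  rw [map_sub, sub_nonneg] at this; exact this

theorem stmt4_abs_T_le (T : A →ₗ[ℝ] B) (hpos : ∀ a : A, 0 ≤ a → 0 ≤ T a)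
    (x : A) : |T x| ≤ T |x| := by
  rw [abs_le']
  constructor
  · exact stmt4_mono T hpos (le_abs_self x)
  · rw [← map_neg]; exact stmt4_mono T hpos (neg_le_abs x)

/-- Phelps' perturbation: an extreme Markov operator is multiplicative against
elements between 0 and 1. -/
theorem stmt4_mult (T : A →ₗ[ℝ] B)
    (hext : T ∈ Set.extremePoints ℝ
      {S : A →ₗ[ℝ] B | (∀ a : A, 0 ≤ a → 0 ≤ S a) ∧ S 1 = 1})
    (hmulA : ∀ x y : A, 0 ≤ x → 0 ≤ y → 0 ≤ x * y)
    (hmulB : ∀ x y : B, 0 ≤ x → 0 ≤ y → 0 ≤ x * y)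
    {h : A} (h0 : 0 ≤ h) (h1 : h ≤ 1) (x : A) : T (h * x) = T h * T x := by
  obtain ⟨⟨hpos, hT1⟩, hex⟩ := hext
  set R : A →ₗ[ℝ] B :=
    T.comp (LinearMap.mulLeft ℝ h) - (LinearMap.mulLeft ℝ (T h)).comp T with hR
  have hRa : ∀ y : A, R y = T (h * y) - T h * T y := fun y => rfl
  have hR1 : R 1 = 0 := by
    rw [hRa, mul_one, hT1, mul_one, sub_self]
  have hTh0 : 0 ≤ T h := hpos h h0
  have hTh1 : T h ≤ 1 := by
    have := stmt4_mono T hpos h1; rwa [hT1] at this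
  have hS1mem : T + R ∈ {S : A →ₗ[ℝ] B | (∀ a : A, 0 ≤ a → 0 ≤ S a) ∧ S 1 = 1} := by
    constructor
    · intro a ha
      have e1 : 0 ≤ T (h * a) := hpos _ (hmulA h a h0 ha)
      have e2 : T h * T a ≤ T a := by
        have := hmulB (1 - T h) (T a) (sub_nonneg.2 hTh1) (hpos a ha)
        rw [sub_mul, one_mul, sub_nonneg] at this; exact this
      have : (0:B) ≤ T a + (T (h * a) - T h * T a) := by
        have h2 : T h * T a - T a ≤ 0 := sub_nonpos.2 e2
        calc (0:B) ≤ T (h * a) := e1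
          _ = T a + (T (h * a) - T h * T a) + (T h * T a - T a) := by abel
          _ ≤ T a + (T (h * a) - T h * T a) + 0 := add_le_add_right h2 _
          _ = T a + (T (h * a) - T h * T a) := add_zero _
      simpa [hRa] using this
    · simp [hR1, hT1]
  have hS2mem : T - R ∈ {S : A →ₗ[ℝ] B | (∀ a : A, 0 ≤ a → 0 ≤ S a) ∧ S 1 = 1} := by
    constructor
    · intro a ha
      have e1 : 0 ≤ T ((1 - h) * a) := hpos _ (hmulA _ a (sub_nonneg.2 h1) ha)
      have e2 : 0 ≤ T h * T a := hmulB _ _ hTh0 (hpos a ha)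
      have : (0:B) ≤ T a - (T (h * a) - T h * T a) := by
        have h3 : T ((1 - h) * a) = T a - T (h * a) := by
          rw [sub_mul, one_mul, map_sub]
        calc (0:B) ≤ (T a - T (h * a)) + T h * T a := by
              rw [← h3]; exact add_nonneg e1 e2
          _ = T a - (T (h * a) - T h * T a) := by abel
      simpa [hRa] using this
    · simp [hR1, hT1]
  have hseg : T ∈ openSegment ℝ (T + R) (T - R) := by
    refine ⟨1/2, 1/2, by norm_num, by norm_num, by norm_num, ?_⟩
    have hsum : (T + R) + (T - R) = T + T := by abel
    rw [← smul_add, hsum, smul_add, ← add_smul,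
      (by norm_num : (1/2 + 1/2 : ℝ) = 1), one_smul]
  have := hex hS1mem hS2mem hseg
  have hR0 : R = 0 := by
    have h2 := this
    have : T + R = T + 0 := by rw [add_zero]; exact h2
    exact add_left_cancel this
  have := congrArg (fun S => S x) hR0
  simp only [hRa] at this
  simp only [LinearMap.zero_apply] at this
  rw [sub_eq_zero] at this
  exact this

end Stmt4Ops
section Stmt4Ops2
variable {A B : Type*}
  [Ring A] [Lattice A] [Algebra ℝ A] [CovariantClass A A (· + ·) (· ≤ ·)]
  [Ring B] [Lattice B] [Algebra ℝ B] [CovariantClass B B (· + ·) (· ≤ ·)]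

/-- multiplicativity implies that `T` preserves absolute values of bounded elements -/
theorem stmt4_blh (T : A →ₗ[ℝ] B) (hpos : ∀ a : A, 0 ≤ a → 0 ≤ T a)
    (hsmulA : ∀ (r : ℝ) (x : A), 0 ≤ r → 0 ≤ x → 0 ≤ r • x)
    (hfA : ∀ x y z : A, 0 ≤ z → x ⊓ y = 0 → (x * z) ⊓ y = 0 ∧ (z * x) ⊓ y = 0)
    (hsmulB : ∀ (r : ℝ) (x : B), 0 ≤ r → 0 ≤ x → 0 ≤ r • x)
    (hmulB : ∀ x y : B, 0 ≤ x → 0 ≤ y → 0 ≤ x * y)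
    (hfB : ∀ x y z : B, 0 ≤ z → x ⊓ y = 0 → (x * z) ⊓ y = 0 ∧ (z * x) ⊓ y = 0)
    (harchB : ∀ x y : B, (∀ n : ℕ, n • x ≤ y) → x ≤ 0)
    (hmult : ∀ h x : A, 0 ≤ h → h ≤ 1 → T (h * x) = T h * T x)
    {w : A} {K : ℝ} (hK : 0 < K) (hw : |w| ≤ K • (1 : A)) : T |w| = |T w| := by
  set h : A := K⁻¹ • w⁺ with hh
  have h0 : 0 ≤ h := hsmulA _ _ (by positivity) (posPart_nonneg w)
  have h1 : h ≤ 1 := by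
    have hb : w⁺ ≤ K • (1:A) := (stmt4_posPart_le_abs w).trans hw
    rw [hh]
    calc K⁻¹ • w⁺ ≤ K⁻¹ • (K • (1:A)) := stmt4_smul_mono hsmulA (by positivity) hb
      _ = 1 := by rw [smul_smul, inv_mul_cancel₀ hK.ne', one_smul]
  have hprod : h * w⁻ = 0 := by
    rw [hh, smul_mul_assoc, stmt4_posPart_mul_negPart hfA, smul_zero]
  have hTprod : T w⁺ * T w⁻ = 0 := by
    have h2 := hmult h (w⁻) h0 h1
    rw [hprod, map_zero] at h2
    rw [hh, map_smul, smul_mul_assoc] at h2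
    have h3 := congrArg (fun y => K • y) h2.symm
    simpa [smul_smul, mul_inv_cancel₀ hK.ne'] using h3
  have hdisj : T w⁺ ⊓ T w⁻ = 0 :=
    stmt4_mul_zero_disj hmulB hfB harchB hsmulB
      (hpos _ (posPart_nonneg w)) (hpos _ (negPart_nonneg w)) hTprod
  have hTw : T w = T w⁺ - T w⁻ := by
    conv_lhs => rw [← posPart_sub_negPart w]
    rw [map_sub]
  rw [hTw, stmt4_disj_abs hdisj, ← map_add, posPart_add_negPart]

/-- the multiplicativity-based tail lemma -/
theorem stmt4_tail_mult (T : A →ₗ[ℝ] B) (hpos : ∀ a : A, 0 ≤ a → 0 ≤ T a)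
    (hsmulA : ∀ (r : ℝ) (x : A), 0 ≤ r → 0 ≤ x → 0 ≤ r • x)
    (hmulA : ∀ x y : A, 0 ≤ x → 0 ≤ y → 0 ≤ x * y)
    (hfA : ∀ x y z : A, 0 ≤ z → x ⊓ y = 0 → (x * z) ⊓ y = 0 ∧ (z * x) ⊓ y = 0)
    (hsmulB : ∀ (r : ℝ) (x : B), 0 ≤ r → 0 ≤ x → 0 ≤ r • x)
    (hmulB : ∀ x y : B, 0 ≤ x → 0 ≤ y → 0 ≤ x * y)
    (harchB : ∀ x y : B, (∀ n : ℕ, n • x ≤ y) → x ≤ 0)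
    (hmult : ∀ h x : A, 0 ≤ h → h ≤ 1 → T (h * x) = T h * T x)
    {v : A} (hv : 0 ≤ v) {z : B}
    (hz : ∀ k : ℕ, 1 ≤ k → z ≤ T ((v - (k:ℝ) • (1:A))⁺)) : z ≤ 0 := by
  have h1A : (0:A) ≤ 1 := stmt4_one_nonneg hmulA hfA
  set hj : ℕ → A := fun j => (1:A) ⊓ (v - (j:ℝ) • (1:A))⁺ with hhj
  have hj0 : ∀ j, 0 ≤ hj j := fun j => le_inf h1A (posPart_nonneg _)
  have hj1 : ∀ j, hj j ≤ 1 := fun j => inf_le_left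
  have hsml : ∀ (i k : ℕ), i ≤ k → (i:ℝ) • (1:A) ≤ (k:ℝ) • (1:A) := by
    intro i k hik
    rw [← sub_nonneg, ← sub_smul]
    have hc : (0:ℝ) ≤ (k:ℝ) - (i:ℝ) := by
      have := (Nat.cast_le (α := ℝ)).2 hik; linarith
    exact hsmulA _ _ hc h1A
  have hcast : ∀ m : ℕ, ((m+1:ℕ):ℝ) = (m:ℝ) + 1 := fun m => by push_cast; ring
  have hjanti : ∀ i k : ℕ, i ≤ k → hj k ≤ hj i := by
    intro i k hik
    exact inf_le_inf_left 1 (posPart_mono (sub_le_sub_left (hsml i k hik) v))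
  have hρmono : ∀ i k : ℕ, i ≤ k →
      T ((v - (k:ℝ) • (1:A))⁺) ≤ T ((v - (i:ℝ) • (1:A))⁺) :=
    fun i k hik => stmt4_mono T hpos (posPart_mono (sub_le_sub_left (hsml i k hik) v))
  -- fact a : ρ (m+1) = g m * ρ (m+1)
  have fact_a : ∀ m : ℕ, T ((v - ((m+1:ℕ):ℝ) • (1:A))⁺)
      = T (hj m) * T ((v - ((m+1:ℕ):ℝ) • (1:A))⁺) := by
    intro m
    set d := (v - ((m+1:ℕ):ℝ) • (1:A))⁺ with hd
    have hd1 : (1 : A) - hj m ≤ (((m:ℝ)+1) • (1:A) - v)⁺ := by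
      have e1 : (1:A) - hj m = ((1:A) - (v - (m:ℝ) • (1:A))⁺)⁺ := by
        rw [hhj]; exact stmt4_sub_inf 1 _
      rw [e1]
      refine posPart_mono ?_
      have := le_posPart (v - (m:ℝ) • (1:A))
      calc (1:A) - (v - (m:ℝ) • (1:A))⁺ ≤ (1:A) - (v - (m:ℝ) • (1:A)) :=
            sub_le_sub_left this 1
        _ = ((m:ℝ)+1) • (1:A) - v := by rw [add_smul, one_smul]; abel
    have hd2 : (((m:ℝ)+1) • (1:A) - v)⁺ ⊓ d = 0 := by
      have e2 : (((m:ℝ)+1) • (1:A) - v)⁺ = (v - ((m+1:ℕ):ℝ) • (1:A))⁻ := by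
        rw [(by rfl : (v - ((m+1:ℕ):ℝ) • (1:A))⁻ = (-(v - ((m+1:ℕ):ℝ) • (1:A)))⁺),
          neg_sub, hcast]
      rw [e2, hd, inf_comm, posPart_inf_negPart_eq_zero]
    have hd3 : ((1:A) - hj m) ⊓ d = 0 := by
      refine le_antisymm ?_ (le_inf (sub_nonneg.2 (hj1 m)) (posPart_nonneg _))
      calc ((1:A) - hj m) ⊓ d ≤ (((m:ℝ)+1) • (1:A) - v)⁺ ⊓ d := inf_le_inf_right d hd1
        _ = 0 := hd2
    have hd4 : ((1:A) - hj m) * d = 0 := stmt4_disj_mul_zero hfA hd3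
    have hd5 : d = hj m * d := by
      rw [sub_mul, one_mul] at hd4
      exact sub_eq_zero.mp hd4
    conv_lhs => rw [hd5]
    exact hmult (hj m) d (hj0 m) (hj1 m)
  -- fact b : (n:ℝ) • hj n ≤ v
  have hkey : ∀ m : ℕ, hj (m+1) = (v - ((m+1:ℕ):ℝ) • (1:A))⁺ - (v - ((m+2:ℕ):ℝ) • (1:A))⁺ := by
    intro m
    have hdec := stmt4_posPart_decomp h1A (v - ((m+1:ℕ):ℝ) • (1:A))
    have e3 : v - ((m+1:ℕ):ℝ) • (1:A) - 1 = v - ((m+2:ℕ):ℝ) • (1:A) := by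
      have : ((m+2:ℕ):ℝ) = ((m+1:ℕ):ℝ) + 1 := by push_cast; ring
      rw [this, add_smul, one_smul]; abel
    rw [e3] at hdec
    have e4 : (v - ((m+1:ℕ):ℝ) • (1:A))⁺ ⊓ 1
        = (v - ((m+1:ℕ):ℝ) • (1:A))⁺ - (v - ((m+2:ℕ):ℝ) • (1:A))⁺ :=
      eq_sub_of_add_eq (by rw [add_comm]; exact hdec.symm)
    rw [hhj]; simp only []
    rw [inf_comm]
    exact e4
  have claim : ∀ n m : ℕ, n ≤ m → (n:ℝ) • hj m
      ≤ (v - ((1:ℕ):ℝ) • (1:A))⁺ - (v - ((n+1:ℕ):ℝ) • (1:A))⁺ := by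
    intro n
    induction n with
    | zero =>
      intro m _
      rw [Nat.cast_zero, zero_smul, (by norm_num : (0+1:ℕ) = 1), sub_self]
    | succ n ih =>
      intro m hnm
      have hn_le_m : n ≤ m := le_of_lt (Nat.lt_of_succ_le hnm)
      have hstep : hj m ≤ (v - ((n+1:ℕ):ℝ) • (1:A))⁺ - (v - ((n+2:ℕ):ℝ) • (1:A))⁺ := by
        rw [← hkey n]
        exact hjanti (n+1) m hnm
      have e5 : ((n+1:ℕ):ℝ) • hj m = (n:ℝ) • hj m + hj m := by
        rw [hcast n, add_smul, one_smul]
      rw [e5]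
      calc (n:ℝ) • hj m + hj m
          ≤ ((v - ((1:ℕ):ℝ) • (1:A))⁺ - (v - ((n+1:ℕ):ℝ) • (1:A))⁺)
            + ((v - ((n+1:ℕ):ℝ) • (1:A))⁺ - (v - ((n+2:ℕ):ℝ) • (1:A))⁺) :=
            add_le_add (ih m hn_le_m) hstep
        _ = (v - ((1:ℕ):ℝ) • (1:A))⁺ - (v - ((n+1+1:ℕ):ℝ) • (1:A))⁺ := by
            have : (n+2:ℕ) = (n+1+1:ℕ) := by ring
            rw [this]; abel
  have fact_b : ∀ n : ℕ, (n:ℝ) • hj n ≤ v := by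
    intro n
    refine (claim n n le_rfl).trans ?_
    calc (v - ((1:ℕ):ℝ) • (1:A))⁺ - (v - ((n+1:ℕ):ℝ) • (1:A))⁺
        ≤ (v - ((1:ℕ):ℝ) • (1:A))⁺ - 0 := sub_le_sub_left (posPart_nonneg _) _
      _ = (v - ((1:ℕ):ℝ) • (1:A))⁺ := sub_zero _
      _ ≤ v⁺ := posPart_mono (by
          have h6 : (0:A) ≤ ((1:ℕ):ℝ) • (1:A) := hsmulA _ _ (by norm_num) h1A
          calc v - ((1:ℕ):ℝ) • (1:A) ≤ v - 0 := sub_le_sub_left h6 v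
            _ = v := sub_zero v)
      _ = v := posPart_of_nonneg hv
  -- combine
  have final : ∀ n : ℕ, n • z ≤ T v * T ((v - ((1:ℕ):ℝ) • (1:A))⁺) := by
    intro n
    have hρ1 : 0 ≤ T ((v - ((1:ℕ):ℝ) • (1:A))⁺) := hpos _ (posPart_nonneg _)
    rcases Nat.eq_zero_or_pos n with hn | hn
    · subst hn
      rw [zero_smul]
      exact hmulB _ _ (hpos v hv) hρ1
    · have hze : z ≤ T (hj n) * T ((v - ((1:ℕ):ℝ) • (1:A))⁺) := by
        have h5 := hz (n+1) (Nat.le_add_left 1 n)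
        rw [fact_a n] at h5
        refine h5.trans ?_
        refine stmt4_mul_le_mul_left hmulB (hpos _ (hj0 n)) ?_
        have := hρmono 1 (n+1) (by omega)
        simpa using this
      have h6 : (n:ℝ) • z ≤ ((n:ℝ) • T (hj n)) * T ((v - ((1:ℕ):ℝ) • (1:A))⁺) := by
        rw [smul_mul_assoc]
        exact stmt4_smul_mono hsmulB (by positivity) hze
      have h7 : ((n:ℝ) • T (hj n)) * T ((v - ((1:ℕ):ℝ) • (1:A))⁺)
          ≤ T v * T ((v - ((1:ℕ):ℝ) • (1:A))⁺) := by
        refine stmt4_mul_le_mul_right hmulB hρ1 ?_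
        rw [← map_smul]
        exact stmt4_mono T hpos (fact_b n)
      rw [← Nat.cast_smul_eq_nsmul ℝ]
      exact h6.trans h7
  exact harchB z _ final
end Stmt4Ops2
section Stmt4Dirs
variable {A B : Type*}
  [Ring A] [Lattice A] [Algebra ℝ A] [CovariantClass A A (· + ·) (· ≤ ·)]
  [Ring B] [Lattice B] [Algebra ℝ B] [CovariantClass B B (· + ·) (· ≤ ·)]

/-- direction (ii) → (i) -/
theorem stmt4_dir_ii_i (T : A →ₗ[ℝ] B)
    (hsmulB : ∀ (r : ℝ) (x : B), 0 ≤ r → 0 ≤ x → 0 ≤ r • x)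
    (hT1 : T 1 = 1)
    (hii : ∀ a : A, IsGLB {x : B | ∃ l : ℝ, x = T |a - l • (1 : A)|} 0) :
    T ∈ Set.extremePoints ℝ {S : A →ₗ[ℝ] B | (∀ a : A, 0 ≤ a → 0 ≤ S a) ∧ S 1 = 1} := by
  have hTpos : ∀ a : A, 0 ≤ a → 0 ≤ T a := by
    intro a ha
    have h0 : T |a| ∈ {x : B | ∃ l : ℝ, x = T |a - l • (1 : A)|} :=
      ⟨0, by rw [zero_smul, sub_zero]⟩
    have := (hii a).1 h0
    rwa [abs_of_nonneg ha] at this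
  refine ⟨⟨hTpos, hT1⟩, ?_⟩
  rintro S₁ ⟨hS₁pos, hS₁1⟩ S₂ ⟨hS₂pos, hS₂1⟩ hseg
  obtain ⟨α, β, hα, hβ, hαβ, heq⟩ := hseg
  set m := min α β with hm
  have hm0 : 0 < m := lt_min hα hβ
  have hDzero : ∀ a : A, S₁ a = S₂ a := by
    intro a
    set D := S₁ a - S₂ a with hD
    have hlow : m • |D| ∈ lowerBounds {x : B | ∃ l : ℝ, x = T |a - l • (1 : A)|} := by
      rintro x ⟨l, rfl⟩
      set y := a - l • (1:A) with hy
      have hS₁y : S₁ y = S₁ a - l • (1:B) := by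
        rw [hy, map_sub, map_smul, hS₁1]
      have hS₂y : S₂ y = S₂ a - l • (1:B) := by
        rw [hy, map_sub, map_smul, hS₂1]
      have hDy : D = S₁ y - S₂ y := by rw [hS₁y, hS₂y, hD]; abel
      have habs : |D| ≤ S₁ |y| + S₂ |y| := by
        rw [hDy]
        calc |S₁ y - S₂ y| ≤ |S₁ y| + |S₂ y| := stmt4_abs_sub' _ _
          _ ≤ S₁ |y| + S₂ |y| :=
            add_le_add (stmt4_abs_T_le S₁ hS₁pos y) (stmt4_abs_T_le S₂ hS₂pos y)
      have hTy : T |y| = α • S₁ |y| + β • S₂ |y| := by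
        rw [← heq]; rfl
      calc m • |D| ≤ m • (S₁ |y| + S₂ |y|) := stmt4_smul_mono hsmulB hm0.le habs
        _ = m • S₁ |y| + m • S₂ |y| := smul_add m _ _
        _ ≤ α • S₁ |y| + β • S₂ |y| := by
            refine add_le_add ?_ ?_
            · have := hsmulB (α - m) (S₁ |y|) (by simp [hm]) (hS₁pos _ (abs_nonneg y))
              rw [sub_smul, sub_nonneg] at this; exact this
            · have := hsmulB (β - m) (S₂ |y|) (by simp [hm]) (hS₂pos _ (abs_nonneg y))
              rw [sub_smul, sub_nonneg] at this; exact this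
        _ = T |y| := hTy.symm
    have hle := (hii a).2 hlow
    have habs0 : |D| ≤ 0 := by
      refine stmt4_le_of_smul_le hsmulB hm0 ?_
      rwa [smul_zero]
    have : D = 0 := by
      refine le_antisymm ((le_abs_self D).trans habs0) ?_
      have := (neg_le_abs D).trans habs0
      rw [← neg_nonneg] at *
      simpa using this
    exact sub_eq_zero.mp this
  have hS12 : S₁ = S₂ := LinearMap.ext hDzero
  have hS₁T : S₁ = T := by
    rw [← heq, ← hS12, ← add_smul, hαβ, one_smul]
  exact hS₁T

/-- direction (ii) → (iii) -/
theorem stmt4_dir_ii_iii (T : A →ₗ[ℝ] B)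
    (hsmulA : ∀ (r : ℝ) (x : A), 0 ≤ r → 0 ≤ x → 0 ≤ r • x)
    (hmulA : ∀ x y : A, 0 ≤ x → 0 ≤ y → 0 ≤ x * y)
    (hfA : ∀ x y z : A, 0 ≤ z → x ⊓ y = 0 → (x * z) ⊓ y = 0 ∧ (z * x) ⊓ y = 0)
    (hsmulB : ∀ (r : ℝ) (x : B), 0 ≤ r → 0 ≤ x → 0 ≤ r • x)
    (hmulB : ∀ x y : B, 0 ≤ x → 0 ≤ y → 0 ≤ x * y)
    (hfB : ∀ x y z : B, 0 ≤ z → x ⊓ y = 0 → (x * z) ⊓ y = 0 ∧ (z * x) ⊓ y = 0)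
    (hT1 : T 1 = 1)
    (hii : ∀ a : A, IsGLB {x : B | ∃ l : ℝ, x = T |a - l • (1 : A)|} 0) :
    ∀ a : A, T |a| = |T a| := by
  have h1A : (0:A) ≤ 1 := stmt4_one_nonneg hmulA hfA
  have h1B : (0:B) ≤ 1 := stmt4_one_nonneg hmulB hfB
  have hTpos : ∀ a : A, 0 ≤ a → 0 ≤ T a := by
    intro a ha
    have := (hii a).1 ⟨0, by rw [zero_smul, sub_zero]⟩
    rwa [abs_of_nonneg ha] at this
  intro a
  refine le_antisymm ?_ (stmt4_abs_T_le T hTpos a)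
  have hlow : (2⁻¹ : ℝ) • (T |a| - |T a|) ∈
      lowerBounds {x : B | ∃ l : ℝ, x = T |a - l • (1 : A)|} := by
    rintro x ⟨l, rfl⟩
    have i1 : T |a| ≤ T |a - l • (1:A)| + |l| • (1:B) := by
      have ha1 : |a| ≤ |a - l • (1:A)| + |l| • (1:A) := by
        calc |a| = |(a - l • (1:A)) + l • (1:A)| := by rw [sub_add_cancel]
          _ ≤ |a - l • (1:A)| + |l • (1:A)| := abs_add_le _ _
          _ = |a - l • (1:A)| + |l| • (1:A) := by
              rw [stmt4_abs_smul_one hsmulA h1A l]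
      have := stmt4_mono T hTpos ha1
      rwa [map_add, map_smul, hT1] at this
    have i2 : |l| • (1:B) ≤ T |a - l • (1:A)| + |T a| := by
      calc |l| • (1:B) = |l • (1:B)| := (stmt4_abs_smul_one hsmulB h1B l).symm
        _ = |T a - (T a - l • (1:B))| := by rw [sub_sub_cancel]
        _ ≤ |T a| + |T a - l • (1:B)| := stmt4_abs_sub' _ _
        _ ≤ |T a| + T |a - l • (1:A)| := by
            refine add_le_add_right ?_ _
            have := stmt4_abs_T_le T hTpos (a - l • (1:A))
            rwa [map_sub, map_smul, hT1] at this
        _ = T |a - l • (1:A)| + |T a| := by abel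
    have i3 : T |a| - |T a| ≤ (2:ℝ) • T |a - l • (1:A)| := by
      have h4 : T |a| ≤ T |a - l • (1:A)| + (T |a - l • (1:A)| + |T a|) :=
        i1.trans (add_le_add_right i2 _)
      have h5 : T |a - l • (1:A)| + (T |a - l • (1:A)| + |T a|)
          = (2:ℝ) • T |a - l • (1:A)| + |T a| := by
        rw [two_smul]; abel
      rw [h5] at h4
      exact sub_le_iff_le_add.mpr h4
    calc (2⁻¹:ℝ) • (T |a| - |T a|) ≤ (2⁻¹:ℝ) • ((2:ℝ) • T |a - l • (1:A)|) :=
          stmt4_smul_mono hsmulB (by norm_num) i3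
      _ = T |a - l • (1:A)| := by rw [smul_smul]; norm_num
  have hle := (hii a).2 hlow
  have hfin : T |a| - |T a| ≤ 0 := by
    have := stmt4_smul_mono hsmulB (by norm_num : (0:ℝ) ≤ 2) hle
    rwa [smul_smul, (by norm_num : (2:ℝ) * 2⁻¹ = 1), one_smul, smul_zero] at this
  exact sub_nonpos.mp hfin

end Stmt4Dirs
section Stmt4Dirs2
variable {A B : Type*}
  [Ring A] [Lattice A] [Algebra ℝ A] [CovariantClass A A (· + ·) (· ≤ ·)]
  [Ring B] [Lattice B] [Algebra ℝ B] [CovariantClass B B (· + ·) (· ≤ ·)]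

/-- direction (iii) → (ii) -/
theorem stmt4_dir_iii_ii (T : A →ₗ[ℝ] B)
    (hsmulB : ∀ (r : ℝ) (x : B), 0 ≤ r → 0 ≤ x → 0 ≤ r • x)
    (hmulB : ∀ x y : B, 0 ≤ x → 0 ≤ y → 0 ≤ x * y)
    (hfB : ∀ x y z : B, 0 ≤ z → x ⊓ y = 0 → (x * z) ⊓ y = 0 ∧ (z * x) ⊓ y = 0)
    (harchB : ∀ x y : B, (∀ n : ℕ, n • x ≤ y) → x ≤ 0)
    (hT1 : T 1 = 1)
    (hiii : ∀ a : A, T |a| = |T a|) :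
    ∀ a : A, IsGLB {x : B | ∃ l : ℝ, x = T |a - l • (1 : A)|} 0 := by
  have h1B : (0:B) ≤ 1 := stmt4_one_nonneg hmulB hfB
  intro a
  constructor
  · rintro x ⟨l, rfl⟩
    rw [hiii]
    exact abs_nonneg _
  · intro c hc
    have hc' : ∀ l : ℝ, c ≤ |T a - l • (1:B)| := by
      intro l
      have := hc ⟨l, rfl⟩
      rwa [hiii, map_sub, map_smul, hT1] at this
    refine stmt4_arch_le_zero harchB hsmulB h1B ?_
    intro t ht
    have hw : ∀ k : ℕ, 1 ≤ k → c - t • (1:B) ≤ (|T a| - ((k:ℝ) * t) • (1:B))⁺ := by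
      intro k _
      have hke : (0:B) ≤ ((k:ℝ) * t) • (1:B) := hsmulB _ _ (by positivity) h1B
      have hgrid := stmt4_grid hsmulB h1B ht k (fun l _ => hc' l)
      have hsplit := stmt4_posPart_abs_split hke (T a)
      have h3 : c ≤ (|T a| - ((k:ℝ) * t) • (1:B))⁺ + t • (1:B) := by
        refine hgrid.trans (le_of_eq ?_)
        rw [← hsplit]; abel
      exact sub_le_iff_le_add.mpr h3
    exact sub_nonpos.mp (stmt4_tail_single hsmulB hmulB hfB harchB ht (abs_nonneg (T a)) hw)

/-- direction (i) → (ii) -/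
theorem stmt4_dir_i_ii (T : A →ₗ[ℝ] B)
    (hsmulA : ∀ (r : ℝ) (x : A), 0 ≤ r → 0 ≤ x → 0 ≤ r • x)
    (hmulA : ∀ x y : A, 0 ≤ x → 0 ≤ y → 0 ≤ x * y)
    (hfA : ∀ x y z : A, 0 ≤ z → x ⊓ y = 0 → (x * z) ⊓ y = 0 ∧ (z * x) ⊓ y = 0)
    (hsmulB : ∀ (r : ℝ) (x : B), 0 ≤ r → 0 ≤ x → 0 ≤ r • x)
    (hmulB : ∀ x y : B, 0 ≤ x → 0 ≤ y → 0 ≤ x * y)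
    (hfB : ∀ x y z : B, 0 ≤ z → x ⊓ y = 0 → (x * z) ⊓ y = 0 ∧ (z * x) ⊓ y = 0)
    (harchB : ∀ x y : B, (∀ n : ℕ, n • x ≤ y) → x ≤ 0)
    (hext : T ∈ Set.extremePoints ℝ
      {S : A →ₗ[ℝ] B | (∀ a : A, 0 ≤ a → 0 ≤ S a) ∧ S 1 = 1}) :
    ∀ a : A, IsGLB {x : B | ∃ l : ℝ, x = T |a - l • (1 : A)|} 0 := by
  obtain ⟨⟨hpos, hT1⟩, -⟩ := id hext
  have h1A : (0:A) ≤ 1 := stmt4_one_nonneg hmulA hfA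
  have h1B : (0:B) ≤ 1 := stmt4_one_nonneg hmulB hfB
  have hmult : ∀ h x : A, 0 ≤ h → h ≤ 1 → T (h * x) = T h * T x :=
    fun h x h0 h1 => stmt4_mult T hext hmulA hmulB h0 h1 x
  intro a
  constructor
  · rintro x ⟨l, rfl⟩
    exact hpos _ (abs_nonneg _)
  · intro c hc
    have hc' : ∀ l : ℝ, c ≤ T |a - l • (1:A)| := fun l => hc ⟨l, rfl⟩
    refine stmt4_arch_le_zero harchB hsmulB h1B ?_
    intro t ht
    -- step 1 : c - t•1 ≤ T ((|a| - (k*t)•1)⁺) for every k ≥ 1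
    have key : ∀ k : ℕ, 1 ≤ k → c - t • (1:B) ≤ T ((|a| - ((k:ℝ) * t) • (1:A))⁺) := by
      intro k hk
      set M := (k:ℝ) * t with hMdef
      have hM0 : 0 < M := by
        have : (1:ℝ) ≤ (k:ℝ) := by exact_mod_cast hk
        nlinarith
      have hMe : (0:A) ≤ M • (1:A) := hsmulA _ _ hM0.le h1A
      set aM := (a ⊓ (M • (1:A))) ⊔ ((-M) • (1:A)) with haM
      set rM := T ((|a| - M • (1:A))⁺) with hrM
      have hbounds := stmt4_trunc_bounds hsmulA h1A hM0.le a
      have haMabs : |aM| ≤ M • (1:A) := by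
        rw [abs_le']
        exact ⟨hbounds.2, by rw [← neg_le]; exact hbounds.1⟩
      -- truncation inequality
      have htr : ∀ l : ℝ, |l| ≤ M → c - rM ≤ |T aM - l • (1:B)| := by
        intro l hlM
        have htrunc := stmt4_trunc hsmulA h1A hlM a
        have hsplitA : (a - M • (1:A))⁺ + (-a - M • (1:A))⁺ = (|a| - M • (1:A))⁺ :=
          stmt4_posPart_abs_split hMe a
        rw [hsplitA] at htrunc
        -- T |aM - l•1| = |T aM - l•1| by the bounded lattice morphism property
        have hKbound : |aM - l • (1:A)| ≤ (M + |l| + 1) • (1:A) := by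
          calc |aM - l • (1:A)| ≤ |aM| + |l • (1:A)| := stmt4_abs_sub' _ _
            _ = |aM| + |l| • (1:A) := by rw [stmt4_abs_smul_one hsmulA h1A]
            _ ≤ M • (1:A) + |l| • (1:A) := add_le_add_left haMabs _
            _ = (M + |l|) • (1:A) := (add_smul _ _ _).symm
            _ ≤ (M + |l| + 1) • (1:A) := by
                rw [← sub_nonneg, ← sub_smul]
                refine hsmulA _ _ (by norm_num) h1A
        have hblh : T |aM - l • (1:A)| = |T (aM - l • (1:A))| :=
          stmt4_blh T hpos hsmulA hfA hsmulB hmulB hfB harchB hmult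
            (by positivity : (0:ℝ) < M + |l| + 1) hKbound
        have hTaMl : T (aM - l • (1:A)) = T aM - l • (1:B) := by
          rw [map_sub, map_smul, hT1]
        have : c ≤ |T aM - l • (1:B)| + rM := by
          calc c ≤ T |a - l • (1:A)| := hc' l
            _ = T (|aM - l • (1:A)| + (|a| - M • (1:A))⁺) := by rw [← htrunc]
            _ = T |aM - l • (1:A)| + rM := by rw [map_add, hrM]
            _ = |T aM - l • (1:B)| + rM := by rw [hblh, hTaMl]
        exact sub_le_iff_le_add.mpr this
      -- the grid argument
      have hgrid := stmt4_grid hsmulB h1B ht k (c := c - rM) (b := T aM) htr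
      have hb1 : (T aM - ((k:ℝ) * t) • (1:B))⁺ = 0 := by
        refine posPart_of_nonpos (sub_nonpos.2 ?_)
        have h6 := stmt4_mono T hpos hbounds.2
        rw [map_smul, hT1] at h6
        rw [← hMdef]
        exact h6
      have hb2 : (-(T aM) - ((k:ℝ) * t) • (1:B))⁺ = 0 := by
        refine posPart_of_nonpos (sub_nonpos.2 ?_)
        have h7 := stmt4_mono T hpos hbounds.1
        rw [map_neg, map_smul, hT1] at h7
        rw [← hMdef]
        exact neg_le.mp h7
      rw [hb1, hb2, add_zero, add_zero] at hgrid
      -- c - rM ≤ t • 1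
      have h8 : c - t • (1:B) ≤ rM := by
        exact sub_le_iff_le_add.mpr ((sub_le_iff_le_add.mp hgrid).trans_eq (add_comm _ _))
      rwa [hrM, hMdef] at h8
    -- step 2 : the multiplicative tail argument
    set v := t⁻¹ • |a| with hv
    have hv0 : 0 ≤ v := hsmulA _ _ (by positivity) (abs_nonneg a)
    have htail : ∀ k : ℕ, 1 ≤ k → t⁻¹ • (c - t • (1:B)) ≤ T ((v - (k:ℝ) • (1:A))⁺) := by
      intro k hk
      have e1 : v - (k:ℝ) • (1:A) = t⁻¹ • (|a| - ((k:ℝ) * t) • (1:A)) := by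
        rw [smul_sub, hv, smul_smul]
        congr 2
        field_simp
      have e2 : (v - (k:ℝ) • (1:A))⁺ = t⁻¹ • (|a| - ((k:ℝ) * t) • (1:A))⁺ := by
        rw [e1, stmt4_smul_posPart hsmulA (by positivity)]
      rw [e2, map_smul]
      exact stmt4_smul_mono hsmulB (by positivity) (key k hk)
    have hzero := stmt4_tail_mult T hpos hsmulA hmulA hfA hsmulB hmulB harchB hmult hv0 htail
    have : c - t • (1:B) ≤ 0 := by
      have h9 := stmt4_smul_mono hsmulB ht.le hzero
      rwa [smul_smul, mul_inv_cancel₀ ht.ne', one_smul, smul_zero] at h9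
    exact sub_nonpos.mp this
end Stmt4Dirs2

/-- For an order bounded linear operator `T` between unital Archimedean
`f`-algebras with point separating order duals, satisfying `T 1 = 1` and
`|T a| ≤ 1` whenever `|a| ≤ 1`, the following are equivalent:
(i) `T` is an extreme point of the set of Markov operators;
(ii) `inf {T |a - λ • 1| : λ ∈ ℝ} = 0` for all `a`;
(iii) `T` is a lattice homomorphism. -/
theorem stmt_4
    {A B : Type*}
    [Ring A] [Lattice A] [Algebra ℝ A] [CovariantClass A A (· + ·) (· ≤ ·)]
    -- A is a Riesz space (vector lattice) over ℝ
    (hsmulA : ∀ (r : ℝ) (x : A), 0 ≤ r → 0 ≤ x → 0 ≤ r • x)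
    -- A is a lattice-ordered algebra
    (hmulA : ∀ x y : A, 0 ≤ x → 0 ≤ y → 0 ≤ x * y)
    -- the f-algebra condition
    (hfA : ∀ x y z : A, 0 ≤ z → x ⊓ y = 0 → (x * z) ⊓ y = 0 ∧ (z * x) ⊓ y = 0)
    -- A is Archimedean
    (harchA : ∀ x y : A, (∀ n : ℕ, n • x ≤ y) → x ≤ 0)
    -- the order dual of A separates the points of A
    (hsepA : ∀ x : A, x ≠ 0 → ∃ f : A →ₗ[ℝ] ℝ, Monotone f ∧ f x ≠ 0)
    [Ring B] [Lattice B] [Algebra ℝ B] [CovariantClass B B (· + ·) (· ≤ ·)]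
    -- B is a Riesz space (vector lattice) over ℝ
    (hsmulB : ∀ (r : ℝ) (x : B), 0 ≤ r → 0 ≤ x → 0 ≤ r • x)
    -- B is a lattice-ordered algebra
    (hmulB : ∀ x y : B, 0 ≤ x → 0 ≤ y → 0 ≤ x * y)
    -- the f-algebra condition
    (hfB : ∀ x y z : B, 0 ≤ z → x ⊓ y = 0 → (x * z) ⊓ y = 0 ∧ (z * x) ⊓ y = 0)
    -- B is Archimedean
    (harchB : ∀ x y : B, (∀ n : ℕ, n • x ≤ y) → x ≤ 0)
    -- the order dual of B separates the points of B
    (hsepB : ∀ x : B, x ≠ 0 → ∃ f : B →ₗ[ℝ] ℝ, Monotone f ∧ f x ≠ 0)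
    (T : A →ₗ[ℝ] B)
    -- T is order bounded
    (hTob : ∀ a : A, 0 ≤ a → ∃ b : B, ∀ x : A, |x| ≤ a → |T x| ≤ b)
    (hT1 : T 1 = 1)
    (hTcontr : ∀ a : A, |a| ≤ 1 → |T a| ≤ 1) :
    (T ∈ Set.extremePoints ℝ {S : A →ₗ[ℝ] B | (∀ a : A, 0 ≤ a → 0 ≤ S a) ∧ S 1 = 1} ↔
        ∀ a : A, IsGLB {x : B | ∃ l : ℝ, x = T |a - l • (1 : A)|} 0) ∧
    ((∀ a : A, IsGLB {x : B | ∃ l : ℝ, x = T |a - l • (1 : A)|} 0) ↔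
        ∀ a : A, T |a| = |T a|) := by
  constructor
  · constructor
    · intro hext
      exact stmt4_dir_i_ii T hsmulA hmulA hfA hsmulB hmulB hfB harchB hext
    · intro hii
      exact stmt4_dir_ii_i T hsmulB hT1 hii
  · constructor
    · intro hii
      exact stmt4_dir_ii_iii T hsmulA hmulA hfA hsmulB hmulB hfB hT1 hii
    · intro hiii
      exact stmt4_dir_iii_ii T hsmulB hmulB hfB harchB hT1 hiii
end

section
/- Let A and B be Archimedean f-algebras with unit elements e_A and e_B respectively (and point separating order duals). If a Markov operator T : A → B is an extreme point of the convex set of Markov operators from A to B, then inf{ T|a − λe_A| : λ ∈ ℝ } = 0 in B for every a ∈ A. -/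
set_option linter.unusedSectionVars false

section Helpers

variable {R : Type*} [Ring R] [Lattice R] [Algebra ℝ R] [CovariantClass R R (· + ·) (· ≤ ·)]

private lemma sm_mono (hs : ∀ (r : ℝ) (x : R), 0 ≤ r → 0 ≤ x → 0 ≤ r • x)
    {r : ℝ} (hr : 0 ≤ r) {x y : R} (h : x ≤ y) : r • x ≤ r • y := by
  have h2 := hs r (y - x) hr (sub_nonneg.2 h)
  rwa [smul_sub, sub_nonneg] at h2

private lemma sm_sup (hs : ∀ (r : ℝ) (x : R), 0 ≤ r → 0 ≤ x → 0 ≤ r • x)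
    {r : ℝ} (hr : 0 < r) (x y : R) : r • (x ⊔ y) = (r • x) ⊔ (r • y) := by
  refine le_antisymm ?_ (sup_le (sm_mono hs hr.le le_sup_left) (sm_mono hs hr.le le_sup_right))
  have h1 : x ⊔ y ≤ r⁻¹ • ((r • x) ⊔ (r • y)) := by
    refine sup_le ?_ ?_
    · have := sm_mono hs (inv_nonneg.2 hr.le) (le_sup_left : r • x ≤ (r • x) ⊔ (r • y))
      rwa [inv_smul_smul₀ hr.ne'] at this
    · have := sm_mono hs (inv_nonneg.2 hr.le) (le_sup_right : r • y ≤ (r • x) ⊔ (r • y))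
      rwa [inv_smul_smul₀ hr.ne'] at this
  have := sm_mono hs hr.le h1
  rwa [smul_inv_smul₀ hr.ne'] at this

private lemma sm_abs (hs : ∀ (r : ℝ) (x : R), 0 ≤ r → 0 ≤ x → 0 ≤ r • x)
    {r : ℝ} (hr : 0 < r) (x : R) : |r • x| = r • |x| := by
  have : |x| = x ⊔ -x := rfl
  rw [this, sm_sup hs hr, smul_neg]
  rfl

private lemma abs_of_nn {x : R} (h : 0 ≤ x) : |x| = x := by
  have : |x| = x ⊔ -x := rfl
  rw [this, sup_eq_left]
  exact le_trans (neg_nonpos.2 h) h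

private lemma negPart_le_abs' (x : R) : x⁻ ≤ |x| := by
  rw [← posPart_add_negPart x]
  exact le_add_of_nonneg_left (posPart_nonneg x)

private lemma mul_mono_l (hm : ∀ x y : R, 0 ≤ x → 0 ≤ y → 0 ≤ x * y)
    {x y z : R} (hz : 0 ≤ z) (h : x ≤ y) : z * x ≤ z * y := by
  have h2 := hm z (y - x) hz (sub_nonneg.2 h)
  rwa [mul_sub, sub_nonneg] at h2

private lemma mul_mono_r (hm : ∀ x y : R, 0 ≤ x → 0 ≤ y → 0 ≤ x * y)
    {x y z : R} (hz : 0 ≤ z) (h : x ≤ y) : x * z ≤ y * z := by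
  have h2 := hm (y - x) z (sub_nonneg.2 h) hz
  rwa [sub_mul, sub_nonneg] at h2

private lemma disj_mul (hf : ∀ x y z : R, 0 ≤ z → x ⊓ y = 0 → (x * z) ⊓ y = 0 ∧ (z * x) ⊓ y = 0)
    {x y : R} (h : x ⊓ y = 0) : x * y = 0 := by
  have hy : (0 : R) ≤ y := by rw [← h]; exact inf_le_right
  have hx : (0 : R) ≤ x := by rw [← h]; exact inf_le_left
  have h1 := (hf x y y hy h).1
  have h2 := (hf y (x * y) x hx (by rw [inf_comm]; exact h1)).2
  simpa [inf_idem] using h2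

private lemma sq_nn (hm : ∀ x y : R, 0 ≤ x → 0 ≤ y → 0 ≤ x * y)
    (hf : ∀ x y z : R, 0 ≤ z → x ⊓ y = 0 → (x * z) ⊓ y = 0 ∧ (z * x) ⊓ y = 0)
    (x : R) : 0 ≤ x * x := by
  have h1 : x⁺ * x⁻ = 0 := disj_mul hf (posPart_inf_negPart_eq_zero x)
  have h2 : x⁻ * x⁺ = 0 := disj_mul hf (by rw [inf_comm]; exact posPart_inf_negPart_eq_zero x)
  have key : 0 ≤ (x⁺ - x⁻) * (x⁺ - x⁻) := by
    have e : (x⁺ - x⁻) * (x⁺ - x⁻) = x⁺ * x⁺ + x⁻ * x⁻ := by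
      rw [sub_mul, mul_sub, mul_sub, h1, h2]
      abel
    rw [e]
    exact add_nonneg (hm _ _ (posPart_nonneg x) (posPart_nonneg x))
      (hm _ _ (negPart_nonneg x) (negPart_nonneg x))
  rwa [posPart_sub_negPart] at key

private lemma one_nn (hm : ∀ x y : R, 0 ≤ x → 0 ≤ y → 0 ≤ x * y)
    (hf : ∀ x y z : R, 0 ≤ z → x ⊓ y = 0 → (x * z) ⊓ y = 0 ∧ (z * x) ⊓ y = 0) :
    (0 : R) ≤ 1 := by
  simpa using sq_nn hm hf 1

private lemma semiprime (hs : ∀ (r : ℝ) (x : R), 0 ≤ r → 0 ≤ x → 0 ≤ r • x)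
    (hm : ∀ x y : R, 0 ≤ x → 0 ≤ y → 0 ≤ x * y)
    (hf : ∀ x y z : R, 0 ≤ z → x ⊓ y = 0 → (x * z) ⊓ y = 0 ∧ (z * x) ⊓ y = 0)
    (harch : ∀ x y : R, (∀ n : ℕ, n • x ≤ y) → x ≤ 0)
    {c : R} (hc : 0 ≤ c) (h : c * c = 0) : c = 0 := by
  have key : ∀ n : ℕ, n • c ≤ 1 := by
    intro n
    set r : ℝ := (n : ℝ)
    have hsq := sq_nn hm hf (r • c - 1)
    have e : (r • c - 1) * (r • c - 1) = 1 - (r • c + r • c) := by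
      rw [sub_mul, mul_sub, mul_sub, mul_one, one_mul, smul_mul_assoc, mul_smul_comm, h,
        smul_zero, smul_zero, mul_one]
      abel
    rw [e] at hsq
    have h2 : r • c + r • c ≤ 1 := by
      have := add_le_add_right hsq (r • c + r • c)
      simpa using this
    have h3 : r • c ≤ r • c + r • c := le_add_of_nonneg_left (hs r c (by positivity) hc)
    have h4 : r • c ≤ 1 := le_trans h3 h2
    rwa [Nat.cast_smul_eq_nsmul] at h4
  exact le_antisymm (harch c 1 key) hc

private lemma inf_zero_of_mul (hs : ∀ (r : ℝ) (x : R), 0 ≤ r → 0 ≤ x → 0 ≤ r • x)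
    (hm : ∀ x y : R, 0 ≤ x → 0 ≤ y → 0 ≤ x * y)
    (hf : ∀ x y z : R, 0 ≤ z → x ⊓ y = 0 → (x * z) ⊓ y = 0 ∧ (z * x) ⊓ y = 0)
    (harch : ∀ x y : R, (∀ n : ℕ, n • x ≤ y) → x ≤ 0)
    {u v : R} (hu : 0 ≤ u) (hv : 0 ≤ v) (h : u * v = 0) : u ⊓ v = 0 := by
  have hc : 0 ≤ u ⊓ v := le_inf hu hv
  refine semiprime hs hm hf harch hc (le_antisymm ?_ (sq_nn hm hf _))
  calc (u ⊓ v) * (u ⊓ v) ≤ u * (u ⊓ v) := mul_mono_r hm hc inf_le_left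
    _ ≤ u * v := mul_mono_l hm hu inf_le_right
    _ = 0 := h

private lemma weak_unit (hf : ∀ x y z : R, 0 ≤ z → x ⊓ y = 0 → (x * z) ⊓ y = 0 ∧ (z * x) ⊓ y = 0)
    {c : R} (hc : 0 ≤ c) (h : c ⊓ 1 = 0) : c = 0 := by
  have h2 := (hf 1 c c hc (by rwa [inf_comm] at h)).1
  simpa [inf_idem] using h2

private lemma inf_subadd {a b c : R} (ha : 0 ≤ a) (hb : 0 ≤ b) (hc : 0 ≤ c) :
    a ⊓ (b + c) ≤ a ⊓ b + a ⊓ c := by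
  have e : a ⊓ b + a ⊓ c = ((a + a) ⊓ (a + c)) ⊓ ((b + a) ⊓ (b + c)) := by
    rw [inf_add, add_inf, add_inf]
  rw [e]
  refine le_inf (le_inf ?_ ?_) (le_inf ?_ ?_)
  · exact le_trans inf_le_left (le_add_of_nonneg_right ha)
  · exact le_trans inf_le_left (le_add_of_nonneg_right hc)
  · exact le_trans inf_le_left (le_add_of_nonneg_left hb)
  · exact inf_le_right

private lemma s_le_p {s p : R} (hs0 : 0 ≤ s) (hs1 : s ≤ 1) (hp0 : 0 ≤ p) (hp1 : p ≤ 1)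
    (hd : s ⊓ (1 - p) = 0) : s ≤ p := by
  have h1 : s = s ⊓ (p + (1 - p)) := by
    rw [add_sub_cancel]
    exact (inf_eq_left.2 hs1).symm
  calc s = s ⊓ (p + (1 - p)) := h1
    _ ≤ s ⊓ p + s ⊓ (1 - p) := inf_subadd hs0 hp0 (sub_nonneg.2 hp1)
    _ = s ⊓ p := by rw [hd, add_zero]
    _ ≤ p := inf_le_right

private lemma core_ineq (x : R) (ε : ℝ) :
    (ε • (1 : R) + (ε • 1 - x)⁺) ⊓ |x| ≤ ε • 1 + x⁻ := by
  rw [← sub_nonpos]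
  have e0 : ∀ p q r : R, p ⊓ q - r = (p - r) ⊓ (q - r) := by
    intro p q r
    simp [sub_eq_add_neg, inf_add]
  rw [e0]
  have e1 : ε • (1 : R) + (ε • 1 - x)⁺ - (ε • 1 + x⁻) = (ε • 1 - x)⁺ - x⁻ := by abel
  have e2 : |x| - (ε • (1 : R) + x⁻) = x⁺ - ε • 1 := by
    conv_lhs => rw [← posPart_add_negPart x]
    abel
  rw [e1, e2]
  have ex : ε • (1 : R) - x = (ε • 1 - x⁺) + x⁻ := by
    conv_lhs => rw [← posPart_sub_negPart x]
    abel
  have h1 : (ε • (1 : R) - x)⁺ - x⁻ ≤ (ε • 1 - x⁺)⁺ := by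
    rw [sub_le_iff_le_add, posPart_def, posPart_def]
    refine sup_le ?_ (add_nonneg le_sup_right (negPart_nonneg x))
    rw [ex]
    exact add_le_add_left le_sup_left x⁻
  have h2 : x⁺ - ε • (1 : R) ≤ (ε • 1 - x⁺)⁻ := by
    rw [show x⁺ - ε • (1 : R) = -(ε • 1 - x⁺) by abel]
    exact neg_le_negPart _
  calc ((ε • (1:R) - x)⁺ - x⁻) ⊓ (x⁺ - ε • 1) ≤ (ε • 1 - x⁺)⁺ ⊓ (ε • 1 - x⁺)⁻ :=
        inf_le_inf h1 h2
    _ = 0 := posPart_inf_negPart_eq_zero _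

private lemma one_sub_inf_smul (hs : ∀ (r : ℝ) (x : R), 0 ≤ r → 0 ≤ x → 0 ≤ r • x)
    (u : R) {N : ℝ} (hN : 0 < N) :
    (1 : R) - ((1/N) • u) ⊓ 1 = (1/N) • (u - N • 1)⁻ := by
  have e1 : (u - N • (1 : R))⁻ = (N • 1 - u) ⊔ 0 := by
    rw [negPart_def, neg_sub]
  rw [e1, sm_sup hs (by positivity), smul_zero, smul_sub, smul_smul]
  rw [sub_inf, sub_self]
  congr 2
  rw [one_div, inv_mul_cancel₀ hN.ne', one_smul]

/-- The key "infimum over translates of the unit" lemma in an Archimedean unital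
f-algebra: if `v ≤ |b - l•1|` for every real `l`, then `v ≤ 0`. -/
private lemma star_lemma (hs : ∀ (r : ℝ) (x : R), 0 ≤ r → 0 ≤ x → 0 ≤ r • x)
    (hm : ∀ x y : R, 0 ≤ x → 0 ≤ y → 0 ≤ x * y)
    (hf : ∀ x y z : R, 0 ≤ z → x ⊓ y = 0 → (x * z) ⊓ y = 0 ∧ (z * x) ⊓ y = 0)
    (harch : ∀ x y : R, (∀ n : ℕ, n • x ≤ y) → x ≤ 0)
    (b v : R) (hv : ∀ l : ℝ, v ≤ |b - l • (1 : R)|) : v ≤ 0 := by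
  have h1R : (0 : R) ≤ 1 := one_nn hm hf
  have hv' : ∀ l : ℝ, v⁺ ≤ |b - l • (1 : R)| := by
    intro l
    rw [posPart_def]
    exact sup_le (hv l) (abs_nonneg _)
  have grid : ∀ (ε R' : ℝ), 0 ≤ ε → ∀ k : ℕ,
      v⁺ ≤ ε • 1 + ((R' - (k : ℝ) * ε) • (1 : R) - b)⁺ + (b - R' • 1)⁺ := by
    intro ε R' hε k
    induction k with
    | zero =>
      have h0 := hv' R'
      have e : |b - R' • (1 : R)| = (R' • (1:R) - b)⁺ + (b - R' • 1)⁺ := by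
        conv_lhs => rw [← posPart_add_negPart (b - R' • (1:R))]
        rw [negPart_def, neg_sub, ← posPart_def]
        abel
      rw [e] at h0
      have : v⁺ ≤ ε • 1 + ((R' • (1:R) - b)⁺ + (b - R' • 1)⁺) :=
        le_trans h0 (le_add_of_nonneg_left (hs ε 1 hε h1R))
      simpa [add_assoc] using this
    | succ k ih =>
      set l : ℝ := R' - ((k : ℝ) + 1) * ε with hl
      set x : R := b - l • (1 : R) with hx
      have e1 : ε • (1 : R) - x = (R' - (k : ℝ) * ε) • 1 - b := by
        rw [hx]
        have : ε + l = R' - (k : ℝ) * ε := by rw [hl]; ring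
        rw [← this, add_smul]
        abel
      have e2 : x⁻ = (l • (1 : R) - b)⁺ := by
        rw [hx, negPart_def, neg_sub, posPart_def]
      have hQ : v⁺ ≤ (ε • 1 + (ε • 1 - x)⁺) + (b - R' • 1)⁺ := by
        rw [e1]
        calc v⁺ ≤ ε • 1 + ((R' - (k : ℝ) * ε) • (1 : R) - b)⁺ + (b - R' • 1)⁺ := ih
          _ = (ε • 1 + ((R' - (k : ℝ) * ε) • (1 : R) - b)⁺) + (b - R' • 1)⁺ := by abel
      have hX : v⁺ ≤ |x| := hv' l
      have r0 : 0 ≤ (b - R' • (1:R))⁺ := posPart_nonneg _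
      have step : v⁺ ≤ (ε • 1 + x⁻) + (b - R' • 1)⁺ := by
        calc v⁺ ≤ ((ε • 1 + (ε • 1 - x)⁺) + (b - R' • 1)⁺) ⊓ (|x| + (b - R' • 1)⁺) :=
              le_inf hQ (le_trans hX (le_add_of_nonneg_right r0))
          _ = ((ε • 1 + (ε • 1 - x)⁺) ⊓ |x|) + (b - R' • 1)⁺ := (inf_add _ _ _).symm
          _ ≤ (ε • 1 + x⁻) + (b - R' • 1)⁺ := add_le_add_left (core_ineq x ε) _
      rw [e2] at step
      have ecast : ((k : ℝ) + 1) = ((k + 1 : ℕ) : ℝ) := by push_cast; ring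
      calc v⁺ ≤ (ε • 1 + (l • (1:R) - b)⁺) + (b - R' • 1)⁺ := step
        _ = ε • 1 + ((R' - ((k + 1 : ℕ) : ℝ) * ε) • (1:R) - b)⁺ + (b - R' • 1)⁺ := by
            rw [hl, ← ecast]
  have key : ∀ m n : ℕ, 1 ≤ m → 1 ≤ n →
      v⁺ ≤ (1 / (m : ℝ)) • 1 + ((|b| - (n : ℝ) • 1)⁺ + (|b| - (n : ℝ) • 1)⁺) := by
    intro m n hm1 _
    have hmpos : (0 : ℝ) < (m : ℝ) := by exact_mod_cast hm1
    have h := grid (1 / (m : ℝ)) (n : ℝ) (by positivity) (2 * n * m)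
    have ecast : (n : ℝ) - ((2 * n * m : ℕ) : ℝ) * (1 / (m : ℝ)) = -(n : ℝ) := by
      push_cast
      field_simp
      ring
    rw [ecast] at h
    have t1 : ((-(n : ℝ)) • (1 : R) - b)⁺ ≤ (|b| - (n : ℝ) • 1)⁺ := by
      apply posPart_mono
      rw [neg_smul]
      have : -((n:ℝ) • (1:R)) - b = -b - (n:ℝ) • 1 := by abel
      rw [this]
      exact sub_le_sub_right (neg_le_abs b) _
    have t2 : (b - (n : ℝ) • (1 : R))⁺ ≤ (|b| - (n : ℝ) • 1)⁺ :=
      posPart_mono (sub_le_sub_right (le_abs_self b) _)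
    calc v⁺ ≤ (1/(m:ℝ)) • 1 + ((-(n:ℝ)) • (1:R) - b)⁺ + (b - (n:ℝ) • 1)⁺ := h
      _ = (1/(m:ℝ)) • 1 + (((-(n:ℝ)) • (1:R) - b)⁺ + (b - (n:ℝ) • 1)⁺) := by abel
      _ ≤ (1/(m:ℝ)) • 1 + ((|b| - (n:ℝ) • 1)⁺ + (|b| - (n:ℝ) • 1)⁺) := by
          exact add_le_add_right (add_le_add t1 t2) _
  have hcm : ∀ m : ℕ, 1 ≤ m → (v⁺ - (1 / (m : ℝ)) • (1 : R))⁺ = 0 := by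
    intro m hm1
    set c : R := (v⁺ - (1 / (m : ℝ)) • (1 : R))⁺ with hcdef
    have hc0 : 0 ≤ c := posPart_nonneg _
    have hcle : ∀ n : ℕ, 1 ≤ n → c ≤ (|b| - (n : ℝ) • 1)⁺ + (|b| - (n : ℝ) • 1)⁺ := by
      intro n hn
      rw [hcdef, posPart_def]
      refine sup_le ?_ (add_nonneg (posPart_nonneg _) (posPart_nonneg _))
      rw [sub_le_iff_le_add']
      exact key m n hm1 hn
    set s : R := c ⊓ 1 with hsdef
    have hs0 : 0 ≤ s := le_inf hc0 h1R
    have hns : ∀ n : ℕ, n • s ≤ |b| := by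
      intro n
      rcases Nat.eq_zero_or_pos n with h0 | hpos
      · simp [h0, abs_nonneg]
      · have hn1 : (1 : ℝ) ≤ (n : ℝ) := by exact_mod_cast hpos
        have hNpos : (0 : ℝ) < (n : ℝ) := by linarith
        set y : R := (|b| - (n : ℝ) • 1)⁺ with hy
        set y' : R := (|b| - (n : ℝ) • 1)⁻ with hy'
        have hgy : (1 / (n:ℝ)) • y' ≤ y' := by
          have h2 := hs (1 - 1/(n:ℝ)) y' (by
            rw [sub_nonneg]
            exact div_le_one_of_le₀ hn1 (by positivity)) (negPart_nonneg _)
          rwa [sub_smul, one_smul, sub_nonneg] at h2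
        have hdisj : y ⊓ ((1 / (n:ℝ)) • y') = 0 := by
          refine le_antisymm ?_ (le_inf (posPart_nonneg _) (hs _ _ (by positivity) (negPart_nonneg _)))
          calc y ⊓ ((1 / (n:ℝ)) • y') ≤ y ⊓ y' := inf_le_inf_left y hgy
            _ = 0 := posPart_inf_negPart_eq_zero _
        set p : R := ((1 / (n:ℝ)) • |b|) ⊓ 1 with hp
        have hp0 : 0 ≤ p := le_inf (hs _ _ (by positivity) (abs_nonneg _)) h1R
        have hp1 : p ≤ 1 := inf_le_right
        have h1p : (1 : R) - p = (1 / (n:ℝ)) • y' := by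
          rw [hp, one_sub_inf_smul hs |b| hNpos, hy']
        have hsc : s ≤ c := inf_le_left
        have hsy : s ⊓ ((1 / (n:ℝ)) • y') = 0 := by
          refine le_antisymm ?_ (le_inf hs0 (hs _ _ (by positivity) (negPart_nonneg _)))
          have hyy : 0 ≤ y := posPart_nonneg _
          have hz0 : 0 ≤ (1 / (n:ℝ)) • y' := hs _ _ (by positivity) (negPart_nonneg _)
          calc s ⊓ ((1 / (n:ℝ)) • y') ≤ (y + y) ⊓ ((1 / (n:ℝ)) • y') :=
                inf_le_inf_right _ (le_trans hsc (hcle n hpos))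
            _ = ((1 / (n:ℝ)) • y') ⊓ (y + y) := inf_comm _ _
            _ ≤ ((1 / (n:ℝ)) • y') ⊓ y + ((1 / (n:ℝ)) • y') ⊓ y := inf_subadd hz0 hyy hyy
            _ = 0 := by rw [inf_comm, hdisj, add_zero]
        have hsP : s ≤ p := s_le_p hs0 inf_le_right hp0 hp1 (by rw [h1p]; exact hsy)
        have hsb : s ≤ (1 / (n:ℝ)) • |b| := le_trans hsP inf_le_left
        have h2 : (n : ℝ) • s ≤ |b| := by
          have := sm_mono hs hNpos.le hsb
          rwa [smul_smul, mul_one_div, div_self hNpos.ne', one_smul] at this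
        rwa [Nat.cast_smul_eq_nsmul] at h2
    have hsle := harch s |b| hns
    have hs00 : s = 0 := le_antisymm hsle hs0
    exact weak_unit hf hc0 hs00
  have hfin : ∀ m : ℕ, m • v⁺ ≤ 1 := by
    intro m
    rcases Nat.eq_zero_or_pos m with h0 | hpos
    · simp [h0, h1R]
    · have hm1 : (1 : ℝ) ≤ (m : ℝ) := by exact_mod_cast hpos
      have hmpos : (0 : ℝ) < (m : ℝ) := by linarith
      have h2 := hcm m hpos
      rw [posPart_eq_zero, sub_nonpos] at h2
      have h3 := sm_mono hs hmpos.le h2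
      rw [smul_smul, mul_one_div, div_self hmpos.ne', one_smul] at h3
      rwa [Nat.cast_smul_eq_nsmul] at h3
  exact le_trans (le_posPart v) (harch v⁺ 1 hfin)

end Helpers

set_option maxHeartbeats 2000000 in
/-- If a Markov operator `T` between unital Archimedean `f`-algebras with point
separating order duals is an extreme point of the set of Markov operators, then
`inf {T |a - λ • 1| : λ ∈ ℝ} = 0` for every `a`. -/
theorem stmt_5
    {A B : Type*}
    [Ring A] [Lattice A] [Algebra ℝ A] [CovariantClass A A (· + ·) (· ≤ ·)]
    -- A is a Riesz space (vector lattice) over ℝ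
    (hsmulA : ∀ (r : ℝ) (x : A), 0 ≤ r → 0 ≤ x → 0 ≤ r • x)
    -- A is a lattice-ordered algebra
    (hmulA : ∀ x y : A, 0 ≤ x → 0 ≤ y → 0 ≤ x * y)
    -- the f-algebra condition
    (hfA : ∀ x y z : A, 0 ≤ z → x ⊓ y = 0 → (x * z) ⊓ y = 0 ∧ (z * x) ⊓ y = 0)
    -- A is Archimedean
    (harchA : ∀ x y : A, (∀ n : ℕ, n • x ≤ y) → x ≤ 0)
    -- the order dual of A separates the points of A
    (hsepA : ∀ x : A, x ≠ 0 → ∃ f : A →ₗ[ℝ] ℝ, Monotone f ∧ f x ≠ 0)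
    [Ring B] [Lattice B] [Algebra ℝ B] [CovariantClass B B (· + ·) (· ≤ ·)]
    -- B is a Riesz space (vector lattice) over ℝ
    (hsmulB : ∀ (r : ℝ) (x : B), 0 ≤ r → 0 ≤ x → 0 ≤ r • x)
    -- B is a lattice-ordered algebra
    (hmulB : ∀ x y : B, 0 ≤ x → 0 ≤ y → 0 ≤ x * y)
    -- the f-algebra condition
    (hfB : ∀ x y z : B, 0 ≤ z → x ⊓ y = 0 → (x * z) ⊓ y = 0 ∧ (z * x) ⊓ y = 0)
    -- B is Archimedean
    (harchB : ∀ x y : B, (∀ n : ℕ, n • x ≤ y) → x ≤ 0)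
    -- the order dual of B separates the points of B
    (hsepB : ∀ x : B, x ≠ 0 → ∃ f : B →ₗ[ℝ] ℝ, Monotone f ∧ f x ≠ 0)
    (T : A →ₗ[ℝ] B)
    -- T is a Markov operator
    (hTpos : ∀ a : A, 0 ≤ a → 0 ≤ T a) (hT1 : T 1 = 1)
    -- T is an extreme point of the set of Markov operators
    (hext : T ∈ Set.extremePoints ℝ {S : A →ₗ[ℝ] B | (∀ a : A, 0 ≤ a → 0 ≤ S a) ∧ S 1 = 1}) :
    ∀ a : A, IsGLB {x : B | ∃ l : ℝ, x = T |a - l • (1 : A)|} 0 := by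
  have h1A : (0 : A) ≤ 1 := one_nn hmulA hfA
  have h1B : (0 : B) ≤ 1 := one_nn hmulB hfB
  have Tmono : ∀ {x y : A}, x ≤ y → T x ≤ T y := by
    intro x y h
    have h2 := hTpos (y - x) (sub_nonneg.2 h)
    rwa [map_sub, sub_nonneg] at h2
  -- Step 1: extremality implies multiplicativity with a bounded factor
  have Tmul1 : ∀ h : A, |h| ≤ 1 → ∀ x : A, T (x * h) = T x * T h := by
    intro h hh
    set D : A →ₗ[ℝ] B := T.comp (LinearMap.mulRight ℝ h) - (LinearMap.mulRight ℝ (T h)).comp T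
      with hD
    have hDapp : ∀ x : A, D x = T (x * h) - T x * T h := by
      intro x
      simp [hD, LinearMap.sub_apply, LinearMap.comp_apply, LinearMap.mulRight_apply]
    have hbound : ∀ x : A, 0 ≤ x → D x ≤ T x + T x ∧ -(D x) ≤ T x + T x := by
      intro x hx
      have hTh1 : T h ≤ 1 := by
        calc T h ≤ T |h| := Tmono (le_abs_self h)
          _ ≤ T 1 := Tmono hh
          _ = 1 := hT1
      have hTh2 : -(T h) ≤ 1 := by
        calc -(T h) = T (-h) := (map_neg T h).symm
          _ ≤ T |h| := Tmono (neg_le_abs h)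
          _ ≤ T 1 := Tmono hh
          _ = 1 := hT1
      have hxh1 : T (x * h) ≤ T x := by
        calc T (x * h) ≤ T (x * |h|) := Tmono (mul_mono_l hmulA hx (le_abs_self h))
          _ ≤ T (x * 1) := Tmono (mul_mono_l hmulA hx hh)
          _ = T x := by rw [mul_one]
      have hxh2 : -(T (x * h)) ≤ T x := by
        rw [← map_neg, ← mul_neg]
        calc T (x * -h) ≤ T (x * |h|) := Tmono (mul_mono_l hmulA hx (neg_le_abs h))
          _ ≤ T (x * 1) := Tmono (mul_mono_l hmulA hx hh)
          _ = T x := by rw [mul_one]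
      have hTx : 0 ≤ T x := hTpos x hx
      have hm1 : T x * T h ≤ T x := by
        calc T x * T h ≤ T x * 1 := mul_mono_l hmulB hTx hTh1
          _ = T x := mul_one _
      have hm2 : -(T x * T h) ≤ T x := by
        rw [← mul_neg]
        calc T x * -(T h) ≤ T x * 1 := mul_mono_l hmulB hTx hTh2
          _ = T x := mul_one _
      constructor
      · rw [hDapp, sub_eq_add_neg]
        exact add_le_add hxh1 hm2
      · rw [hDapp, neg_sub, sub_eq_add_neg]
        exact add_le_add hm1 hxh2
    set S1 : A →ₗ[ℝ] B := T + (2⁻¹ : ℝ) • D with hS1def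
    set S2 : A →ₗ[ℝ] B := T - (2⁻¹ : ℝ) • D with hS2def
    have half : ∀ u : B, (2⁻¹ : ℝ) • (u + u) = u := by
      intro u
      rw [smul_add, ← add_smul]
      norm_num
    have hS1 : S1 ∈ {S : A →ₗ[ℝ] B | (∀ a : A, 0 ≤ a → 0 ≤ S a) ∧ S 1 = 1} := by
      constructor
      · intro x hx
        have h2 := (hbound x hx).2
        have h3 := sm_mono hsmulB (by norm_num : (0:ℝ) ≤ 2⁻¹) h2
        rw [smul_neg, half] at h3
        have h4 := add_le_add_left h3 ((2⁻¹ : ℝ) • D x)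
        rw [neg_add_cancel] at h4
        simpa [hS1def, LinearMap.add_apply, LinearMap.smul_apply] using h4
      · have : D 1 = 0 := by rw [hDapp, one_mul, hT1, one_mul, sub_self]
        simp [hS1def, LinearMap.add_apply, LinearMap.smul_apply, this, hT1]
    have hS2 : S2 ∈ {S : A →ₗ[ℝ] B | (∀ a : A, 0 ≤ a → 0 ≤ S a) ∧ S 1 = 1} := by
      constructor
      · intro x hx
        have h2 := (hbound x hx).1
        have h3 := sm_mono hsmulB (by norm_num : (0:ℝ) ≤ 2⁻¹) h2
        rw [half] at h3
        have : (0 : B) ≤ T x - (2⁻¹ : ℝ) • D x := sub_nonneg.2 h3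
        simpa [hS2def, LinearMap.sub_apply, LinearMap.smul_apply] using this
      · have : D 1 = 0 := by rw [hDapp, one_mul, hT1, one_mul, sub_self]
        simp [hS2def, LinearMap.sub_apply, LinearMap.smul_apply, this, hT1]
    have hseg : T ∈ openSegment ℝ S1 S2 := by
      refine ⟨2⁻¹, 2⁻¹, by norm_num, by norm_num, by norm_num, ?_⟩
      rw [hS1def, hS2def]
      module
    have hS1T := hext.2 hS1 hS2 hseg
    have hDzero : D = 0 := by
      have h0 : T + (2⁻¹ : ℝ) • D = T := hS1T
      have h1 : (2⁻¹ : ℝ) • D = 0 := by rwa [add_eq_left] at h0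
      have h2 : D = (2 : ℝ) • ((2⁻¹ : ℝ) • D) := by
        rw [smul_smul]
        norm_num
      rw [h2, h1, smul_zero]
    intro x
    have := congrArg (fun S : A →ₗ[ℝ] B => S x) hDzero
    simp only [LinearMap.zero_apply] at this
    rw [hDapp] at this
    exact sub_eq_zero.1 this
  -- Step 2: scaled version
  have Tmul : ∀ (h : A) (c : ℝ), 0 < c → |h| ≤ c • 1 → ∀ x : A, T (x * h) = T x * T h := by
    intro h c hc hh x
    have hb : |c⁻¹ • h| ≤ 1 := by
      rw [sm_abs hsmulA (inv_pos.2 hc)]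
      calc c⁻¹ • |h| ≤ c⁻¹ • (c • (1:A)) := sm_mono hsmulA (inv_pos.2 hc).le hh
        _ = 1 := by rw [inv_smul_smul₀ hc.ne']
    have h1 := Tmul1 (c⁻¹ • h) hb x
    have e : x * h = c • (x * (c⁻¹ • h)) := by
      rw [mul_smul_comm, smul_inv_smul₀ hc.ne']
    calc T (x * h) = c • T (x * (c⁻¹ • h)) := by rw [e, map_smul]
      _ = c • (T x * T (c⁻¹ • h)) := by rw [h1]
      _ = c • (T x * (c⁻¹ • T h)) := by rw [map_smul]
      _ = c • (c⁻¹ • (T x * T h)) := by rw [mul_smul_comm]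
      _ = T x * T h := by rw [smul_inv_smul₀ hc.ne']
  -- Step 3: T is a lattice homomorphism on bounded elements
  have Tabs : ∀ (h : A) (c : ℝ), 0 < c → |h| ≤ c • 1 → T |h| = |T h| := by
    intro h c hc hh
    have hd : h⁺ * h⁻ = 0 := disj_mul hfA (posPart_inf_negPart_eq_zero h)
    have hbnd : |h⁻| ≤ c • 1 := by
      rw [abs_of_nn (negPart_nonneg h)]
      exact le_trans (negPart_le_abs' h) hh
    have h2 : T h⁺ * T h⁻ = 0 := by
      rw [← Tmul h⁻ c hc hbnd h⁺, hd, map_zero]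
    have h3 : T h⁺ ⊓ T h⁻ = 0 :=
      inf_zero_of_mul hsmulB hmulB hfB harchB (hTpos _ (posPart_nonneg _))
        (hTpos _ (negPart_nonneg _)) h2
    have e1 : T |h| = T h⁺ + T h⁻ := by
      rw [← map_add, posPart_add_negPart]
    have h3' : T h⁻ ⊓ T h⁺ = 0 := by rw [inf_comm]; exact h3
    have e2 : T h⁻ ⊔ T h⁺ - T h⁻ ⊓ T h⁺ = T h⁺ + T h⁻ := by
      have e3 := inf_add_sup (T h⁻) (T h⁺)
      rw [h3', zero_add] at e3
      rw [h3', sub_zero, e3, add_comm]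
    rw [e1, ← e2, sup_sub_inf_eq_abs_sub, ← map_sub, posPart_sub_negPart]
  -- Step 4: prove the GLB property
  intro a
  constructor
  · rintro x ⟨l, rfl⟩
    exact hTpos _ (abs_nonneg _)
  · intro w hw
    have hwl : ∀ l : ℝ, w ≤ T |a - l • (1 : A)| := fun l => hw ⟨l, rfl⟩
    set s : B := w⁺ ⊓ 1 with hsdef
    have hs0 : 0 ≤ s := le_inf (posPart_nonneg _) h1B
    have hns : ∀ n : ℕ, n • s ≤ T |a| := by
      intro n
      rcases Nat.eq_zero_or_pos n with h0 | hpos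
      · simp [h0]
        exact hTpos _ (abs_nonneg _)
      · have hn1 : (1 : ℝ) ≤ (n : ℝ) := by exact_mod_cast hpos
        have hN : (0 : ℝ) < (n : ℝ) := by linarith
        set N : ℝ := (n : ℝ) with hNdef
        set hb : A := (a ⊓ N • 1) ⊔ (-(N • 1)) with hhb
        have hN1nn : (0 : A) ≤ N • 1 := hsmulA N 1 hN.le h1A
        have hhb_bound : |hb| ≤ N • 1 := by
          rw [abs_le']
          constructor
          · exact sup_le inf_le_right (neg_le_self hN1nn)
          · rw [neg_le]
            exact le_sup_right
        have hup : a - hb ≤ (|a| - N • 1)⁺ := by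
          have e1 : a - hb = (a - a ⊓ (N • 1)) ⊓ (a + N • 1) := by
            rw [hhb, sub_sup, sub_neg_eq_add]
          have e2 : a - a ⊓ (N • 1) = (a - N • 1)⁺ := by
            rw [sub_inf, sub_self, posPart_def, sup_comm]
          calc a - hb ≤ a - a ⊓ (N • 1) := by rw [e1]; exact inf_le_left
            _ = (a - N • 1)⁺ := e2
            _ ≤ (|a| - N • 1)⁺ := posPart_mono (sub_le_sub_right (le_abs_self a) _)
        have hdown : -(a - hb) ≤ (|a| - N • 1)⁺ := by
          rw [neg_sub]
          have e1 : hb ≤ a ⊔ (-(N • 1)) := sup_le_sup_right inf_le_left _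
          calc hb - a ≤ (a ⊔ (-(N • 1))) - a := sub_le_sub_right e1 a
            _ = 0 ⊔ (-(N • 1) - a) := by rw [sup_sub, sub_self]
            _ = (-a - N • 1)⁺ := by rw [posPart_def, sup_comm]; congr 1; abel
            _ ≤ (|a| - N • 1)⁺ := posPart_mono (sub_le_sub_right (neg_le_abs a) _)
        have habs2 : |a - hb| ≤ (|a| - N • 1)⁺ := abs_le'.2 ⟨hup, hdown⟩
        set t : B := T ((|a| - N • 1)⁺) with htdef
        have ht0 : 0 ≤ t := hTpos _ (posPart_nonneg _)
        -- w ≤ t via the star lemma applied in B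
        have hwt : w ≤ t := by
          rw [← sub_nonpos]
          refine star_lemma hsmulB hmulB hfB harchB (T hb) (w - t) ?_
          intro l
          have c1 : |a - l • (1:A)| ≤ |hb - l • 1| + (|a| - N • 1)⁺ := by
            calc |a - l • (1:A)| = |(a - hb) + (hb - l • 1)| := by congr 1; abel
              _ ≤ |a - hb| + |hb - l • 1| := abs_add_le (a - hb) (hb - l • 1)
              _ ≤ (|a| - N • 1)⁺ + |hb - l • 1| := add_le_add_left habs2 _
              _ = |hb - l • 1| + (|a| - N • 1)⁺ := add_comm _ _
          have hl1 : |l • (1:A)| ≤ |l| • 1 := by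
            rw [abs_le']
            constructor
            · have := hsmulA (|l| - l) 1 (by rw [sub_nonneg]; exact le_abs_self l) h1A
              rwa [sub_smul, sub_nonneg] at this
            · rw [← neg_smul]
              have := hsmulA (|l| - (-l)) 1 (by rw [sub_nonneg]; exact neg_le_abs l) h1A
              rwa [sub_smul, sub_nonneg] at this
          have hbb : |hb - l • (1:A)| ≤ (N + |l| + 1) • 1 := by
            calc |hb - l • (1:A)| = |hb + (-(l • 1))| := by congr 1; abel
              _ ≤ |hb| + |(-(l • (1:A)))| := abs_add_le hb (-(l • (1:A)))
              _ = |hb| + |l • (1:A)| := by rw [abs_neg]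
              _ ≤ N • 1 + |l| • 1 := add_le_add hhb_bound hl1
              _ ≤ N • 1 + |l| • 1 + (1:ℝ) • (1:A) := le_add_of_nonneg_right (by rw [one_smul]; exact h1A)
              _ = (N + |l| + 1) • 1 := by rw [add_smul, add_smul]
          have c2 : T |hb - l • (1:A)| = |T hb - l • (1:B)| := by
            rw [Tabs (hb - l • 1) (N + |l| + 1) (by positivity) hbb, map_sub, map_smul, hT1]
          calc w - t ≤ T |a - l • (1:A)| - t := sub_le_sub_right (hwl l) t
            _ ≤ T (|hb - l • 1| + (|a| - N • 1)⁺) - t := sub_le_sub_right (Tmono c1) t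
            _ = T |hb - l • (1:A)| := by rw [map_add, htdef, add_sub_cancel_right]
            _ = |T hb - l • (1:B)| := c2
        -- disjointness and conclusion
        set y : A := (|a| - N • 1)⁺ with hy
        set y' : A := (|a| - N • 1)⁻ with hy'
        set g : A := (1 / N) • y' with hg
        have hg0 : 0 ≤ g := hsmulA _ _ (by positivity) (negPart_nonneg _)
        have hgy : g ≤ y' := by
          have h2 := hsmulA (1 - 1/N) y' (by
            rw [sub_nonneg]
            exact div_le_one_of_le₀ hn1 (by positivity)) (negPart_nonneg _)
          rw [sub_smul, one_smul, sub_nonneg] at h2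
          rw [hg]
          exact h2
        have hyg : y ⊓ g = 0 := by
          refine le_antisymm ?_ (le_inf (posPart_nonneg _) hg0)
          calc y ⊓ g ≤ y ⊓ y' := inf_le_inf_left y hgy
            _ = 0 := posPart_inf_negPart_eq_zero _
        have hmul0 : y * g = 0 := disj_mul hfA hyg
        have hg1 : g ≤ 1 := by
          have hy'N : y' ≤ N • 1 := by
            rw [hy', negPart_def, neg_sub]
            exact sup_le (sub_le_self _ (abs_nonneg a)) hN1nn
          calc g ≤ (1/N) • (N • (1:A)) := by rw [hg]; exact sm_mono hsmulA (by positivity) hy'N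
            _ = 1 := by rw [smul_smul, one_div, inv_mul_cancel₀ hN.ne', one_smul]
        have hgabs : |g| ≤ (1:A) := by rw [abs_of_nn hg0]; exact hg1
        have hTyg : T y * T g = 0 := by rw [← Tmul1 g hgabs y, hmul0, map_zero]
        have hinfB : T y ⊓ T g = 0 :=
          inf_zero_of_mul hsmulB hmulB hfB harchB (hTpos _ (posPart_nonneg _)) (hTpos _ hg0) hTyg
        set p : A := ((1 / N) • |a|) ⊓ 1 with hp
        have h1p : (1 : A) - p = g := by
          rw [hp, one_sub_inf_smul hsmulA |a| hN, hg, hy']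
        have hw2 : w⁺ ≤ t := by
          rw [posPart_def]
          exact sup_le hwt ht0
        have hsg : s ⊓ T g = 0 := by
          refine le_antisymm ?_ (le_inf hs0 (hTpos _ hg0))
          calc s ⊓ T g ≤ t ⊓ T g := inf_le_inf_right _ (le_trans inf_le_left hw2)
            _ = T y ⊓ T g := by rw [htdef, hy]
            _ = 0 := hinfB
        have hp0A : 0 ≤ p := le_inf (hsmulA _ _ (by positivity) (abs_nonneg _)) h1A
        have hp1A : p ≤ 1 := inf_le_right
        have hTp0 : 0 ≤ T p := hTpos _ hp0A
        have hTp1 : T p ≤ 1 := by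
          calc T p ≤ T 1 := Tmono hp1A
            _ = 1 := hT1
        have h1Tp : (1 : B) - T p = T g := by rw [← hT1, ← map_sub, h1p]
        have hsTp : s ≤ T p := s_le_p hs0 inf_le_right hTp0 hTp1 (by rw [h1Tp]; exact hsg)
        have hsb : s ≤ (1 / N) • T |a| := by
          calc s ≤ T p := hsTp
            _ ≤ T ((1 / N) • |a|) := Tmono inf_le_left
            _ = (1 / N) • T |a| := map_smul T _ _
        have h2 : N • s ≤ T |a| := by
          have := sm_mono hsmulB hN.le hsb
          rwa [smul_smul, mul_one_div, div_self hN.ne', one_smul] at this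
        rw [hNdef] at h2
        rwa [Nat.cast_smul_eq_nsmul] at h2
    have hsle := harchB s (T |a|) hns
    have hs00 : s = 0 := le_antisymm hsle hs0
    have hwp : w⁺ = 0 := weak_unit hfB (posPart_nonneg _) hs00
    rw [← posPart_eq_zero]
    exact hwp
end

section
/- Let A and B be Archimedean f-algebras with unit elements e_A and e_B respectively (and point separating order duals), and let T : A → B be a Markov operator. If inf{ T|a − λe_A| : λ ∈ ℝ } = 0 in B for every a ∈ A, then T is a lattice homomorphism, i.e. T|a| = |Ta| for all a ∈ A. -/
/-- The unit of a unital f-algebra (lattice-ordered ring with the f-condition)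
is nonnegative. -/
theorem one_nonneg_falg {A : Type*} [Ring A] [Lattice A]
    [CovariantClass A A (· + ·) (· ≤ ·)]
    (hmul : ∀ x y : A, 0 ≤ x → 0 ≤ y → 0 ≤ x * y)
    (hf : ∀ x y z : A, 0 ≤ z → x ⊓ y = 0 → (x * z) ⊓ y = 0 ∧ (z * x) ⊓ y = 0) :
    (0:A) ≤ 1 := by
  have h := (hf (1:A)⁺ (1:A)⁻ (1:A)⁻ (negPart_nonneg 1) (posPart_inf_negPart_eq_zero 1)).2
  have key : (1:A)⁻ * (1:A)⁺ = (1:A)⁻ + (1:A)⁻ * (1:A)⁻ := by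
    have h2 : (1:A)⁻ * ((1:A)⁺ - (1:A)⁻) = (1:A)⁻ := by
      rw [posPart_sub_negPart, mul_one]
    rw [mul_sub] at h2
    exact (sub_eq_iff_eq_add.mp h2).trans (by abel)
  have hle : (1:A)⁻ ≤ (1:A)⁻ * (1:A)⁺ := by
    rw [key]
    exact le_add_of_nonneg_right (hmul _ _ (negPart_nonneg 1) (negPart_nonneg 1))
  have hneg : (1:A)⁻ = 0 := by rw [← h, inf_eq_right.mpr hle]
  have hps := posPart_sub_negPart (1:A)
  rw [hneg, sub_zero] at hps
  rw [← hps]; exact posPart_nonneg 1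

theorem abs_smul_one_falg {C : Type*} [Ring C] [Lattice C] [Algebra ℝ C]
    [CovariantClass C C (· + ·) (· ≤ ·)]
    (hsmul : ∀ (r : ℝ) (x : C), 0 ≤ r → 0 ≤ x → 0 ≤ r • x) (h1 : (0:C) ≤ 1)
    (l : ℝ) : |l • (1:C)| = |l| • 1 := by
  rcases le_or_gt 0 l with h | h
  · rw [abs_of_nonneg (hsmul l 1 h h1), abs_of_nonneg h]
  · have hneg : (0:C) ≤ (-l) • 1 := hsmul (-l) 1 (by linarith) h1
    rw [neg_smul] at hneg
    rw [abs_of_nonpos (neg_nonneg.mp hneg), abs_of_neg h, neg_smul]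

/-- If a Markov operator `T` between unital Archimedean `f`-algebras with point
separating order duals satisfies `inf {T |a - λ • 1| : λ ∈ ℝ} = 0` for every
`a`, then `T` is a lattice homomorphism. -/
theorem stmt_6
    {A B : Type*}
    [Ring A] [Lattice A] [Algebra ℝ A] [CovariantClass A A (· + ·) (· ≤ ·)]
    -- A is a Riesz space (vector lattice) over ℝ
    (hsmulA : ∀ (r : ℝ) (x : A), 0 ≤ r → 0 ≤ x → 0 ≤ r • x)
    -- A is a lattice-ordered algebra
    (hmulA : ∀ x y : A, 0 ≤ x → 0 ≤ y → 0 ≤ x * y)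
    -- the f-algebra condition
    (hfA : ∀ x y z : A, 0 ≤ z → x ⊓ y = 0 → (x * z) ⊓ y = 0 ∧ (z * x) ⊓ y = 0)
    -- A is Archimedean
    (harchA : ∀ x y : A, (∀ n : ℕ, n • x ≤ y) → x ≤ 0)
    -- the order dual of A separates the points of A
    (hsepA : ∀ x : A, x ≠ 0 → ∃ f : A →ₗ[ℝ] ℝ, Monotone f ∧ f x ≠ 0)
    [Ring B] [Lattice B] [Algebra ℝ B] [CovariantClass B B (· + ·) (· ≤ ·)]
    -- B is a Riesz space (vector lattice) over ℝ
    (hsmulB : ∀ (r : ℝ) (x : B), 0 ≤ r → 0 ≤ x → 0 ≤ r • x)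
    -- B is a lattice-ordered algebra
    (hmulB : ∀ x y : B, 0 ≤ x → 0 ≤ y → 0 ≤ x * y)
    -- the f-algebra condition
    (hfB : ∀ x y z : B, 0 ≤ z → x ⊓ y = 0 → (x * z) ⊓ y = 0 ∧ (z * x) ⊓ y = 0)
    -- B is Archimedean
    (harchB : ∀ x y : B, (∀ n : ℕ, n • x ≤ y) → x ≤ 0)
    -- the order dual of B separates the points of B
    (hsepB : ∀ x : B, x ≠ 0 → ∃ f : B →ₗ[ℝ] ℝ, Monotone f ∧ f x ≠ 0)
    (T : A →ₗ[ℝ] B)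
    -- T is a Markov operator
    (hTpos : ∀ a : A, 0 ≤ a → 0 ≤ T a) (hT1 : T 1 = 1)
    (hinf : ∀ a : A, IsGLB {x : B | ∃ l : ℝ, x = T |a - l • (1 : A)|} 0) :
    ∀ a : A, T |a| = |T a| := by
  have hA1 : (0:A) ≤ 1 := one_nonneg_falg hmulA hfA
  have hB1 : (0:B) ≤ 1 := one_nonneg_falg hmulB hfB
  -- T is monotone
  have hTmono : ∀ x y : A, x ≤ y → T x ≤ T y := by
    intro x y hxy
    have := hTpos (y - x) (sub_nonneg.mpr hxy)
    rw [map_sub] at this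
    exact sub_nonneg.mp this
  -- scalar multiplication by nonneg reals is monotone in B
  have hsmulmono : ∀ (r : ℝ) (x y : B), 0 ≤ r → x ≤ y → r • x ≤ r • y := by
    intro r x y hr hxy
    have := hsmulB r (y - x) hr (sub_nonneg.mpr hxy)
    rw [smul_sub] at this
    exact sub_nonneg.mp this
  -- |T x| ≤ T |x|
  have habsT : ∀ x : A, |T x| ≤ T |x| := by
    intro x
    refine abs_le'.mpr ⟨hTmono x |x| (le_abs_self x), ?_⟩
    have := hTmono (-x) |x| (neg_le_abs x)
    rwa [map_neg] at this
  intro a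
  set c : B := T |a| - |T a| with hc
  have hc0 : 0 ≤ c := sub_nonneg.mpr (habsT a)
  -- for each l, (1/2) • c ≤ T |a - l • 1|
  have hl : ∀ l : ℝ, ((1:ℝ)/2) • c ≤ T |a - l • (1:A)| := by
    intro l
    set X : B := T |a - l • (1:A)| with hX
    -- T |a| ≤ X + |l| • 1
    have h1 : T |a| ≤ X + |l| • (1:B) := by
      have htri : |a| ≤ |a - l • (1:A)| + |l| • (1:A) := by
        have : a = (a - l • (1:A)) + l • (1:A) := by abel
        calc |a| = |(a - l • (1:A)) + l • (1:A)| := by rw [← this]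
          _ ≤ |a - l • (1:A)| + |l • (1:A)| := abs_add_le _ _
          _ = |a - l • (1:A)| + |l| • (1:A) := by rw [abs_smul_one_falg hsmulA hA1 l]
      have := hTmono _ _ htri
      rwa [map_add, map_smul, hT1] at this
    -- |l| • 1 ≤ |T a| + X
    have h2 : |l| • (1:B) ≤ |T a| + X := by
      have heq : l • (1:B) = T a - T (a - l • (1:A)) := by
        rw [map_sub, map_smul, hT1]; abel
      calc |l| • (1:B) = |l • (1:B)| := (abs_smul_one_falg hsmulB hB1 l).symm
        _ = |T a - T (a - l • (1:A))| := by rw [heq]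
        _ = |T a + -(T (a - l • (1:A)))| := by rw [sub_eq_add_neg]
        _ ≤ |T a| + |-(T (a - l • (1:A)))| := abs_add_le _ _
        _ = |T a| + |T (a - l • (1:A))| := by rw [abs_neg]
        _ ≤ |T a| + X := by
            exact add_le_add_right (habsT _) _
    have hcX : c ≤ X + X := by
      have : T |a| ≤ X + (|T a| + X) := h1.trans (add_le_add_right h2 X)
      have h3 : T |a| - |T a| ≤ X + X := by
        rw [sub_le_iff_le_add]
        calc T |a| ≤ X + (|T a| + X) := this
          _ = X + X + |T a| := by abel
      exact h3
    have hhalf : ((1:ℝ)/2) • (X + X) = X := by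
      rw [smul_add, ← add_smul]; norm_num
    calc ((1:ℝ)/2) • c ≤ ((1:ℝ)/2) • (X + X) := hsmulmono _ _ _ (by norm_num) hcX
      _ = X := hhalf
  -- (1/2) • c is a lower bound of the set, hence ≤ 0
  have hlow : ((1:ℝ)/2) • c ≤ 0 := by
    refine (hinf a).2 ?_
    rintro x ⟨l, rfl⟩
    exact hl l
  have hcle : c ≤ 0 := by
    have := hsmulmono 2 (((1:ℝ)/2) • c) 0 (by norm_num) hlow
    rw [smul_zero, smul_smul] at this
    norm_num at this
    exact this
  have : c = 0 := le_antisymm hcle hc0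
  have := sub_eq_zero.mp this
  exact this
end

section
/- Let A and B be Archimedean f-algebras with unit elements e_A and e_B respectively (and point separating order duals). If a Markov operator T : A → B is a lattice homomorphism, then T is an extreme point of the convex set of Markov operators from A to B. -/
set_option linter.unusedSectionVars false

namespace Stmt7Aux

variable {M : Type*} [Ring M] [Lattice M] [Algebra ℝ M]
  [CovariantClass M M (· + ·) (· ≤ ·)]

theorem smul_mono (hsmul : ∀ (r : ℝ) (x : M), 0 ≤ r → 0 ≤ x → 0 ≤ r • x)
    {r : ℝ} {x y : M} (hr : 0 ≤ r) (h : x ≤ y) : r • x ≤ r • y := by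
  have := hsmul r (y - x) hr (sub_nonneg.mpr h)
  rw [smul_sub] at this
  exact sub_nonneg.mp this

theorem smul_cancel0 {r : ℝ} (hr : r ≠ 0) {x : M} (h : r • x = 0) : x = 0 := by
  have := congrArg (fun z => r⁻¹ • z) h
  simpa [inv_smul_smul₀ hr] using this

theorem smul_le_cancel (hsmul : ∀ (r : ℝ) (x : M), 0 ≤ r → 0 ≤ x → 0 ≤ r • x)
    {r : ℝ} (hr : 0 < r) {x y : M} (h : r • x ≤ r • y) : x ≤ y := by
  have := smul_mono hsmul (le_of_lt (inv_pos.mpr hr)) h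
  rwa [inv_smul_smul₀ hr.ne', inv_smul_smul₀ hr.ne'] at this

theorem smul_sup_pos (hsmul : ∀ (r : ℝ) (x : M), 0 ≤ r → 0 ≤ x → 0 ≤ r • x)
    {r : ℝ} (hr : 0 < r) (x y : M) : r • (x ⊔ y) = r • x ⊔ r • y := by
  apply le_antisymm
  · have h1 : x ≤ r⁻¹ • (r • x ⊔ r • y) := by
      have := smul_mono hsmul (le_of_lt (inv_pos.mpr hr)) (le_sup_left : r • x ≤ r • x ⊔ r • y)
      rwa [inv_smul_smul₀ hr.ne'] at this
    have h2 : y ≤ r⁻¹ • (r • x ⊔ r • y) := by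
      have := smul_mono hsmul (le_of_lt (inv_pos.mpr hr)) (le_sup_right : r • y ≤ r • x ⊔ r • y)
      rwa [inv_smul_smul₀ hr.ne'] at this
    have := smul_mono hsmul hr.le (sup_le h1 h2)
    rwa [smul_inv_smul₀ hr.ne'] at this
  · exact sup_le (smul_mono hsmul hr.le le_sup_left) (smul_mono hsmul hr.le le_sup_right)

theorem smul_inf_pos (hsmul : ∀ (r : ℝ) (x : M), 0 ≤ r → 0 ≤ x → 0 ≤ r • x)
    {r : ℝ} (hr : 0 < r) (x y : M) : r • (x ⊓ y) = r • x ⊓ r • y := by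
  apply le_antisymm
  · exact le_inf (smul_mono hsmul hr.le inf_le_left) (smul_mono hsmul hr.le inf_le_right)
  · have h1 : r⁻¹ • (r • x ⊓ r • y) ≤ x := by
      have := smul_mono hsmul (le_of_lt (inv_pos.mpr hr)) (inf_le_left : r • x ⊓ r • y ≤ r • x)
      rwa [inv_smul_smul₀ hr.ne'] at this
    have h2 : r⁻¹ • (r • x ⊓ r • y) ≤ y := by
      have := smul_mono hsmul (le_of_lt (inv_pos.mpr hr)) (inf_le_right : r • x ⊓ r • y ≤ r • y)
      rwa [inv_smul_smul₀ hr.ne'] at this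
    have := smul_mono hsmul hr.le (le_inf h1 h2)
    rwa [smul_inv_smul₀ hr.ne'] at this

theorem abs_smul_pos (hsmul : ∀ (r : ℝ) (x : M), 0 ≤ r → 0 ≤ x → 0 ≤ r • x)
    {r : ℝ} (hr : 0 < r) (x : M) : |r • x| = r • |x| := by
  have h1 : |r • x| = (r • x) ⊔ (-(r • x)) := rfl
  have h2 : |x| = x ⊔ -x := rfl
  rw [h1, h2, ← smul_neg, ← smul_sup_pos hsmul hr]

theorem mulPosLeft (hmul : ∀ x y : M, 0 ≤ x → 0 ≤ y → 0 ≤ x * y)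
    {x y : M} (h : x ≤ y) {c : M} (hc : 0 ≤ c) : c * x ≤ c * y := by
  have := hmul c (y - x) hc (sub_nonneg.mpr h)
  rw [mul_sub] at this
  exact sub_nonneg.mp this

theorem mulPosRight (hmul : ∀ x y : M, 0 ≤ x → 0 ≤ y → 0 ≤ x * y)
    {x y : M} (h : x ≤ y) {c : M} (hc : 0 ≤ c) : x * c ≤ y * c := by
  have := hmul (y - x) c (sub_nonneg.mpr h) hc
  rw [sub_mul] at this
  exact sub_nonneg.mp this

theorem mul_eq_zero_of_inf_zero
    (hf : ∀ x y z : M, 0 ≤ z → x ⊓ y = 0 → (x * z) ⊓ y = 0 ∧ (z * x) ⊓ y = 0)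
    {x y : M} (h : x ⊓ y = 0) : x * y = 0 := by
  have hx : (0:M) ≤ x := h ▸ inf_le_left
  have hy : (0:M) ≤ y := h ▸ inf_le_right
  have h1 : (x * y) ⊓ y = 0 := (hf x y y hy h).1
  have h2 : y ⊓ (x * y) = 0 := by rwa [inf_comm] at h1
  have h3 := (hf y (x * y) x hx h2).2
  simpa [inf_idem] using h3

theorem inf_add_le' {x y z : M} (hx : 0 ≤ x) (hy : 0 ≤ y) (hz : 0 ≤ z) :
    x ⊓ (y + z) ≤ x ⊓ y + x ⊓ z := by
  have key : x ⊓ (y + z) - x ⊓ y ≤ x ⊓ z := by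
    rw [sub_inf]
    apply sup_le
    · exact le_trans (sub_nonpos.mpr inf_le_left) (le_inf hx hz)
    · apply le_inf
      · exact le_trans (sub_le_sub_right inf_le_left y) (sub_le_self x hy)
      · have : x ⊓ (y + z) - y ≤ (y + z) - y := sub_le_sub_right inf_le_right y
        simpa using this
  have := add_le_add_left key (x ⊓ y)
  rw [sub_add_cancel] at this
  calc x ⊓ (y + z) ≤ x ⊓ z + x ⊓ y := this
    _ = x ⊓ y + x ⊓ z := add_comm _ _

theorem inf_zero_add {a b c : M} (ha : 0 ≤ a) (hb : 0 ≤ b) (hc : 0 ≤ c)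
    (h1 : a ⊓ c = 0) (h2 : b ⊓ c = 0) : (a + b) ⊓ c = 0 := by
  apply le_antisymm
  · calc (a + b) ⊓ c = c ⊓ (a + b) := inf_comm _ _
      _ ≤ c ⊓ a + c ⊓ b := inf_add_le' hc ha hb
      _ = 0 := by rw [inf_comm c a, inf_comm c b, h1, h2, add_zero]
  · exact le_inf (add_nonneg ha hb) hc

end Stmt7Aux
set_option maxHeartbeats 1000000

namespace Stmt7AuxB

variable {M : Type*} [Ring M] [Lattice M] [Algebra ℝ M]
  [CovariantClass M M (· + ·) (· ≤ ·)]

theorem mul_eq_zero_of_inf_zero'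
    (hf : ∀ x y z : M, 0 ≤ z → x ⊓ y = 0 → (x * z) ⊓ y = 0 ∧ (z * x) ⊓ y = 0)
    {x y : M} (h : x ⊓ y = 0) : x * y = 0 := by
  have hx : (0:M) ≤ x := h ▸ inf_le_left
  have hy : (0:M) ≤ y := h ▸ inf_le_right
  have h1 : (x * y) ⊓ y = 0 := (hf x y y hy h).1
  have h2 : y ⊓ (x * y) = 0 := by rwa [inf_comm] at h1
  have h3 := (hf y (x * y) x hx h2).2
  simpa [inf_idem] using h3

theorem sq_nonneg' (hmul : ∀ x y : M, 0 ≤ x → 0 ≤ y → 0 ≤ x * y)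
    (hf : ∀ x y z : M, 0 ≤ z → x ⊓ y = 0 → (x * z) ⊓ y = 0 ∧ (z * x) ⊓ y = 0)
    (a : M) : 0 ≤ a * a := by
  have hd : a⁺ ⊓ a⁻ = 0 := posPart_inf_negPart_eq_zero a
  have h1 : a⁺ * a⁻ = 0 := mul_eq_zero_of_inf_zero' hf hd
  have h2 : a⁻ * a⁺ = 0 := mul_eq_zero_of_inf_zero' hf (by rwa [inf_comm] at hd)
  have key : a * a = a⁺ * a⁺ + a⁻ * a⁻ := by
    conv_lhs => rw [← posPart_sub_negPart a]
    rw [sub_mul, mul_sub, mul_sub, h1, h2]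
    abel
  rw [key]
  exact add_nonneg (hmul _ _ (posPart_nonneg a) (posPart_nonneg a))
    (hmul _ _ (negPart_nonneg a) (negPart_nonneg a))

theorem abs_mul_self' (hf : ∀ x y z : M, 0 ≤ z → x ⊓ y = 0 → (x * z) ⊓ y = 0 ∧ (z * x) ⊓ y = 0)
    (a : M) : |a| * |a| = a * a := by
  have hd : a⁺ ⊓ a⁻ = 0 := posPart_inf_negPart_eq_zero a
  have h1 : a⁺ * a⁻ = 0 := mul_eq_zero_of_inf_zero' hf hd
  have h2 : a⁻ * a⁺ = 0 := mul_eq_zero_of_inf_zero' hf (by rwa [inf_comm] at hd)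
  have key1 : a * a = a⁺ * a⁺ + a⁻ * a⁻ := by
    conv_lhs => rw [← posPart_sub_negPart a]
    rw [sub_mul, mul_sub, mul_sub, h1, h2]
    abel
  have key2 : |a| * |a| = a⁺ * a⁺ + a⁻ * a⁻ := by
    conv_lhs => rw [← posPart_add_negPart a]
    rw [add_mul, mul_add, mul_add, h1, h2]
    abel
  rw [key1, key2]

theorem one_nonneg' (hmul : ∀ x y : M, 0 ≤ x → 0 ≤ y → 0 ≤ x * y)
    (hf : ∀ x y z : M, 0 ≤ z → x ⊓ y = 0 → (x * z) ⊓ y = 0 ∧ (z * x) ⊓ y = 0) :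
    (0:M) ≤ 1 := by simpa using sq_nonneg' hmul hf 1

theorem eq_zero_of_inf_one
    (hf : ∀ x y z : M, 0 ≤ z → x ⊓ y = 0 → (x * z) ⊓ y = 0 ∧ (z * x) ⊓ y = 0)
    {c : M} (h : c ⊓ 1 = 0) : c = 0 := by
  have hc : (0:M) ≤ c := h ▸ inf_le_left
  have h' : (1:M) ⊓ c = 0 := by rwa [inf_comm] at h
  have := (hf 1 c c hc h').1
  simpa [inf_idem] using this

theorem inf_sq (hmul : ∀ x y : M, 0 ≤ x → 0 ≤ y → 0 ≤ x * y)
    (hf : ∀ x y z : M, 0 ≤ z → x ⊓ y = 0 → (x * z) ⊓ y = 0 ∧ (z * x) ⊓ y = 0)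
    {p q : M} (hp : 0 ≤ p) (hq : 0 ≤ q) :
    (p * p) ⊓ (q * q) = (p ⊓ q) * (p ⊓ q) := by
  set m := p ⊓ q with hm
  have hm0 : 0 ≤ m := le_inf hp hq
  set p' := p - m with hp'def
  set q' := q - m with hq'def
  have hp'0 : 0 ≤ p' := sub_nonneg.mpr inf_le_left
  have hq'0 : 0 ≤ q' := sub_nonneg.mpr inf_le_right
  have hd : p' ⊓ q' = 0 := by
    have : p' ⊓ q' = -m + (p ⊓ q) := by
      rw [hp'def, hq'def, sub_eq_neg_add, sub_eq_neg_add, ← add_inf]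
    rw [this, ← hm]
    abel
  have hdq : q' ⊓ p' = 0 := by rwa [inf_comm] at hd
  -- products nonneg
  have h_mp' : 0 ≤ m * p' := hmul _ _ hm0 hp'0
  have h_p'm : 0 ≤ p' * m := hmul _ _ hp'0 hm0
  have h_p'p' : 0 ≤ p' * p' := hmul _ _ hp'0 hp'0
  have h_mq' : 0 ≤ m * q' := hmul _ _ hm0 hq'0
  have h_q'm : 0 ≤ q' * m := hmul _ _ hq'0 hm0
  have h_q'q' : 0 ≤ q' * q' := hmul _ _ hq'0 hq'0
  -- X := m*p' + p'*m + p'*p' is disjoint from q'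
  have hXa : (p' * m) ⊓ q' = 0 := (hf p' q' m hm0 hd).1
  have hXb : (m * p') ⊓ q' = 0 := (hf p' q' m hm0 hd).2
  have hXc : (p' * p') ⊓ q' = 0 := (hf p' q' p' hp'0 hd).1
  set X := m * p' + (p' * m + p' * p') with hXdef
  have hX0 : 0 ≤ X := add_nonneg h_mp' (add_nonneg h_p'm h_p'p')
  have hXq' : X ⊓ q' = 0 := by
    apply Stmt7Aux.inf_zero_add h_mp' (add_nonneg h_p'm h_p'p') hq'0 hXb
    exact Stmt7Aux.inf_zero_add h_p'm h_p'p' hq'0 hXa hXc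
  have hq'X : q' ⊓ X = 0 := by rwa [inf_comm] at hXq'
  -- Y := m*q' + q'*m + q'*q' disjoint from X
  have hYa : (q' * m) ⊓ X = 0 := (hf q' X m hm0 hq'X).1
  have hYb : (m * q') ⊓ X = 0 := (hf q' X m hm0 hq'X).2
  have hYc : (q' * q') ⊓ X = 0 := (hf q' X q' hq'0 hq'X).1
  set Y := m * q' + (q' * m + q' * q') with hYdef
  have hY0 : 0 ≤ Y := add_nonneg h_mq' (add_nonneg h_q'm h_q'q')
  have hYX : Y ⊓ X = 0 := by
    apply Stmt7Aux.inf_zero_add h_mq' (add_nonneg h_q'm h_q'q') hX0 hYb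
    exact Stmt7Aux.inf_zero_add h_q'm h_q'q' hX0 hYa hYc
  have hXY : X ⊓ Y = 0 := by rwa [inf_comm] at hYX
  -- expansions
  have hpe : p * p = m * m + X := by
    have hp2 : p = m + p' := by rw [hp'def]; abel
    rw [hp2, add_mul, mul_add, mul_add, hXdef]
    abel
  have hqe : q * q = m * m + Y := by
    have hq2 : q = m + q' := by rw [hq'def]; abel
    rw [hq2, add_mul, mul_add, mul_add, hYdef]
    abel
  rw [hpe, hqe, ← add_inf, hXY, add_zero]

end Stmt7AuxB

namespace Stmt7AuxC

variable {M : Type*} [Ring M] [Lattice M] [Algebra ℝ M]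
  [CovariantClass M M (· + ·) (· ≤ ·)]
variable {N : Type*} [Ring N] [Lattice N] [Algebra ℝ N]
  [CovariantClass N N (· + ·) (· ≤ ·)]

def psup (f : ℕ → M) : ℕ → M
  | 0 => f 0
  | k+1 => psup f k ⊔ f (k+1)

def pinf (f : ℕ → M) : ℕ → M
  | 0 => f 0
  | k+1 => pinf f k ⊓ f (k+1)

theorem psup_le {f : ℕ → M} {K : ℕ} {c : M} (h : ∀ k, k ≤ K → f k ≤ c) :
    psup f K ≤ c := by
  induction K with
  | zero => exact h 0 le_rfl
  | succ k ih =>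
      exact sup_le (ih fun j hj => h j (hj.trans (Nat.le_succ k))) (h (k+1) le_rfl)

theorem le_psup {f : ℕ → M} {k K : ℕ} (h : k ≤ K) : f k ≤ psup f K := by
  induction K with
  | zero => simp_all [psup]
  | succ K ih =>
      rcases Nat.lt_succ_iff_lt_or_eq.mp (Nat.lt_succ_of_le h) with h' | h'
      · exact le_trans (ih (Nat.lt_succ_iff.mp h')) le_sup_left
      · subst h'; exact le_sup_right

theorem pinf_le {f : ℕ → M} {k K : ℕ} (h : k ≤ K) : pinf f K ≤ f k := by
  induction K with
  | zero => simp_all [pinf]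
  | succ K ih =>
      rcases Nat.lt_succ_iff_lt_or_eq.mp (Nat.lt_succ_of_le h) with h' | h'
      · exact le_trans inf_le_left (ih (Nat.lt_succ_iff.mp h'))
      · subst h'; exact inf_le_right

theorem le_pinf {f : ℕ → M} {K : ℕ} {c : M} (h : ∀ k, k ≤ K → c ≤ f k) :
    c ≤ pinf f K := by
  induction K with
  | zero => exact h 0 le_rfl
  | succ k ih =>
      exact le_inf (ih fun j hj => h j (hj.trans (Nat.le_succ k))) (h (k+1) le_rfl)

theorem sub_psup (c : M) (f : ℕ → M) (K : ℕ) :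
    c - psup f K = pinf (fun k => c - f k) K := by
  induction K with
  | zero => rfl
  | succ k ih => rw [psup, sub_sup, ih]; rfl

theorem pinf_congr {f g : ℕ → M} (h : ∀ k, f k = g k) (K : ℕ) :
    pinf f K = pinf g K := by
  induction K with
  | zero => simpa [pinf] using h 0
  | succ k ih => rw [pinf, pinf, ih, h (k+1)]

theorem pinf_sq (hmul : ∀ x y : M, 0 ≤ x → 0 ≤ y → 0 ≤ x * y)
    (hf : ∀ x y z : M, 0 ≤ z → x ⊓ y = 0 → (x * z) ⊓ y = 0 ∧ (z * x) ⊓ y = 0)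
    {f : ℕ → M} (h0 : ∀ k, 0 ≤ f k) (K : ℕ) :
    pinf (fun k => f k * f k) K = pinf f K * pinf f K := by
  induction K with
  | zero => rfl
  | succ k ih =>
      have hW : 0 ≤ pinf f k := le_pinf fun j _ => h0 j
      rw [pinf, pinf, ih, Stmt7AuxB.inf_sq hmul hf hW (h0 (k+1))]

-- Riesz homomorphism consequences
theorem twosmul_posPart (b : M) : (2:ℝ) • b⁺ = b + |b| := by
  rw [two_smul]
  calc b⁺ + b⁺ = (b⁺ - b⁻) + (b⁺ + b⁻) := by abel
    _ = b + |b| := by rw [posPart_sub_negPart, posPart_add_negPart]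

theorem sup_eq_add_posPart (u v : M) : u ⊔ v = u + (v - u)⁺ := by
  rw [posPart_def, add_sup, add_zero, add_sub_cancel, sup_comm]

theorem map_posPart (S : M →ₗ[ℝ] N) (hS : ∀ a, S |a| = |S a|) (a : M) :
    S a⁺ = (S a)⁺ := by
  have h1 := congrArg S (twosmul_posPart a)
  rw [map_smul, map_add, hS] at h1
  have h2 := twosmul_posPart (S a)
  have h3 : (2:ℝ) • S a⁺ = (2:ℝ) • (S a)⁺ := by rw [h1, h2]
  have h4 := congrArg (fun z => (2:ℝ)⁻¹ • z) h3
  simpa [inv_smul_smul₀ (two_ne_zero (α := ℝ))] using h4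

theorem map_sup (S : M →ₗ[ℝ] N) (hS : ∀ a, S |a| = |S a|) (x y : M) :
    S (x ⊔ y) = S x ⊔ S y := by
  rw [sup_eq_add_posPart x y, map_add, map_posPart S hS, map_sub,
    ← sup_eq_add_posPart (S x) (S y)]

theorem map_inf (S : M →ₗ[ℝ] N) (hS : ∀ a, S |a| = |S a|) (x y : M) :
    S (x ⊓ y) = S x ⊓ S y := by
  have key : x ⊓ y = -((-x) ⊔ (-y)) := by rw [neg_sup]; simp
  rw [key, map_neg, map_sup S hS, map_neg, map_neg, neg_sup]
  simp

theorem map_psup (S : M →ₗ[ℝ] N) (hS : ∀ a, S |a| = |S a|) (f : ℕ → M) (K : ℕ) :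
    S (psup f K) = psup (fun k => S (f k)) K := by
  induction K with
  | zero => rfl
  | succ k ih => rw [psup, map_sup S hS, ih]; rfl

end Stmt7AuxC

namespace Stmt7AuxD
open Stmt7Aux Stmt7AuxB Stmt7AuxC

variable {M : Type*} [Ring M] [Lattice M] [Algebra ℝ M]
  [CovariantClass M M (· + ·) (· ≤ ·)]

theorem sq_sub_smul (a : M) (l : ℝ) :
    (a - l • 1) * (a - l • 1) = a*a - ((2*l) • a - (l^2) • 1) := by
  have e1 : a * (l • 1) = l • a := by rw [mul_smul_comm, mul_one]
  have e2 : (l • 1) * a = l • a := by rw [smul_mul_assoc, one_mul]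
  have e3 : (l • 1) * (l • 1 : M) = (l^2) • 1 := by
    rw [smul_mul_assoc, one_mul, smul_smul, ← pow_two]
  rw [sub_mul, mul_sub, mul_sub, e1, e2, e3]
  module

theorem grid (hsmul : ∀ (r : ℝ) (x : M), 0 ≤ r → 0 ≤ x → 0 ≤ r • x)
    (hmul : ∀ x y : M, 0 ≤ x → 0 ≤ y → 0 ≤ x * y)
    (hf : ∀ x y z : M, 0 ≤ z → x ⊓ y = 0 → (x * z) ⊓ y = 0 ∧ (z * x) ⊓ y = 0)
    {n m : ℕ} (hm : 0 < m) {a : M}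
    (ha0 : 0 ≤ a) (han : a ≤ (n:ℝ) • 1) :
    psup (fun k => (2*((k:ℝ)/(m:ℝ))) • a - (((k:ℝ)/(m:ℝ))^2) • 1) (n*m) ≤ a*a ∧
    a*a ≤ psup (fun k => (2*((k:ℝ)/(m:ℝ))) • a - (((k:ℝ)/(m:ℝ))^2) • 1) (n*m)
      + (((1:ℝ)/(2*(m:ℝ)))^2) • 1 := by
  have hm' : (0:ℝ) < m := by exact_mod_cast hm
  set c : ℝ := 1/(2*(m:ℝ)) with hc
  have hcpos : 0 < c := by rw [hc]; positivity
  have h1 : (0:M) ≤ 1 := one_nonneg' hmul hf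
  set f : ℕ → M := fun k => (2*((k:ℝ)/(m:ℝ))) • a - (((k:ℝ)/(m:ℝ))^2) • 1 with hfdef
  have hterm : ∀ k : ℕ, a*a - f k = (a - ((k:ℝ)/m) • 1) * (a - ((k:ℝ)/m) • 1) := by
    intro k
    rw [hfdef, sq_sub_smul]
  constructor
  · apply psup_le; intro k _
    have h := sq_nonneg' hmul hf (a - ((k:ℝ)/m) • 1)
    rw [← hterm k] at h
    exact sub_nonneg.mp h
  · set W : M := pinf (fun k => |a - ((k:ℝ)/m) • 1|) (n*m) with hWdef
    have habs0 : ∀ k : ℕ, (0:M) ≤ |a - ((k:ℝ)/m) • 1| := fun k => abs_nonneg _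
    have hW0 : 0 ≤ W := le_pinf fun k _ => habs0 k
    have hkey : a*a - psup f (n*m) = W * W := by
      rw [sub_psup, hWdef, ← pinf_sq hmul hf habs0]
      apply pinf_congr
      intro k
      rw [hterm k, abs_mul_self' hf]
    -- main induction
    letI : DistribLattice M := AddCommGroup.toDistribLattice M
    have claim : ∀ K : ℕ,
        pinf (fun k => |a - ((k:ℝ)/m) • 1|) K ≤ c • 1 ⊔ (a - ((K:ℝ)/m) • 1) := by
      intro K
      induction K with
      | zero =>
          have e : pinf (fun k => |a - ((k:ℝ)/m) • 1|) 0 = |a - ((0:ℝ)/m) • 1| := by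
            simp [pinf]
          rw [e]
          have : |a - ((0:ℝ)/m) • 1| = a := by
            rw [zero_div, zero_smul, sub_zero, abs_of_nonneg ha0]
          rw [this]
          have : a - (((0:ℕ):ℝ)/m) • 1 = a := by
            norm_num
          rw [this]
          exact le_sup_right
      | succ K ih =>
          set b : M := a - ((K:ℝ)/m) • 1 with hb
          have hscal : ((K+1:ℕ):ℝ)/m = (K:ℝ)/m + 2*c := by
            rw [hc]; push_cast; field_simp
          have hb' : a - (((K+1:ℕ):ℝ)/m) • 1 = b - (2*c) • 1 := by
            rw [hscal, hb, add_smul]; abel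
          set b' : M := b - (2*c) • 1 with hb'def
          have hstep : pinf (fun k => |a - ((k:ℝ)/m) • 1|) (K+1)
              = pinf (fun k => |a - ((k:ℝ)/m) • 1|) K ⊓ |b'| := by
            rw [pinf, hb']
          rw [hstep]
          have h2c1 : (0:M) ≤ (2*c) • 1 := hsmul _ _ (by positivity) h1
          have hbb' : b' ≤ b := sub_le_self b h2c1
          have hzc : b ⊓ (-b') ≤ c • 1 := by
            have hsum : b ⊓ (-b') + b ⊓ (-b') ≤ b + (-b') :=
              add_le_add inf_le_left inf_le_right
            have hbb : b + (-b') = (2*c) • 1 := by rw [hb'def]; abel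
            rw [hbb, ← two_smul ℝ] at hsum
            have := smul_mono hsmul (by norm_num : (0:ℝ) ≤ 1/2) hsum
            rw [smul_smul, smul_smul] at this
            norm_num at this
            convert this using 2
            ring
          have hdist : b ⊓ |b'| ≤ c • 1 ⊔ b' := by
            have habsb' : |b'| = b' ⊔ (-b') := rfl
            rw [habsb', inf_sup_left]
            apply sup_le
            · exact le_trans inf_le_right le_sup_right
            · exact le_trans hzc le_sup_left
          calc pinf (fun k => |a - ((k:ℝ)/m) • 1|) K ⊓ |b'|
              ≤ (c • 1 ⊔ b) ⊓ |b'| := inf_le_inf_right _ ih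
            _ = (c • 1 ⊓ |b'|) ⊔ (b ⊓ |b'|) := inf_sup_right _ _ _
            _ ≤ (c • 1) ⊔ (c • 1 ⊔ b') := sup_le_sup inf_le_left hdist
            _ = c • 1 ⊔ b' := by rw [← sup_assoc, sup_idem]
            _ = c • 1 ⊔ (a - (((K+1:ℕ):ℝ)/m) • 1) := by rw [hb']
    have hWc : W ≤ c • 1 := by
      have hcl := claim (n*m)
      have hcast : (((n*m : ℕ)):ℝ)/m = (n:ℝ) := by
        push_cast; field_simp
      rw [hcast] at hcl
      rw [hWdef]
      exact le_trans hcl (sup_le le_rfl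
        (le_trans (sub_nonpos.mpr han) (hsmul c 1 hcpos.le h1)))
    have hWW : W * W ≤ (c^2) • 1 := by
      have s1 : W * W ≤ W * (c • 1) := mulPosLeft hmul hWc hW0
      have s2 : W * (c • 1) = c • W := by rw [mul_smul_comm, mul_one]
      have s3 : c • W ≤ c • (c • 1) := smul_mono hsmul hcpos.le hWc
      have s4 : c • (c • 1 : M) = (c^2) • 1 := by rw [smul_smul, ← pow_two]
      calc W * W ≤ W * (c • 1) := s1
        _ = c • W := s2
        _ ≤ c • (c • 1) := s3
        _ = (c^2) • 1 := s4
    have hfin : a*a - psup f (n*m) ≤ (c^2) • 1 := hkey ▸ hWW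
    have := sub_le_iff_le_add.mp hfin
    rw [add_comm] at this
    exact this
end Stmt7AuxD

namespace Stmt7AuxE
open Stmt7Aux Stmt7AuxB Stmt7AuxC Stmt7AuxD

variable {M : Type*} [Ring M] [Lattice M] [Algebra ℝ M]
  [CovariantClass M M (· + ·) (· ≤ ·)]
variable {N : Type*} [Ring N] [Lattice N] [Algebra ℝ N]
  [CovariantClass N N (· + ·) (· ≤ ·)]

theorem abs_eq_zero' {z : M} (h : |z| ≤ 0) : z = 0 := by
  have h1 : z ≤ 0 := le_trans (le_abs_self z) h
  have h2 : -z ≤ 0 := le_trans (neg_le_abs z) h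
  exact le_antisymm h1 (by simpa using h2)

theorem map_sq
    (hsmulM : ∀ (r : ℝ) (x : M), 0 ≤ r → 0 ≤ x → 0 ≤ r • x)
    (hmulM : ∀ x y : M, 0 ≤ x → 0 ≤ y → 0 ≤ x * y)
    (hfM : ∀ x y z : M, 0 ≤ z → x ⊓ y = 0 → (x * z) ⊓ y = 0 ∧ (z * x) ⊓ y = 0)
    (hsmulN : ∀ (r : ℝ) (x : N), 0 ≤ r → 0 ≤ x → 0 ≤ r • x)
    (hmulN : ∀ x y : N, 0 ≤ x → 0 ≤ y → 0 ≤ x * y)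
    (hfN : ∀ x y z : N, 0 ≤ z → x ⊓ y = 0 → (x * z) ⊓ y = 0 ∧ (z * x) ⊓ y = 0)
    (harchN : ∀ x y : N, (∀ n : ℕ, n • x ≤ y) → x ≤ 0)
    (S : M →ₗ[ℝ] N) (hSpos : ∀ a : M, 0 ≤ a → 0 ≤ S a) (hS1 : S 1 = 1)
    (hSlat : ∀ a : M, S |a| = |S a|)
    {n : ℕ} {a : M} (ha0 : 0 ≤ a) (han : a ≤ (n:ℝ) • 1) :
    S (a * a) = S a * S a := by
  have hSmono : ∀ {x y : M}, x ≤ y → S x ≤ S y := by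
    intro x y h
    have := hSpos (y - x) (sub_nonneg.mpr h)
    rw [map_sub] at this
    exact sub_nonneg.mp this
  have h1N : (0:N) ≤ 1 := one_nonneg' hmulN hfN
  have hSa0 : 0 ≤ S a := hSpos a ha0
  have hSan : S a ≤ (n:ℝ) • 1 := by
    have := hSmono han
    rwa [map_smul, hS1] at this
  set z : N := S (a * a) - S a * S a with hz
  suffices hzabs : ∀ k : ℕ, k • |z| ≤ 1 by
    have h0 := harchN _ 1 hzabs
    have := abs_eq_zero' h0
    rw [hz] at this
    exact sub_eq_zero.mp this
  intro k
  rcases Nat.eq_zero_or_pos k with hk | hk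
  · subst hk; simpa using h1N
  · -- use grid with m := k
    have hgM := grid hsmulM hmulM hfM hk ha0 han
    have hgN := grid hsmulN hmulN hfN hk hSa0 hSan
    set c : ℝ := 1/(2*(k:ℝ)) with hc
    set fM : ℕ → M := fun j => (2*((j:ℝ)/(k:ℝ))) • a - (((j:ℝ)/(k:ℝ))^2) • 1 with hfM'
    set fN : ℕ → N := fun j => (2*((j:ℝ)/(k:ℝ))) • (S a) - (((j:ℝ)/(k:ℝ))^2) • 1 with hfN'
    have hmap : S (psup fM (n*k)) = psup fN (n*k) := by
      rw [map_psup S hSlat]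
      congr 1
      funext j
      rw [hfM', hfN', map_sub, map_smul, map_smul, hS1]
    obtain ⟨hgM1, hgM2⟩ := hgM
    obtain ⟨hgN1, hgN2⟩ := hgN
    -- S bounds
    have hu1 : psup fN (n*k) ≤ S (a * a) := hmap ▸ hSmono hgM1
    have hu2 : S (a * a) ≤ psup fN (n*k) + (c^2) • 1 := by
      have := hSmono hgM2
      rwa [map_add, map_smul, hS1, hmap, hc] at this
    have hv1 : psup fN (n*k) ≤ S a * S a := hgN1
    have hv2 : S a * S a ≤ psup fN (n*k) + (c^2) • 1 := hgN2
    have hub : z ≤ (c^2) • 1 := by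
      rw [hz]
      have := sub_le_sub hu2 hv1
      simpa [add_sub_cancel_left] using this
    have hlb : -z ≤ (c^2) • 1 := by
      rw [hz, neg_sub]
      have := sub_le_sub hv2 hu1
      simpa [add_sub_cancel_left] using this
    have habs : |z| ≤ (c^2) • 1 := abs_le'.mpr ⟨hub, hlb⟩
    have hk' : (0:ℝ) < k := by exact_mod_cast hk
    calc k • |z| = (k:ℝ) • |z| := (Nat.cast_smul_eq_nsmul ℝ k |z|).symm
      _ ≤ (k:ℝ) • ((c^2) • 1) := smul_mono hsmulN (by positivity) habs
      _ = ((k:ℝ)*c^2) • 1 := by rw [smul_smul]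
      _ ≤ 1 := by
          have hk1 : (1:ℝ) ≤ k := by exact_mod_cast hk
          have heq : (k:ℝ)*c^2 = 1/(4*(k:ℝ)) := by
            rw [hc]; field_simp; ring
          have hle : (k:ℝ)*c^2 ≤ 1 := by
            rw [heq, div_le_one (by linarith)]; linarith
          have hnn := hsmulN (1 - (k:ℝ)*c^2) 1 (by linarith) h1N
          rw [sub_smul, one_smul] at hnn
          exact sub_nonneg.mp hnn
end Stmt7AuxE

namespace Stmt7AuxF
open Stmt7Aux Stmt7AuxB Stmt7AuxC Stmt7AuxD Stmt7AuxE

variable {M : Type*} [Ring M] [Lattice M] [Algebra ℝ M]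
  [CovariantClass M M (· + ·) (· ≤ ·)]

theorem trunc_key
    (hsmul : ∀ (r : ℝ) (x : M), 0 ≤ r → 0 ≤ x → 0 ≤ r • x)
    (hmul : ∀ x y : M, 0 ≤ x → 0 ≤ y → 0 ≤ x * y)
    (hf : ∀ x y z : M, 0 ≤ z → x ⊓ y = 0 → (x * z) ⊓ y = 0 ∧ (z * x) ⊓ y = 0)
    (harch : ∀ x y : M, (∀ n : ℕ, n • x ≤ y) → x ≤ 0)
    {u v : M} (hu : 0 ≤ u) (_hv : 0 ≤ v)
    (h : ∀ n : ℕ, u ⊓ ((n:ℝ) • 1) = v ⊓ ((n:ℝ) • 1)) : (u - v)⁺ = 0 := by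
  have h1 : (0:M) ≤ 1 := one_nonneg' hmul hf
  set cc : M := (u - v)⁺ with hcc
  have hccn : 0 ≤ cc := posPart_nonneg _
  -- cc ≤ (u - n•1)⁺ for every n
  have hcp : ∀ n : ℕ, cc ≤ (u - (n:ℝ) • 1)⁺ := by
    intro n
    have edec : ∀ w : M, w = w ⊓ ((n:ℝ) • 1) + (w - (n:ℝ) • 1)⁺ := by
      intro w
      have h0 := inf_add_sup w ((n:ℝ) • 1)
      have hpp : (w - (n:ℝ) • 1)⁺ = w ⊔ ((n:ℝ) • 1) - (n:ℝ) • 1 := by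
        rw [posPart_def, sup_sub, sub_self]
      rw [hpp]
      calc w = (w + (n:ℝ) • 1) - (n:ℝ) • 1 := by abel
        _ = (w ⊓ ((n:ℝ) • 1) + w ⊔ ((n:ℝ) • 1)) - (n:ℝ) • 1 := by rw [h0]
        _ = w ⊓ ((n:ℝ) • 1) + (w ⊔ ((n:ℝ) • 1) - (n:ℝ) • 1) := by abel
    have e1 := edec u
    have e2 := edec v
    have hd : u - v = (u - (n:ℝ) • 1)⁺ - (v - (n:ℝ) • 1)⁺ := by
      conv_lhs => rw [e1, e2]
      rw [h n]
      abel
    rw [hcc, posPart_def]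
    apply sup_le _ (posPart_nonneg _)
    rw [hd]
    exact sub_le_self _ (posPart_nonneg _)
  -- n • (cc ⊓ 1) ≤ u for every n
  have harch_in : ∀ n : ℕ, n • (cc ⊓ 1) ≤ u := by
    intro n
    rcases Nat.eq_zero_or_pos n with hn | hn
    · subst hn; simpa using hu
    · have hn1 : (1:ℝ) ≤ (n:ℝ) := by exact_mod_cast hn
      have hnpos : (0:ℝ) < (n:ℝ) := by linarith
      set p : M := (u - (n:ℝ) • 1)⁺ with hp
      set r : M := (u - (n:ℝ) • 1)⁻ with hr
      set q : M := ((n:ℝ) • p) ⊓ ((n:ℝ) • 1) with hq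
      have hq0 : 0 ≤ q := le_inf (hsmul _ _ hnpos.le (posPart_nonneg _))
        (hsmul _ _ hnpos.le h1)
      have hqr : q ⊓ r = 0 := by
        apply le_antisymm
        · have hrnr : r ≤ (n:ℝ) • r := by
            have := hsmul ((n:ℝ) - 1) r (by linarith) (negPart_nonneg _)
            rw [sub_smul, one_smul] at this
            exact sub_nonneg.mp this
          calc q ⊓ r ≤ ((n:ℝ) • p) ⊓ r := inf_le_inf_right r inf_le_left
            _ ≤ ((n:ℝ) • p) ⊓ ((n:ℝ) • r) := inf_le_inf_left _ hrnr
            _ = (n:ℝ) • (p ⊓ r) := (smul_inf_pos hsmul hnpos p r).symm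
            _ = 0 := by rw [hp, hr, posPart_inf_negPart_eq_zero, smul_zero]
        · exact le_inf hq0 (negPart_nonneg _)
      have hqru : q ≤ r + u := by
        have h1' : q ≤ (n:ℝ) • 1 := inf_le_right
        have h2' : (n:ℝ) • 1 - u ≤ r := by
          rw [hr]
          have := neg_le_negPart (u - (n:ℝ) • 1)
          rwa [neg_sub] at this
        calc q ≤ (n:ℝ) • 1 := h1'
          _ = ((n:ℝ) • 1 - u) + u := by abel
          _ ≤ r + u := add_le_add_left h2' u
      have hqu : q ≤ u := by
        have : q = q ⊓ (r + u) := (inf_eq_left.mpr hqru).symm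
        rw [this]
        calc q ⊓ (r + u) ≤ q ⊓ r + q ⊓ u := inf_add_le' hq0 (negPart_nonneg _) hu
          _ = q ⊓ u := by rw [hqr, zero_add]
          _ ≤ u := inf_le_right
      have hmono : (n:ℝ) • (cc ⊓ 1) ≤ q := by
        have hcp1 : cc ⊓ 1 ≤ p ⊓ 1 := inf_le_inf_right 1 (by rw [hp]; exact hcp n)
        calc (n:ℝ) • (cc ⊓ 1) ≤ (n:ℝ) • (p ⊓ 1) := smul_mono hsmul hnpos.le hcp1
          _ = ((n:ℝ) • p) ⊓ ((n:ℝ) • 1) := smul_inf_pos hsmul hnpos p 1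
          _ = q := by rw [hq]
      calc n • (cc ⊓ 1) = (n:ℝ) • (cc ⊓ 1) := (Nat.cast_smul_eq_nsmul ℝ n _).symm
        _ ≤ q := hmono
        _ ≤ u := hqu
  have hcle : cc ⊓ 1 ≤ 0 := harch _ u harch_in
  have hceq : cc ⊓ 1 = 0 := le_antisymm hcle (le_inf hccn h1)
  exact eq_zero_of_inf_one hf hceq

theorem trunc
    (hsmul : ∀ (r : ℝ) (x : M), 0 ≤ r → 0 ≤ x → 0 ≤ r • x)
    (hmul : ∀ x y : M, 0 ≤ x → 0 ≤ y → 0 ≤ x * y)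
    (hf : ∀ x y z : M, 0 ≤ z → x ⊓ y = 0 → (x * z) ⊓ y = 0 ∧ (z * x) ⊓ y = 0)
    (harch : ∀ x y : M, (∀ n : ℕ, n • x ≤ y) → x ≤ 0)
    {u v : M} (hu : 0 ≤ u) (hv : 0 ≤ v)
    (h : ∀ n : ℕ, u ⊓ ((n:ℝ) • 1) = v ⊓ ((n:ℝ) • 1)) : u = v := by
  have h1 := trunc_key hsmul hmul hf harch hu hv h
  have h2 := trunc_key hsmul hmul hf harch hv hu (fun n => (h n).symm)
  have e : u - v = (u - v)⁺ - (v - u)⁺ := by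
    have : (v - u)⁺ = (u - v)⁻ := by
      rw [posPart_def, negPart_def, neg_sub]
    rw [this, posPart_sub_negPart]
  have : u - v = 0 := by rw [e, h1, h2, sub_zero]
  exact sub_eq_zero.mp this

end Stmt7AuxF


/-- If a Markov operator `T` between unital Archimedean `f`-algebras with point
separating order duals is a lattice homomorphism, then `T` is an extreme point
of the set of Markov operators. -/
theorem stmt_7
    {A B : Type*}
    [Ring A] [Lattice A] [Algebra ℝ A] [CovariantClass A A (· + ·) (· ≤ ·)]
    -- A is a Riesz space (vector lattice) over ℝ
    (hsmulA : ∀ (r : ℝ) (x : A), 0 ≤ r → 0 ≤ x → 0 ≤ r • x)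
    -- A is a lattice-ordered algebra
    (hmulA : ∀ x y : A, 0 ≤ x → 0 ≤ y → 0 ≤ x * y)
    -- the f-algebra condition
    (hfA : ∀ x y z : A, 0 ≤ z → x ⊓ y = 0 → (x * z) ⊓ y = 0 ∧ (z * x) ⊓ y = 0)
    -- A is Archimedean
    (harchA : ∀ x y : A, (∀ n : ℕ, n • x ≤ y) → x ≤ 0)
    -- the order dual of A separates the points of A
    (hsepA : ∀ x : A, x ≠ 0 → ∃ f : A →ₗ[ℝ] ℝ, Monotone f ∧ f x ≠ 0)
    [Ring B] [Lattice B] [Algebra ℝ B] [CovariantClass B B (· + ·) (· ≤ ·)]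
    -- B is a Riesz space (vector lattice) over ℝ
    (hsmulB : ∀ (r : ℝ) (x : B), 0 ≤ r → 0 ≤ x → 0 ≤ r • x)
    -- B is a lattice-ordered algebra
    (hmulB : ∀ x y : B, 0 ≤ x → 0 ≤ y → 0 ≤ x * y)
    -- the f-algebra condition
    (hfB : ∀ x y z : B, 0 ≤ z → x ⊓ y = 0 → (x * z) ⊓ y = 0 ∧ (z * x) ⊓ y = 0)
    -- B is Archimedean
    (harchB : ∀ x y : B, (∀ n : ℕ, n • x ≤ y) → x ≤ 0)
    -- the order dual of B separates the points of B
    (hsepB : ∀ x : B, x ≠ 0 → ∃ f : B →ₗ[ℝ] ℝ, Monotone f ∧ f x ≠ 0)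
    (T : A →ₗ[ℝ] B)
    -- T is a Markov operator
    (hTpos : ∀ a : A, 0 ≤ a → 0 ≤ T a) (hT1 : T 1 = 1)
    -- T is a lattice homomorphism
    (hlat : ∀ a : A, T |a| = |T a|) :
    T ∈ Set.extremePoints ℝ {S : A →ₗ[ℝ] B | (∀ a : A, 0 ≤ a → 0 ≤ S a) ∧ S 1 = 1} := by
  classical
  rw [mem_extremePoints]
  refine ⟨⟨hTpos, hT1⟩, ?_⟩
  rintro S₁ ⟨hS₁pos, hS₁1⟩ S₂ ⟨hS₂pos, hS₂1⟩ hseg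
  obtain ⟨t, s, ht, hs, hts, hsum⟩ := hseg
  have hEval : ∀ a : A, t • S₁ a + s • S₂ a = T a := by
    intro a
    rw [← hsum]
    simp [LinearMap.add_apply, LinearMap.smul_apply]
  have h1B : (0:B) ≤ 1 := Stmt7AuxB.one_nonneg' hmulB hfB
  have h1A : (0:A) ≤ 1 := Stmt7AuxB.one_nonneg' hmulA hfA
  -- abs domination for positive operators
  have habsle : ∀ (S : A →ₗ[ℝ] B), (∀ a : A, 0 ≤ a → 0 ≤ S a) → ∀ a : A, |S a| ≤ S |a| := by
    intro S hSpos a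
    have hmono : ∀ {x y : A}, x ≤ y → S x ≤ S y := by
      intro x y h
      have := hSpos _ (sub_nonneg.mpr h)
      rw [map_sub] at this
      exact sub_nonneg.mp this
    have h1 : S a ≤ S |a| := hmono (le_abs_self a)
    have h2 : -(S a) ≤ S |a| := by rw [← map_neg]; exact hmono (neg_le_abs a)
    exact abs_le'.mpr ⟨h1, h2⟩
  -- S₁ and S₂ are lattice homomorphisms
  have hlat12 : ∀ a : A, S₁ |a| = |S₁ a| ∧ S₂ |a| = |S₂ a| := by
    intro a
    have hg1 : (0:B) ≤ S₁ |a| - |S₁ a| := sub_nonneg.mpr (habsle S₁ hS₁pos a)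
    have hg2 : (0:B) ≤ S₂ |a| - |S₂ a| := sub_nonneg.mpr (habsle S₂ hS₂pos a)
    have hE1 : t • S₁ |a| + s • S₂ |a| = |T a| := by rw [hEval |a|, hlat a]
    have hE2 : |T a| ≤ t • |S₁ a| + s • |S₂ a| := by
      rw [← hEval a]
      refine le_trans (abs_add_le _ _) ?_
      rw [Stmt7Aux.abs_smul_pos hsmulB ht, Stmt7Aux.abs_smul_pos hsmulB hs]
    have hsumle : t • (S₁ |a| - |S₁ a|) + s • (S₂ |a| - |S₂ a|) ≤ 0 := by
      have he : t • (S₁ |a| - |S₁ a|) + s • (S₂ |a| - |S₂ a|)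
          = (t • S₁ |a| + s • S₂ |a|) - (t • |S₁ a| + s • |S₂ a|) := by
        rw [smul_sub, smul_sub]; abel
      rw [he, hE1]
      exact sub_nonpos.mpr hE2
    have ht1 : t • (S₁ |a| - |S₁ a|) ≤ 0 := by
      have := add_le_add_right (hsmulB s _ hs.le hg2) (t • (S₁ |a| - |S₁ a|))
      rw [add_zero] at this
      exact le_trans this hsumle
    have ht2 : s • (S₂ |a| - |S₂ a|) ≤ 0 := by
      have := add_le_add_left (hsmulB t _ ht.le hg1) (s • (S₂ |a| - |S₂ a|))
      rw [zero_add] at this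
      exact le_trans this hsumle
    constructor
    · have hz : t • (S₁ |a| - |S₁ a|) = 0 :=
        le_antisymm ht1 (hsmulB t _ ht.le hg1)
      have := Stmt7Aux.smul_cancel0 ht.ne' hz
      exact sub_eq_zero.mp this
    · have hz : s • (S₂ |a| - |S₂ a|) = 0 :=
        le_antisymm ht2 (hsmulB s _ hs.le hg2)
      have := Stmt7Aux.smul_cancel0 hs.ne' hz
      exact sub_eq_zero.mp this
  have hS₁lat : ∀ a : A, S₁ |a| = |S₁ a| := fun a => (hlat12 a).1
  have hS₂lat : ∀ a : A, S₂ |a| = |S₂ a| := fun a => (hlat12 a).2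
  -- equality on unit-bounded elements
  have hbdd : ∀ (n : ℕ) (a : A), 0 ≤ a → a ≤ (n:ℝ) • 1 → S₁ a = S₂ a := by
    intro n a ha0 han
    have hTsq := Stmt7AuxE.map_sq hsmulA hmulA hfA hsmulB hmulB hfB harchB
      T hTpos hT1 hlat ha0 han
    have h1sq := Stmt7AuxE.map_sq hsmulA hmulA hfA hsmulB hmulB hfB harchB
      S₁ hS₁pos hS₁1 hS₁lat ha0 han
    have h2sq := Stmt7AuxE.map_sq hsmulA hmulA hfA hsmulB hmulB hfB harchB
      S₂ hS₂pos hS₂1 hS₂lat ha0 han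
    set u : B := S₁ a with hu
    set v : B := S₂ a with hv
    have hTa : T a = t • u + s • v := (hEval a).symm
    have hTaa : t • (u*u) + s • (v*v) = (t • u + s • v) * (t • u + s • v) := by
      rw [← h1sq, ← h2sq, ← hTa, ← hTsq, hEval (a*a)]
    have hexp : (t*s) • ((u - v)*(u - v))
        = (t • (u*u) + s • (v*v)) - (t • u + s • v) * (t • u + s • v) := by
      have e1 : (t • u + s • v) * (t • u + s • v)
          = (t*t) • (u*u) + (t*s) • (u*v) + (s*t) • (v*u) + (s*s) • (v*v) := by
        rw [add_mul, mul_add, mul_add, smul_mul_assoc, smul_mul_assoc,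
          smul_mul_assoc, smul_mul_assoc, mul_smul_comm, mul_smul_comm,
          mul_smul_comm, mul_smul_comm, smul_smul, smul_smul, smul_smul, smul_smul]
        abel
      have e2 : (u - v)*(u - v) = u*u - u*v - v*u + v*v := by
        rw [sub_mul, mul_sub, mul_sub]; abel
      rw [e1, e2]
      have hs' : s = 1 - t := by linarith
      rw [hs']
      module
    have hz : (t*s) • ((u - v)*(u - v)) = 0 := by
      rw [hexp, hTaa, sub_self]
    have hD : (u - v)*(u - v) = 0 :=
      Stmt7Aux.smul_cancel0 (mul_pos ht hs).ne' hz
    have hDabs : |u - v| * |u - v| = 0 := by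
      rw [Stmt7AuxB.abs_mul_self' hfB, hD]
    have harch_in : ∀ k : ℕ, k • |u - v| ≤ 1 := by
      intro k
      rcases Nat.eq_zero_or_pos k with hk | hk
      · subst hk; simpa using h1B
      · have hk' : (0:ℝ) < k := by exact_mod_cast hk
        set r : ℝ := 1/(k:ℝ) with hr
        have h0 := Stmt7AuxB.sq_nonneg' hmulB hfB (|u - v| - r • 1)
        rw [Stmt7AuxD.sq_sub_smul, hDabs, zero_sub, neg_nonneg, sub_nonpos] at h0
        -- h0 : (2*r) • |u - v| ≤ r^2 • 1
        have step := Stmt7Aux.smul_mono hsmulB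
          (by positivity : (0:ℝ) ≤ (k:ℝ)^2/2) h0
        rw [smul_smul, smul_smul] at step
        have ec1 : (k:ℝ)^2/2 * (2*r) = (k:ℝ) := by
          rw [hr]; field_simp
        have ec2 : (k:ℝ)^2/2 * r^2 = 1/2 := by
          rw [hr]; field_simp
        rw [ec1, ec2] at step
        calc k • |u - v| = (k:ℝ) • |u - v| := (Nat.cast_smul_eq_nsmul ℝ k _).symm
          _ ≤ (1/2 : ℝ) • 1 := step
          _ ≤ 1 := by
              have := hsmulB (1/2 : ℝ) 1 (by norm_num) h1B
              have h2' : (1:B) - (1/2 : ℝ) • 1 = (1/2 : ℝ) • 1 := by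
                nth_rewrite 1 [show (1:B) = (1:ℝ) • 1 by rw [one_smul]]
                rw [← sub_smul]
                norm_num
              exact sub_nonneg.mp (by rw [h2']; exact this)
    have habs0 : |u - v| ≤ 0 := harchB _ 1 harch_in
    have := Stmt7AuxE.abs_eq_zero' habs0
    exact sub_eq_zero.mp this
  -- equality on nonnegative elements
  have hpos_eq : ∀ a : A, 0 ≤ a → S₁ a = S₂ a := by
    intro a ha
    apply Stmt7AuxF.trunc hsmulB hmulB hfB harchB (hS₁pos a ha) (hS₂pos a ha)
    intro n
    have hn1 : (0:A) ≤ (n:ℝ) • 1 := hsmulA _ _ (Nat.cast_nonneg n) h1A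
    have hb0 : 0 ≤ a ⊓ ((n:ℝ) • 1) := le_inf ha hn1
    have hbn : a ⊓ ((n:ℝ) • 1) ≤ (n:ℝ) • 1 := inf_le_right
    have heq := hbdd n _ hb0 hbn
    have hmi1 : S₁ (a ⊓ ((n:ℝ) • 1)) = S₁ a ⊓ ((n:ℝ) • 1) := by
      rw [Stmt7AuxC.map_inf S₁ hS₁lat, map_smul, hS₁1]
    have hmi2 : S₂ (a ⊓ ((n:ℝ) • 1)) = S₂ a ⊓ ((n:ℝ) • 1) := by
      rw [Stmt7AuxC.map_inf S₂ hS₂lat, map_smul, hS₂1]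
    rw [← hmi1, ← hmi2, heq]
  -- full equality
  have hall : S₁ = S₂ := by
    apply LinearMap.ext; intro a
    have e1 := hpos_eq a⁺ (posPart_nonneg a)
    have e2 := hpos_eq a⁻ (negPart_nonneg a)
    calc S₁ a = S₁ a⁺ - S₁ a⁻ := by rw [← map_sub, posPart_sub_negPart]
      _ = S₂ a⁺ - S₂ a⁻ := by rw [e1, e2]
      _ = S₂ a := by rw [← map_sub, posPart_sub_negPart]
  have hTS : S₁ = T := by
    rw [← hsum, ← hall, ← add_smul, hts, one_smul]
  exact ⟨hTS, hall ▸ hTS⟩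
end
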